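/- arXiv:1212.5138 — 4 statements merged into one kernel-verified Lean document; each statement's English description precedes it below -/
import Mathlib

section
/- Let Γ ⊆ ℂ be an additive subgroup, let h : Γ → ℂ∖{0} be a group homomorphism into the multiplicative group that is not identically 1, and let P ⊆ ℂ be a closed discrete subset with P + γ = P for all γ ∈ Γ. Let g : ℂ → ℂ be holomorphic on ℂ∖P and meromorphic at every point of P, and assume g(z + γ) = g(z)·h(γ) for all z ∈ ℂ∖P and γ ∈ Γ. Assume all residues of g vanish, i.e., for every q ∈ P there is ε > 0 such that for all 0 < ρ < ε the circle integral of g over the circle of radius ρ centered at q is 0. Then there exists a function f : ℂ∖P → ℂ that is holomorphic on ℂ∖P, meromorphic at every point of P, and satisfies f′(z) = g(z) for all z ∈ ℂ∖P and f(z + γ) = f(z)·h(γ) for all z ∈ ℂ∖P and γ ∈ Γ; moreover f is the unique function on ℂ∖P with these properties. -/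
open Complex Filter Set Topology Metric

/-- A function with zero derivative on an open preconnected set is constant there. -/
theorem apm_const_of_deriv_zero {U : Set ℂ} (hUo : IsOpen U) (hU : IsPreconnected U)
    {F : ℂ → ℂ} (hF : ∀ z ∈ U, HasDerivAt F 0 z) {a b : ℂ} (ha : a ∈ U) (hb : b ∈ U) :
    F a = F b := by
  have locconst : ∀ z ∈ U, ∃ ε > 0, ball z ε ⊆ U ∧ ∀ w ∈ ball z ε, F w = F z := by
    intro z hz
    obtain ⟨ε, hε, hball⟩ := Metric.isOpen_iff.1 hUo z hz
    refine ⟨ε, hε, hball, fun w hw => ?_⟩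
    have hdiff : DifferentiableOn ℂ F (ball z ε) := fun x hx =>
      ((hF x (hball hx)).differentiableAt.differentiableWithinAt)
    refine (convex_ball z ε).is_const_of_fderivWithin_eq_zero hdiff (fun x hx => ?_) hw
      (mem_ball_self hε)
    rw [fderivWithin_of_isOpen isOpen_ball hx]
    have h0 : HasFDerivAt F ((1 : ℂ →L[ℂ] ℂ).smulRight (0 : ℂ)) x :=
      hasDerivAt_iff_hasFDerivAt.1 (hF x (hball hx))
    have : ((1 : ℂ →L[ℂ] ℂ).smulRight (0 : ℂ)) = 0 := by ext; simp
    rw [this] at h0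
    exact h0.fderiv
  by_contra hne
  set T : Set ℂ := {z | z ∈ U ∧ F z = F a} with hT
  set T' : Set ℂ := {z | z ∈ U ∧ F z ≠ F a} with hT'
  have hTopen : IsOpen T := by
    refine Metric.isOpen_iff.2 fun z hz => ?_
    obtain ⟨ε, hε, hballU, hconst⟩ := locconst z hz.1
    exact ⟨ε, hε, fun w hw => ⟨hballU hw, (hconst w hw).trans hz.2⟩⟩
  have hT'open : IsOpen T' := by
    refine Metric.isOpen_iff.2 fun z hz => ?_
    obtain ⟨ε, hε, hballU, hconst⟩ := locconst z hz.1
    exact ⟨ε, hε, fun w hw => ⟨hballU hw, (hconst w hw).symm ▸ hz.2⟩⟩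
  have hsub : U ⊆ T ∪ T' := fun z hz => by
    by_cases h : F z = F a
    · exact Or.inl ⟨hz, h⟩
    · exact Or.inr ⟨hz, h⟩
  obtain ⟨x, hxU, hxT, hxT'⟩ := hU T T' hTopen hT'open hsub ⟨a, ha, ha, rfl⟩
    ⟨b, hb, hb, fun h => hne h.symm⟩
  exact hxT'.2 hxT.2

/-- The complement of a countable set inside an open convex set is path-connected. -/
theorem apm_convex_diff_countable {U : Set ℂ} (hU : Convex ℝ U) (hUo : IsOpen U)
    (hne : U.Nonempty) {s : Set ℂ} (hs : s.Countable) : IsPathConnected (U \ s) := by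
  have hrank : 1 < Module.rank ℝ ℂ := by rw [Complex.rank_real_complex]; norm_num
  have hdense : Dense sᶜ := hs.dense_compl ℝ
  obtain ⟨a, haU, has⟩ : (U ∩ sᶜ).Nonempty := hdense.inter_open_nonempty U hUo hne
  refine ⟨a, ⟨haU, has⟩, ?_⟩
  rintro b ⟨hbU, hbs⟩
  rcases eq_or_ne a b with rfl | hab
  · exact JoinedIn.refl ⟨haU, has⟩
  let c := (2 : ℝ)⁻¹ • (a + b)
  let x := (2 : ℝ)⁻¹ • (b - a)
  have Ia : c - x = a := by simp only [c, x]; module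
  have Ib : c + x = b := by simp only [c, x]; module
  have hcU : c ∈ U := by
    have : midpoint ℝ a b ∈ U := hU.segment_subset haU hbU (midpoint_mem_segment a b)
    simpa [c, midpoint_eq_smul_add] using this
  have x_ne_zero : x ≠ 0 := by simpa [x, sub_ne_zero] using fun h => hab h.symm
  obtain ⟨y, hy⟩ : ∃ y, LinearIndependent ℝ ![x, y] :=
    exists_linearIndependent_pair_of_one_lt_rank hrank x_ne_zero
  -- find δ such that c + t • y ∈ U for |t| < δ
  have hcont : Continuous fun t : ℝ => c + t • y := by continuity
  have hUopen : IsOpen ((fun t : ℝ => c + t • y) ⁻¹' U) := hUo.preimage hcont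
  have h0mem : (0 : ℝ) ∈ (fun t : ℝ => c + t • y) ⁻¹' U := by simp [hcU]
  obtain ⟨δ, hδ, hδsub⟩ := Metric.isOpen_iff.1 hUopen 0 h0mem
  have A : Set.Countable {t : ℝ | (segment ℝ (c + x) (c + t • y) ∩ s).Nonempty} := by
    apply countable_setOf_nonempty_of_disjoint _ (fun t => inter_subset_right) hs
    intro t t' htt'
    apply disjoint_iff_inter_eq_empty.2
    have N : {c + x} ∩ s = ∅ := by
      simpa only [singleton_inter_eq_empty, mem_compl_iff, Ib] using hbs
    rw [inter_assoc, inter_comm s, inter_assoc, inter_self, ← inter_assoc, ← subset_empty_iff, ← N]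
    apply inter_subset_inter_left
    exact (segment_inter_eq_endpoint_of_linearIndependent_of_ne hy htt'.symm c).subset
  have B : Set.Countable {t : ℝ | (segment ℝ (c - x) (c + t • y) ∩ s).Nonempty} := by
    apply countable_setOf_nonempty_of_disjoint _ (fun t => inter_subset_right) hs
    intro t t' htt'
    apply disjoint_iff_inter_eq_empty.2
    have N : {c - x} ∩ s = ∅ := by
      simpa only [singleton_inter_eq_empty, mem_compl_iff, Ia] using has
    rw [inter_assoc, inter_comm s, inter_assoc, inter_self, ← inter_assoc, ← subset_empty_iff, ← N]
    apply inter_subset_inter_left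
    rw [sub_eq_add_neg _ x]
    refine Eq.subset ?_
    apply segment_inter_eq_endpoint_of_linearIndependent_of_ne _ htt'.symm
    convert hy.units_smul ![-1, 1]
    simp [← List.ofFn_inj]
    rfl
    rfl
  obtain ⟨t, htδ, ht⟩ : ∃ t, t ∈ Metric.ball (0:ℝ) δ ∧ t ∈ ({t : ℝ | (segment ℝ (c + x) (c + t • y) ∩ s).Nonempty}
      ∪ {t : ℝ | (segment ℝ (c - x) (c + t • y) ∩ s).Nonempty})ᶜ := by
    obtain ⟨t, ht1, ht2⟩ := ((A.union B).dense_compl ℝ).inter_open_nonempty _ Metric.isOpen_ball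
      ⟨0, Metric.mem_ball_self hδ⟩
    exact ⟨t, ht1, ht2⟩
  simp only [compl_union, mem_inter_iff, mem_compl_iff, mem_setOf_eq] at ht
  have hzU : c + t • y ∈ U := hδsub htδ
  have segb : segment ℝ (c + x) (c + t • y) ⊆ U \ s := by
    intro w hw
    refine ⟨hU.segment_subset (Ib ▸ hbU) hzU hw, fun hws => ?_⟩
    exact ht.1 ⟨w, hw, hws⟩
  have sega : segment ℝ (c - x) (c + t • y) ⊆ U \ s := by
    intro w hw
    refine ⟨hU.segment_subset (Ia ▸ haU) hzU hw, fun hws => ?_⟩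
    exact ht.2 ⟨w, hw, hws⟩
  have JA : JoinedIn (U \ s) a (c + t • y) := by
    apply JoinedIn.of_segment_subset
    rw [← Ia]; exact sega
  have JB : JoinedIn (U \ s) b (c + t • y) := by
    apply JoinedIn.of_segment_subset
    rw [← Ib]; exact segb
  exact JA.trans JB.symm

/-- A holomorphic function on a ball has a primitive on any smaller concentric ball. -/
theorem apm_exists_primitive {f : ℂ → ℂ} {c : ℂ} {R₁ R₂ : ℝ} (h12 : R₁ < R₂)
    (hf : DifferentiableOn ℂ f (ball c R₂)) :
    ∃ F : ℂ → ℂ, ∀ z ∈ ball c R₁, HasDerivAt F (f z) z := by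
  rcases le_or_gt R₁ 0 with hR₁ | hR₁
  · exact ⟨0, fun z hz => absurd hz (by simp [ball_eq_empty.2 hR₁])⟩
  set ρ : ℝ := (R₁ + R₂) / 2 with hρ
  have hρpos : 0 < ρ := by simp [hρ]; linarith
  have hR₁ρ : R₁ < ρ := by simp [hρ]; linarith
  have hρR₂ : ρ < R₂ := by simp [hρ]; linarith
  set ρ' : NNReal := ⟨ρ, hρpos.le⟩ with hρ'
  have hcb : closedBall c (ρ' : ℝ) ⊆ ball c R₂ := by
    intro z hz
    exact lt_of_le_of_lt (mem_closedBall.1 hz) hρR₂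
  have hp : HasFPowerSeriesOnBall f (cauchyPowerSeries f c ρ') c ρ' :=
    (hf.mono hcb).hasFPowerSeriesOnBall (by exact_mod_cast hρpos)
  set p := cauchyPowerSeries f c (ρ' : ℝ) with hpdef
  set r' : NNReal := R₁.toNNReal with hr'
  have hr'R : (r' : ℝ) = R₁ := Real.coe_toNNReal _ hR₁.le
  have hr'ρ : (r' : ENNReal) < p.radius := by
    refine lt_of_lt_of_le ?_ hp.r_le
    rw [ENNReal.coe_lt_coe, ← NNReal.coe_lt_coe, hr'R]
    exact hR₁ρ
  have hu : Summable fun n => ‖p n‖ * (r' : ℝ) ^ n := p.summable_norm_mul_pow hr'ρ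
  set g : ℕ → ℂ → ℂ := fun n z => ((n : ℂ) + 1)⁻¹ * p.coeff n * (z - c) ^ (n + 1) with hg
  set g' : ℕ → ℂ → ℂ := fun n z => p.coeff n * (z - c) ^ n with hg'
  have hderiv : ∀ n z, HasDerivAt (g n) (g' n z) z := by
    intro n z
    have h1 : HasDerivAt (fun z => (z - c) ^ (n + 1))
        (((n : ℂ) + 1) * (z - c) ^ n * 1) z := by
      have := ((hasDerivAt_id z).sub_const c).fun_pow (n + 1)
      simpa using this
    have h2 := h1.const_mul (((n : ℂ) + 1)⁻¹ * p.coeff n)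
    convert h2 using 1
    · rfl
    · rfl
    have hne : ((n : ℂ) + 1) ≠ 0 := Nat.cast_add_one_ne_zero n
    field_simp [hg']
    ring
  have hcoeff : ∀ n, ‖p.coeff n‖ ≤ ‖p n‖ := by
    intro n
    have h1 : p n (fun _ => (1 : ℂ)) = p.coeff n := by
      rw [FormalMultilinearSeries.apply_eq_pow_smul_coeff]; simp
    calc ‖p.coeff n‖ = ‖p n (fun _ => (1 : ℂ))‖ := by rw [h1]
      _ ≤ ‖p n‖ * ∏ _i : Fin n, ‖(1 : ℂ)‖ := (p n).le_opNorm _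
      _ = ‖p n‖ := by simp
  have hbound : ∀ n z, z ∈ ball c R₁ → ‖g' n z‖ ≤ ‖p n‖ * (r' : ℝ) ^ n := by
    intro n z hz
    have hzc : ‖z - c‖ < R₁ := mem_ball_iff_norm.1 hz
    rw [hg']
    simp only [norm_mul, norm_pow]
    rw [hr'R]
    exact mul_le_mul (hcoeff n) (pow_le_pow_left₀ (norm_nonneg _) hzc.le n)
      (by positivity) (norm_nonneg _)
  have hsum0 : Summable fun n => g n c := by
    apply summable_of_ne_finset_zero (s := ∅)
    intro n _
    simp [hg]
  refine ⟨fun w => ∑' n, g n w, fun z hz => ?_⟩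
  have hDeriv := hasDerivAt_tsum_of_isPreconnected hu isOpen_ball
    (convex_ball c R₁).isPreconnected (fun n y _ => hderiv n y) hbound (mem_ball_self hR₁) hsum0 hz
  have hfz : (∑' n, g' n z) = f z := by
    have hmem : z - c ∈ Metric.eball (0 : ℂ) ρ' := by
      rw [Metric.mem_eball, edist_eq_enorm_sub, sub_zero, enorm_eq_nnnorm, ENNReal.coe_lt_coe,
        ← NNReal.coe_lt_coe]
      have : ‖z - c‖ < R₁ := mem_ball_iff_norm.1 hz
      exact lt_trans this (by exact hR₁ρ)
    have hs := hp.hasSum hmem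
    have heq : (fun n => p n fun _ => z - c) = fun n => g' n z := by
      funext n
      rw [FormalMultilinearSeries.apply_eq_pow_smul_coeff, hg']
      simp [mul_comm, smul_eq_mul]
    rw [heq] at hs
    have := hs.tsum_eq
    rw [this, add_sub_cancel]
  rw [← hfz]
  exact hDeriv

theorem apm_circleIntegral_add {f g : ℂ → ℂ} {c : ℂ} {R : ℝ} (hf : CircleIntegrable f c R)
    (hg : CircleIntegrable g c R) :
    (∮ z in C(c, R), (f z + g z)) = (∮ z in C(c, R), f z) + ∮ z in C(c, R), g z := by
  simp only [circleIntegral]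
  rw [← intervalIntegral.integral_add hf.out hg.out]
  refine intervalIntegral.integral_congr fun θ _ => ?_
  simp only [smul_eq_mul]
  ring

theorem apm_local_decomp {P : Set ℂ} (hPclosed : IsClosed P) (hPdisc : DiscreteTopology P)
    {g : ℂ → ℂ} (hg : DifferentiableOn ℂ g Pᶜ) {q : ℂ} (hq : q ∈ P)
    (hgmer : MeromorphicAt g q)
    (hres : ∃ ε > 0, ∀ ρ : ℝ, 0 < ρ → ρ < ε → (∮ z in C(q, ρ), g z) = 0) :
    ∃ (s sP e : ℂ → ℂ) (r : ℝ), 0 < r ∧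
      (∀ z ∈ ball q r, z ≠ q → z ∉ P) ∧
      (∀ z, z ≠ q → HasDerivAt sP (s z) z) ∧
      (∀ z, z ≠ q → DifferentiableAt ℂ s z) ∧
      MeromorphicAt sP q ∧
      DifferentiableOn ℂ e (ball q r) ∧
      (∀ z ∈ ball q r, z ≠ q → g z = s z + e z) := by
  -- isolation radius
  have hPmem : Pᶜ ∈ 𝓝[≠] q := by
    have h1 := discreteTopology_subtype_iff.mp hPdisc q hq
    rwa [Filter.inf_principal_eq_bot] at h1
  obtain ⟨ι, hι, hιiso⟩ := Metric.mem_nhdsWithin_iff.1 hPmem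
  have hiso : ∀ z ∈ ball q ι, z ≠ q → z ∉ P := by
    intro z hz hzq
    exact hιiso ⟨hz, hzq⟩
  -- meromorphic structure
  obtain ⟨n, hA⟩ := hgmer
  simp only [smul_eq_mul] at hA
  set A : ℂ → ℂ := fun z => (z - q) ^ n * g z with hAdef
  set AJ : ℕ → ℂ → ℂ := fun j => (Function.swap dslope q)^[j] A with hAJdef
  set aj : ℕ → ℂ := fun j => AJ j q with hajdef
  have hAJ_an : ∀ j, AnalyticAt ℂ (AJ j) q := by
    obtain ⟨p, hp⟩ := hA
    exact fun j => ⟨_, hp.has_fpower_series_iterate_dslope_fslope j⟩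
  have hAJsucc : ∀ j z, AJ j z = aj j + (z - q) * AJ (j + 1) z := by
    intro j z
    have h1 : AJ (j + 1) = dslope (AJ j) q := by
      rw [hAJdef]; exact Function.iterate_succ_apply' _ _ _
    have h2 := sub_smul_dslope (AJ j) q z
    rw [smul_eq_mul] at h2
    rw [h1]
    have : (z - q) * dslope (AJ j) q z = AJ j z - aj j := h2
    linear_combination -this
  have hkey : ∀ j z, A z = (∑ k ∈ Finset.range j, aj k * (z - q) ^ k)
      + (z - q) ^ j * AJ j z := by
    intro j
    induction j with
    | zero => intro z; simp [hAJdef]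
    | succ j ih =>
      intro z
      rw [Finset.sum_range_succ, ih z, hAJsucc j z]
      ring
  have hgdiff' : ∀ z, z ∉ P → DifferentiableAt ℂ g z := fun z hz =>
    hg.differentiableAt (hPclosed.isOpen_compl.mem_nhds hz)
  have hAJdiff : ∀ j, ∀ z ∈ ball q ι, z ≠ q → DifferentiableAt ℂ (AJ j) z := by
    intro j
    induction j with
    | zero =>
      intro z hz hzq
      have : DifferentiableAt ℂ g z := hgdiff' z (hiso z hz hzq)
      exact ((differentiableAt_id.sub (differentiableAt_const q)).pow n).mul this
    | succ j ih =>
      intro z hz hzq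
      have h1 : AJ (j + 1) = dslope (AJ j) q := by
        rw [hAJdef]; exact Function.iterate_succ_apply' _ _ _
      rw [h1]
      rw [(dslope_eventuallyEq_slope_of_ne (AJ j) hzq).differentiableAt_iff]
      have : (slope (AJ j) q) =ᶠ[𝓝 z] fun w => (AJ j w - aj j) / (w - q) := by
        filter_upwards [eventually_ne_nhds hzq] with w hw
        rw [slope_def_field]
      rw [this.differentiableAt_iff]
      exact ((ih z hz hzq).sub (differentiableAt_const _)).div
        (differentiableAt_id.sub (differentiableAt_const q)) (sub_ne_zero.2 hzq)
  have hEdiff : DifferentiableOn ℂ (AJ n) (ball q ι) := by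
    intro z hz
    by_cases hzq : z = q
    · subst hzq; exact (hAJ_an n).differentiableAt.differentiableWithinAt
    · exact (hAJdiff n z hz hzq).differentiableWithinAt
  -- the global identity away from q
  have gid : ∀ z, z ≠ q → g z = (∑ k ∈ Finset.range n, aj k * (z - q) ^ ((k : ℤ) - n))
      + AJ n z := by
    intro z hzq
    have h1 : z - q ≠ 0 := sub_ne_zero.2 hzq
    have hpow : ((z - q) ^ n : ℂ) ≠ 0 := pow_ne_zero _ h1
    have hsum : (z - q) ^ n * (∑ k ∈ Finset.range n, aj k * (z - q) ^ ((k : ℤ) - n))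
        = ∑ k ∈ Finset.range n, aj k * (z - q) ^ k := by
      rw [Finset.mul_sum]
      refine Finset.sum_congr rfl fun k hk => ?_
      have : ((z - q) ^ n : ℂ) * (z - q) ^ ((k : ℤ) - n) = (z - q) ^ k := by
        rw [← zpow_natCast (z - q) n, ← zpow_add₀ h1, ← zpow_natCast (z - q) k]
        congr 1
        ring
      calc (z - q) ^ n * (aj k * (z - q) ^ ((k : ℤ) - n))
          = aj k * ((z - q) ^ n * (z - q) ^ ((k : ℤ) - n)) := by ring
        _ = aj k * (z - q) ^ k := by rw [this]
    apply mul_left_cancel₀ hpow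
    rw [mul_add, hsum]
    have h2 := hkey n z
    rw [hAdef] at h2
    linear_combination h2
  -- residues vanish
  obtain ⟨ε, hε, hres'⟩ := hres
  set ρ : ℝ := min ε ι / 2 with hρdef
  have hρ : 0 < ρ := by positivity
  have hρε : ρ < ε := by
    have : min ε ι ≤ ε := min_le_left _ _
    simp only [hρdef]; linarith
  have hρι : ρ < ι := by
    have : min ε ι ≤ ι := min_le_right _ _
    simp only [hρdef]; linarith
  set t : ℕ → ℂ → ℂ := fun k z => aj k * (z - q) ^ ((k : ℤ) - n) with htdef
  have htint : ∀ k, CircleIntegrable (t k) q ρ := by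
    intro k
    have h1 : CircleIntegrable (fun z => (z - q) ^ ((k : ℤ) - n)) q ρ := by
      refine circleIntegrable_sub_zpow_iff.2 (Or.inr (Or.inr ?_))
      intro hmem
      have := mem_sphere.1 hmem
      simp [abs_of_pos hρ] at this
      exact absurd this hρ.ne
    exact h1.const_mul (aj k)
  have hswap : ∀ F : Finset ℕ, CircleIntegrable (fun z => ∑ k ∈ F, t k z) q ρ ∧
      (∮ z in C(q, ρ), ∑ k ∈ F, t k z) = ∑ k ∈ F, ∮ z in C(q, ρ), t k z := by
    intro F
    induction F using Finset.induction_on with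
    | empty =>
      constructor
      · simpa using circleIntegrable_const (0 : ℂ) q ρ
      · simp [circleIntegral]
    | insert a F' h ih =>
      constructor
      · have := (htint a).add ih.1
        simpa [Finset.sum_insert h, Pi.add_def] using this
      · have h1 : (fun z => ∑ k ∈ insert a F', t k z)
            = fun z => t a z + ∑ k ∈ F', t k z := by
          funext z; rw [Finset.sum_insert h]
        rw [h1, apm_circleIntegral_add (htint a) ih.1, ih.2, Finset.sum_insert h]
  have hAJcont : ContinuousOn (AJ n) (closedBall q ρ) :=
    hEdiff.continuousOn.mono (closedBall_subset_ball hρι)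
  have hAJint : CircleIntegrable (AJ n) q ρ :=
    ContinuousOn.circleIntegrable hρ.le (hAJcont.mono sphere_subset_closedBall)
  have hAJzero : (∮ z in C(q, ρ), AJ n z) = 0 := by
    refine circleIntegral_eq_zero_of_differentiable_on_off_countable hρ.le
      Set.countable_empty hAJcont fun z hz => ?_
    have hzι : z ∈ ball q ι := ball_subset_ball hρι.le hz.1
    by_cases hzq : z = q
    · subst hzq; exact (hAJ_an n).differentiableAt
    · exact hAJdiff n z hzι hzq
  have hcirc : (0 : ℂ) = ∑ k ∈ Finset.range n, aj k * (∮ z in C(q, ρ), (z - q) ^ ((k : ℤ) - n)) := by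
    have h0 := hres' ρ hρ hρε
    have hcongr : (∮ z in C(q, ρ), g z)
        = ∮ z in C(q, ρ), ((∑ k ∈ Finset.range n, t k z) + AJ n z) := by
      refine circleIntegral.integral_congr hρ.le fun z hz => ?_
      have hzq : z ≠ q := by
        intro h; subst h
        have := mem_sphere.1 hz
        simp at this
        exact absurd this hρ.ne
      exact gid z hzq
    rw [hcongr, apm_circleIntegral_add (hswap (Finset.range n)).1 hAJint,
      (hswap (Finset.range n)).2, hAJzero, add_zero] at h0
    rw [← h0]
    refine Finset.sum_congr rfl fun k hk => ?_
    exact circleIntegral.integral_const_mul _ _ _ _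
  have hresk : ∀ k ∈ Finset.range n, (k : ℤ) - n = -1 → aj k = 0 := by
    intro k hk hk1
    have hval : ∀ k' ∈ Finset.range n, k' ≠ k →
        aj k' * (∮ z in C(q, ρ), (z - q) ^ ((k' : ℤ) - n)) = 0 := by
      intro k' _ hk'
      have : ((k' : ℤ) - n) ≠ -1 := by
        intro h
        apply hk'
        have : (k' : ℤ) = k := by omega
        exact_mod_cast this
      rw [circleIntegral.integral_sub_zpow_of_ne this, mul_zero]
    have hsum := hcirc
    rw [Finset.sum_eq_single k hval (fun h => absurd hk h)] at hsum
    rw [hk1] at hsum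
    simp only [zpow_neg_one] at hsum
    rw [circleIntegral.integral_sub_inv_of_mem_ball (mem_ball_self hρ)] at hsum
    exact (mul_eq_zero.mp hsum.symm).resolve_right Complex.two_pi_I_ne_zero
  -- define s and sP
  set s : ℂ → ℂ := fun z => ∑ k ∈ Finset.range n,
    if (k : ℤ) - n = -1 then 0 else aj k * (z - q) ^ ((k : ℤ) - n) with hsdef
  set sP : ℂ → ℂ := fun z => ∑ k ∈ Finset.range n,
    if (k : ℤ) - n = -1 then 0
    else aj k * ((((k : ℤ) - n + 1 : ℤ) : ℂ))⁻¹ * (z - q) ^ ((k : ℤ) - n + 1) with hsPdef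
  have hs_eq : ∀ z, z ≠ q →
      s z = ∑ k ∈ Finset.range n, aj k * (z - q) ^ ((k : ℤ) - n) := by
    intro z _
    refine Finset.sum_congr rfl fun k hk => ?_
    split_ifs with h
    · rw [hresk k hk h, zero_mul]
    · rfl
  have hsP_deriv : ∀ z, z ≠ q → HasDerivAt sP (s z) z := by
    intro z hzq
    have h1 : z - q ≠ 0 := sub_ne_zero.2 hzq
    rw [hsdef, hsPdef]
    apply HasDerivAt.fun_sum
    intro k hk
    split_ifs with h
    · exact hasDerivAt_const z 0
    · have hne : (((k : ℤ) - n + 1 : ℤ) : ℂ) ≠ 0 := by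
        rw [Int.cast_ne_zero]; omega
      have hbase : HasDerivAt (fun w : ℂ => (w - q) ^ ((k : ℤ) - n + 1))
          ((((k : ℤ) - n + 1 : ℤ) : ℂ) * (z - q) ^ ((k : ℤ) - n)) z := by
        have h2 := (hasDerivAt_zpow ((k : ℤ) - n + 1) (z - q) (Or.inl h1)).comp z
          ((hasDerivAt_id z).sub_const q)
        simpa [add_sub_cancel_right, Function.comp_def] using h2
      have h3 := hbase.const_mul (aj k * ((((k : ℤ) - n + 1 : ℤ) : ℂ))⁻¹)
      have h4 : aj k * ((((k : ℤ) - n + 1 : ℤ) : ℂ))⁻¹ *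
          ((((k : ℤ) - n + 1 : ℤ) : ℂ) * (z - q) ^ ((k : ℤ) - n))
          = aj k * (z - q) ^ ((k : ℤ) - n) := by
        rw [mul_assoc, ← mul_assoc ((((k : ℤ) - n + 1 : ℤ) : ℂ))⁻¹, inv_mul_cancel₀ hne, one_mul]
      exact h4 ▸ h3
  have hs_diff : ∀ z, z ≠ q → DifferentiableAt ℂ s z := by
    intro z hzq
    have h1 : z - q ≠ 0 := sub_ne_zero.2 hzq
    rw [hsdef]
    apply DifferentiableAt.fun_sum
    intro k hk
    split_ifs with h
    · exact differentiableAt_const 0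
    · exact ((differentiableAt_id.sub (differentiableAt_const q)).zpow
        (Or.inl h1)).const_mul (aj k)
  have hsP_mer : MeromorphicAt sP q := by
    rw [hsPdef]
    have : ∀ F : Finset ℕ, MeromorphicAt (fun z => ∑ k ∈ F,
        if (k : ℤ) - n = -1 then 0
        else aj k * ((((k : ℤ) - n + 1 : ℤ) : ℂ))⁻¹ * (z - q) ^ ((k : ℤ) - n + 1)) q := by
      intro F
      induction F using Finset.induction_on with
      | empty => simpa using MeromorphicAt.const (0 : ℂ) q
      | insert a F' h ih =>
        have h1 : (fun z => ∑ k ∈ insert a F', if (k : ℤ) - n = -1 then 0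
            else aj k * ((((k : ℤ) - n + 1 : ℤ) : ℂ))⁻¹ * (z - q) ^ ((k : ℤ) - n + 1))
            = fun z => (if (a : ℤ) - n = -1 then 0
            else aj a * ((((a : ℤ) - n + 1 : ℤ) : ℂ))⁻¹ * (z - q) ^ ((a : ℤ) - n + 1))
            + ∑ k ∈ F', if (k : ℤ) - n = -1 then 0
            else aj k * ((((k : ℤ) - n + 1 : ℤ) : ℂ))⁻¹ * (z - q) ^ ((k : ℤ) - n + 1) := by
          funext z; rw [Finset.sum_insert h]
        rw [h1]
        refine MeromorphicAt.add ?_ ih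
        split_ifs with hcase
        · exact MeromorphicAt.const 0 q
        · have hzsub : MeromorphicAt (fun z : ℂ => z - q) q :=
            ((MeromorphicAt.id q).sub (MeromorphicAt.const q q))
          have hz1 := hzsub.zpow ((a : ℤ) - n + 1)
          have hz2 : MeromorphicAt (fun z : ℂ => (z - q) ^ ((a : ℤ) - n + 1)) q := hz1
          exact (MeromorphicAt.const (aj a * ((((a : ℤ) - n + 1 : ℤ) : ℂ))⁻¹) q).mul hz2
    exact this (Finset.range n)
  refine ⟨s, sP, AJ n, ι, hι, hiso, hsP_deriv, hs_diff, hsP_mer, hEdiff, ?_⟩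
  intro z hz hzq
  rw [gid z hzq, hs_eq z hzq]

/-- Meromorphy of finite sums. -/
theorem apm_mero_sum {ι : Type*} (F : Finset ι) (t : ι → ℂ → ℂ) {q : ℂ}
    (h : ∀ k ∈ F, MeromorphicAt (t k) q) :
    MeromorphicAt (fun z => ∑ k ∈ F, t k z) q := by
  classical
  induction F using Finset.induction_on with
  | empty => simpa using MeromorphicAt.const (0 : ℂ) q
  | insert a F' hni ih =>
    have h1 : (fun z => ∑ k ∈ insert a F', t k z) = fun z => t a z + ∑ k ∈ F', t k z := by
      funext z; rw [Finset.sum_insert hni]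
    rw [h1]
    exact (h a (Finset.mem_insert_self a F')).add
      (ih fun k hk => h k (Finset.mem_insert_of_mem hk))

/-- `f` is a primitive of `g` away from `P`, holomorphic on `ℂ∖P`, meromorphic at every
point of `P`, and has multiplicative monodromy `h` with respect to the subgroup `Γ`. -/
def IsMonodromyPrimitive (P : Set ℂ) (Γ : AddSubgroup ℂ) (h : Γ → ℂ) (g f : ℂ → ℂ) : Prop :=
  DifferentiableOn ℂ f Pᶜ ∧
  (∀ q ∈ P, MeromorphicAt f q) ∧
  (∀ z ∉ P, HasDerivAt f (g z) z) ∧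
  (∀ z ∉ P, ∀ γ : Γ, f (z + (γ : ℂ)) = f z * h γ)

/-- A meromorphic function `g` on a torus (i.e. with additive periods `Γ`) with
non-trivial multiplicative monodromy `h`, poles contained in the closed discrete
`Γ`-invariant set `P`, and vanishing residues, has a unique primitive with the
same multiplicative monodromy `h`. -/
theorem integration_preserving_monodromy
    (Γ : AddSubgroup ℂ) (h : Γ → ℂ)
    (hhom : ∀ γ₁ γ₂ : Γ, h (γ₁ + γ₂) = h γ₁ * h γ₂)
    (hne : ∀ γ : Γ, h γ ≠ 0)
    (hnontriv : ∃ γ : Γ, h γ ≠ 1)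
    (P : Set ℂ) (hPclosed : IsClosed P) (hPdisc : DiscreteTopology P)
    (hPinv : ∀ γ : Γ, (fun z => z + (γ : ℂ)) '' P = P)
    (g : ℂ → ℂ)
    (hg : DifferentiableOn ℂ g Pᶜ)
    (hgmer : ∀ q ∈ P, MeromorphicAt g q)
    (hgmon : ∀ z ∉ P, ∀ γ : Γ, g (z + (γ : ℂ)) = g z * h γ)
    (hres : ∀ q ∈ P, ∃ ε > 0, ∀ ρ : ℝ, 0 < ρ → ρ < ε →
      (∮ z in C(q, ρ), g z) = 0) :
    ∃ f : ℂ → ℂ, IsMonodromyPrimitive P Γ h g f ∧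
      ∀ f' : ℂ → ℂ, IsMonodromyPrimitive P Γ h g f' → ∀ z ∉ P, f' z = f z := by
  classical
  obtain ⟨γ₀, hγ₀⟩ := hnontriv
  have hPopen : IsOpen Pᶜ := hPclosed.isOpen_compl
  have hPcnt : P.Countable := by
    have h2 : Countable P := TopologicalSpace.separableSpace_iff_countable.mp inferInstance
    exact Set.countable_coe_iff.mp h2
  have hPadd : ∀ (γ : Γ) (z : ℂ), z ∉ P → z + (γ : ℂ) ∉ P := by
    intro γ z hz hmem
    rw [← hPinv γ] at hmem
    obtain ⟨p, hp, hpe⟩ := hmem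
    have hpz : p = z := by
      have : p + (γ : ℂ) = z + (γ : ℂ) := hpe
      exact add_right_cancel this
    exact hz (hpz ▸ hp)
  have hrank : 1 < Module.rank ℝ ℂ := by rw [Complex.rank_real_complex]; norm_num
  have hPCconn : IsPreconnected (Pᶜ : Set ℂ) :=
    (hPcnt.isPathConnected_compl_of_one_lt_rank hrank).isConnected.isPreconnected
  obtain ⟨z₀, _, hz₀⟩ : ∃ z, z ∈ (Set.univ : Set ℂ) ∧ z ∈ Pᶜ :=
    (hPcnt.dense_compl ℝ).inter_open_nonempty _ isOpen_univ ⟨0, trivial⟩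
  have hqiso : ∀ q ∈ P, Pᶜ ∈ 𝓝[≠] q := by
    intro q hq
    have h1 := discreteTopology_subtype_iff.mp hPdisc q hq
    rwa [Filter.inf_principal_eq_bot] at h1
  -- local decomposition data
  have hloc : ∀ q : ℂ, ∃ (s sP e : ℂ → ℂ) (r : ℝ), 0 < r ∧ (q ∈ P →
      ((∀ z ∈ ball q r, z ≠ q → z ∉ P) ∧
      (∀ z, z ≠ q → HasDerivAt sP (s z) z) ∧
      (∀ z, z ≠ q → DifferentiableAt ℂ s z) ∧
      MeromorphicAt sP q ∧
      DifferentiableOn ℂ e (ball q r) ∧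
      (∀ z ∈ ball q r, z ≠ q → g z = s z + e z))) := by
    intro q
    by_cases hq : q ∈ P
    · obtain ⟨s, sP, e, r, hr, h1, h2, h3, h4, h5, h6⟩ :=
        apm_local_decomp hPclosed hPdisc hg hq (hgmer q hq) (hres q hq)
      exact ⟨s, sP, e, r, hr, fun _ => ⟨h1, h2, h3, h4, h5, h6⟩⟩
    · exact ⟨0, 0, 0, 1, one_pos, fun hq' => absurd hq' hq⟩
  choose sf sPf ef rf hrf hlocP using hloc
  -- finite pole sets
  have hfin : ∀ R : ℝ, (P ∩ closedBall 0 R).Finite := by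
    intro R
    have hcpt : IsCompact (P ∩ closedBall 0 R) :=
      (isCompact_closedBall (0 : ℂ) R).of_isClosed_subset
        (hPclosed.inter isClosed_closedBall) inter_subset_right
    have : DiscreteTopology ↥(P ∩ closedBall 0 R) :=
      DiscreteTopology.of_subset hPdisc inter_subset_left
    exact hcpt.finite ⟨this⟩
  set b : ℕ → ℝ := fun n => n + ‖z₀‖ + 1 with hbdef
  have hbpos : ∀ n, 0 < b n := by intro n; simp only [hbdef]; positivity
  have hbmono : ∀ m n : ℕ, m ≤ n → b m ≤ b n := by
    intro m n hmn; simp only [hbdef]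
    have : (m : ℝ) ≤ n := Nat.cast_le.2 hmn
    linarith
  have hz₀b : ∀ n, z₀ ∈ ball 0 (b n) := by
    intro n
    rw [mem_ball_zero_iff]
    simp only [hbdef]
    have : (0:ℝ) ≤ n := Nat.cast_nonneg n
    linarith
  -- primitives on balls
  have hprim : ∀ n : ℕ, ∃ F : ℂ → ℂ,
      (∀ z ∈ ball 0 (b n), z ∉ P → HasDerivAt F (g z) z) ∧
      (∀ q ∈ P, q ∈ ball 0 (b n) → MeromorphicAt F q) := by
    intro n
    set R : ℝ := b n with hRdef
    set Q : Finset ℂ := (hfin (R + 1)).toFinset with hQdef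
    have hQmem : ∀ q, q ∈ Q ↔ q ∈ P ∧ q ∈ closedBall (0:ℂ) (R + 1) := by
      intro q; rw [hQdef, Set.Finite.mem_toFinset]; rfl
    set E : ℂ → ℂ := fun z =>
      if z ∈ P then ef z z - ∑ q ∈ Q.erase z, sf q z
      else g z - ∑ q ∈ Q, sf q z with hEdef
    have hEdiff : DifferentiableOn ℂ E (ball 0 (R + 1)) := by
      intro z hz
      by_cases hzP : z ∈ P
      · have hzQ : z ∈ Q := (hQmem z).2 ⟨hzP, ball_subset_closedBall hz⟩
        obtain ⟨hisoz, hderz, hsdiffz, hmerz, hediffz, heqz⟩ := hlocP z hzP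
        set V : ℂ → ℂ := fun w => ef z w - ∑ q ∈ Q.erase z, sf q w with hVdef
        have hVdiff : DifferentiableAt ℂ V z := by
          refine DifferentiableAt.sub ?_ ?_
          · exact hediffz.differentiableAt (isOpen_ball.mem_nhds (mem_ball_self (hrf z)))
          · refine DifferentiableAt.fun_sum fun q hq => ?_
            have hqP : q ∈ P := ((hQmem q).1 (Finset.mem_of_mem_erase hq)).1
            have hqnez : q ≠ z := Finset.ne_of_mem_erase hq
            exact (hlocP q hqP).2.2.1 z (Ne.symm hqnez)
        have hEV : E =ᶠ[𝓝 z] V := by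
          filter_upwards [isOpen_ball.mem_nhds (mem_ball_self (hrf z))] with w hw
          by_cases hwz : w = z
          · subst hwz
            simp only [hEdef, hVdef, if_pos hzP]
          · have hwP : w ∉ P := hisoz w hw hwz
            simp only [hEdef, hVdef, if_neg hwP]
            rw [heqz w hw hwz, ← Finset.add_sum_erase Q (fun q => sf q w) hzQ]
            ring
        exact ((hEV.differentiableAt_iff).2 hVdiff).differentiableWithinAt
      · set W : ℂ → ℂ := fun w => g w - ∑ q ∈ Q, sf q w with hWdef
        have hWdiff : DifferentiableAt ℂ W z := by
          refine DifferentiableAt.sub ?_ ?_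
          · exact hg.differentiableAt (hPopen.mem_nhds hzP)
          · refine DifferentiableAt.fun_sum fun q hq => ?_
            have hqP : q ∈ P := ((hQmem q).1 hq).1
            have hqnez : z ≠ q := fun hzq => hzP (hzq ▸ hqP)
            exact (hlocP q hqP).2.2.1 z hqnez
        have hEW : E =ᶠ[𝓝 z] W := by
          filter_upwards [hPopen.mem_nhds hzP] with w hw
          simp only [hEdef, hWdef, if_neg hw]
        exact ((hEW.differentiableAt_iff).2 hWdiff).differentiableWithinAt
    obtain ⟨G, hG⟩ := apm_exists_primitive (show R < R + 1 by linarith) hEdiff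
    refine ⟨fun z => G z + ∑ q ∈ Q, sPf q z, ?_, ?_⟩
    · intro z hz hzP
      have h1 : HasDerivAt G (E z) z := hG z hz
      have h2 : HasDerivAt (fun w => ∑ q ∈ Q, sPf q w) (∑ q ∈ Q, sf q z) z := by
        refine HasDerivAt.fun_sum fun q hq => ?_
        have hqP : q ∈ P := ((hQmem q).1 hq).1
        have hqnez : z ≠ q := fun hzq => hzP (hzq ▸ hqP)
        exact (hlocP q hqP).2.1 z hqnez
      have h3 := h1.add h2
      have h4 : E z + ∑ q ∈ Q, sf q z = g z := by
        simp only [hEdef, if_neg hzP]; ring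
      rw [h4] at h3
      exact h3
    · intro q hq hqball
      have hGdiff : DifferentiableOn ℂ G (ball 0 R) := fun z hz =>
        (hG z hz).differentiableAt.differentiableWithinAt
      have hGmer : MeromorphicAt G q :=
        (hGdiff.analyticAt (isOpen_ball.mem_nhds hqball)).meromorphicAt
      have hsummer : MeromorphicAt (fun w => ∑ q' ∈ Q, sPf q' w) q := by
        refine apm_mero_sum Q (fun q' => sPf q') fun q' hq' => ?_
        have hq'P : q' ∈ P := ((hQmem q').1 hq').1
        by_cases hqq : q' = q
        · subst hqq; exact (hlocP q' hq'P).2.2.2.1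
        · have hdiff : DifferentiableOn ℂ (sPf q') {q'}ᶜ := fun x hx =>
            ((hlocP q' hq'P).2.1 x hx).differentiableAt.differentiableWithinAt
          have : AnalyticAt ℂ (sPf q') q := hdiff.analyticAt
            ((isOpen_compl_singleton).mem_nhds (by simpa [eq_comm] using hqq))
          exact this.meromorphicAt
      exact hGmer.add hsummer
  choose Fn hFn1 hFn2 using hprim
  set FN : ℕ → ℂ → ℂ := fun n z => Fn n z - Fn n z₀ with hFNdef
  have hFN1 : ∀ n, ∀ z ∈ ball 0 (b n), z ∉ P → HasDerivAt (FN n) (g z) z := by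
    intro n z hz hzP
    exact (hFn1 n z hz hzP).sub_const (Fn n z₀)
  have hUopen : ∀ n, IsOpen (ball (0:ℂ) (b n) \ P) := fun n => isOpen_ball.sdiff hPclosed
  have hUconn : ∀ n, IsPreconnected (ball (0:ℂ) (b n) \ P) := fun n =>
    (apm_convex_diff_countable (convex_ball 0 (b n)) isOpen_ball
      (nonempty_ball.2 (hbpos n)) hPcnt).isConnected.isPreconnected
  have hmono : ∀ m n : ℕ, m ≤ n → ∀ z ∈ ball (0:ℂ) (b m) \ P, FN m z = FN n z := by
    intro m n hmn z hz
    have hsub : ball (0:ℂ) (b m) ⊆ ball 0 (b n) := ball_subset_ball (hbmono m n hmn)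
    have key : ∀ x ∈ ball (0:ℂ) (b m) \ P, HasDerivAt (fun w => FN m w - FN n w) 0 x := by
      intro x hx
      have := (hFN1 m x hx.1 hx.2).fun_sub (hFN1 n x (hsub hx.1) hx.2)
      simpa using this
    have h1 := apm_const_of_deriv_zero (hUopen m) (hUconn m) key hz ⟨hz₀b m, hz₀⟩
    have h2 : FN m z₀ - FN n z₀ = 0 := by simp [hFNdef]
    rw [h2] at h1
    exact sub_eq_zero.1 h1
  -- global primitive
  set idx : ℂ → ℕ := fun z => ⌈‖z‖⌉₊ with hidxdef
  have hidx : ∀ z, z ∈ ball (0:ℂ) (b (idx z)) := by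
    intro z
    rw [mem_ball_zero_iff]
    simp only [hbdef]
    have h1 : ‖z‖ ≤ ⌈‖z‖⌉₊ := Nat.le_ceil _
    have h2 : (0:ℝ) ≤ ‖z₀‖ := norm_nonneg _
    simp only [hidxdef]
    linarith
  set F : ℂ → ℂ := fun z => FN (idx z) z with hFdef
  have hFeq : ∀ n, ∀ z ∈ ball (0:ℂ) (b n) \ P, F z = FN n z := by
    intro n z hz
    have h1 := hmono (idx z) (max (idx z) n) (le_max_left _ _) z ⟨hidx z, hz.2⟩
    have h2 := hmono n (max (idx z) n) (le_max_right _ _) z hz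
    simp only [hFdef]
    rw [h1, h2]
  have hFderiv : ∀ z, z ∉ P → HasDerivAt F (g z) z := by
    intro z hz
    have hmem : (ball (0:ℂ) (b (idx z)) \ P) ∈ 𝓝 z := (hUopen (idx z)).mem_nhds ⟨hidx z, hz⟩
    have hev : F =ᶠ[𝓝 z] FN (idx z) := by
      filter_upwards [hmem] with w hw using hFeq (idx z) w hw
    exact (hFN1 (idx z) z (hidx z) hz).congr_of_eventuallyEq hev
  have hFmer : ∀ q ∈ P, MeromorphicAt F q := by
    intro q hq
    have hFNmer : MeromorphicAt (FN (idx q)) q :=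
      (hFn2 (idx q) q hq (hidx q)).sub (MeromorphicAt.const (Fn (idx q) z₀) q)
    refine hFNmer.congr ?_
    have h1 : (ball (0:ℂ) (b (idx q))) ∈ 𝓝[≠] q :=
      nhdsWithin_le_nhds (isOpen_ball.mem_nhds (hidx q))
    filter_upwards [h1, hqiso q hq] with w hw1 hw2
    exact (hFeq (idx q) w ⟨hw1, hw2⟩).symm
  -- monodromy constant
  have hK : ∀ (γ : Γ), ∀ z, z ∉ P → F (z + (γ:ℂ)) - h γ * F z = F (z₀ + (γ:ℂ)) - h γ * F z₀ := by
    intro γ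
    have key : ∀ x ∈ Pᶜ, HasDerivAt (fun w => F (w + (γ:ℂ)) - h γ * F w) 0 x := by
      intro x hx
      have h1 : HasDerivAt (fun w => F (w + (γ:ℂ))) (g (x + (γ:ℂ)) * 1) x :=
        (hFderiv (x + (γ:ℂ)) (hPadd γ x hx)).comp (h₂ := F) x ((hasDerivAt_id' x).add_const ((γ:ℂ)))
      have h2 := (hFderiv x hx).const_mul (h γ)
      have h3 := h1.sub h2
      have h4 : g (x + (γ:ℂ)) * 1 - h γ * g x = 0 := by
        rw [hgmon x hx γ]; ring
      rwa [h4] at h3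
    intro z hz
    exact apm_const_of_deriv_zero hPopen hPCconn key hz hz₀
  set c : Γ → ℂ := fun γ => F (z₀ + (γ:ℂ)) - h γ * F z₀ with hcdef
  have hcrel : ∀ γ : Γ, c γ * (h γ₀ - 1) = c γ₀ * (h γ - 1) := by
    intro γ
    have e1 : F (z₀ + (γ:ℂ) + (γ₀:ℂ)) - h γ₀ * F (z₀ + (γ:ℂ)) = c γ₀ :=
      hK γ₀ (z₀ + (γ:ℂ)) (hPadd γ z₀ hz₀)
    have e2 : F (z₀ + (γ₀:ℂ) + (γ:ℂ)) - h γ * F (z₀ + (γ₀:ℂ)) = c γ :=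
      hK γ (z₀ + (γ₀:ℂ)) (hPadd γ₀ z₀ hz₀)
    have e3 : c γ = F (z₀ + (γ:ℂ)) - h γ * F z₀ := rfl
    have e4 : c γ₀ = F (z₀ + (γ₀:ℂ)) - h γ₀ * F z₀ := rfl
    have hcomm : z₀ + (γ:ℂ) + (γ₀:ℂ) = z₀ + (γ₀:ℂ) + (γ:ℂ) := by ring
    rw [hcomm] at e1
    linear_combination e2 - e1 + h γ₀ * e3 - h γ * e4
  have hγ₀ne : h γ₀ - 1 ≠ 0 := sub_ne_zero.2 hγ₀
  set a : ℂ := c γ₀ / (h γ₀ - 1) with hadef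
  have hca : ∀ γ : Γ, c γ = a * (h γ - 1) := by
    intro γ
    rw [hadef, div_mul_eq_mul_div, eq_div_iff hγ₀ne]
    linear_combination hcrel γ
  set f : ℂ → ℂ := fun z => F z + a with hfdef
  have hfderiv : ∀ z, z ∉ P → HasDerivAt f (g z) z := fun z hz =>
    (hFderiv z hz).add_const a
  have hfmon : ∀ z, z ∉ P → ∀ γ : Γ, f (z + (γ:ℂ)) = f z * h γ := by
    intro z hz γ
    have h1 := hK γ z hz
    have h2 := hca γ
    simp only [hfdef]
    rw [hcdef] at h2
    linear_combination h1 + h2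
  refine ⟨f, ⟨fun z hz => (hfderiv z hz).differentiableAt.differentiableWithinAt,
    fun q hq => (hFmer q hq).add (MeromorphicAt.const a q),
    fun z hz => hfderiv z hz, fun z hz γ => hfmon z hz γ⟩, ?_⟩
  -- uniqueness
  rintro f' ⟨hd', hm', hder', hmon'⟩ z hz
  have key : ∀ x ∈ Pᶜ, HasDerivAt (fun w => f' w - f w) 0 x := by
    intro x hx
    have := (hder' x hx).fun_sub (hfderiv x hx)
    simpa using this
  have hconst : ∀ x, x ∉ P → f' x - f x = f' z₀ - f z₀ := fun x hx =>
    apm_const_of_deriv_zero hPopen hPCconn key hx hz₀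
  have h1 : f' (z₀ + (γ₀:ℂ)) - f (z₀ + (γ₀:ℂ)) = f' z₀ - f z₀ :=
    hconst _ (hPadd γ₀ z₀ hz₀)
  rw [hmon' z₀ hz₀ γ₀, hfmon z₀ hz₀ γ₀] at h1
  have h2 : (f' z₀ - f z₀) * (h γ₀ - 1) = 0 := by linear_combination h1
  have h3 : f' z₀ - f z₀ = 0 := by
    rcases mul_eq_zero.1 h2 with h | h
    · exact h
    · exact absurd h hγ₀ne
  have h4 := hconst z hz
  rw [h3] at h4
  exact sub_eq_zero.1 h4
end

section
/- Let Γ ⊆ ℂ be an additive subgroup, let h : Γ → ℂ∖{0} be a group homomorphism into the multiplicative group that is not identically 1, let S ⊆ ℂ be nonempty with S + γ = S for all γ ∈ Γ, and let f : S → ℂ and a : Γ → ℂ satisfy f(z + γ) = f(z)·h(γ) + a(γ) for all z ∈ S and γ ∈ Γ. Then there exists a unique b ∈ ℂ such that for all z ∈ S and γ ∈ Γ one has f(z + γ) + b = (f(z) + b)·h(γ); equivalently, there is a unique b ∈ ℂ with a(γ) = b·(h(γ) − 1) for all γ ∈ Γ. -/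
open Set

/-- If `f` has multiplicative monodromy `h` (a non-trivial homomorphism into `ℂ∖{0}`)
up to additive periods `a γ` on a nonempty `Γ`-invariant set `S`, then there is a unique
constant `b` such that `f + b` has pure multiplicative monodromy `h`; equivalently
there is a unique `b` with `a γ = b·(h γ − 1)` for all `γ ∈ Γ`. -/
theorem remove_additive_monodromy
    (Γ : AddSubgroup ℂ) (h : Γ → ℂ)
    (hhom : ∀ γ₁ γ₂ : Γ, h (γ₁ + γ₂) = h γ₁ * h γ₂)
    (hne : ∀ γ : Γ, h γ ≠ 0)
    (hnontriv : ∃ γ : Γ, h γ ≠ 1)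
    (S : Set ℂ) (hS : S.Nonempty)
    (hSinv : ∀ γ : Γ, (fun z => z + (γ : ℂ)) '' S = S)
    (f : ℂ → ℂ) (a : Γ → ℂ)
    (hmon : ∀ z ∈ S, ∀ γ : Γ, f (z + (γ : ℂ)) = f z * h γ + a γ) :
    (∃! b : ℂ, ∀ z ∈ S, ∀ γ : Γ, f (z + (γ : ℂ)) + b = (f z + b) * h γ) ∧
    (∃! b : ℂ, ∀ γ : Γ, a γ = b * (h γ - 1)) := by
  obtain ⟨γ₀, hγ₀⟩ := hnontriv
  obtain ⟨z₀, hz₀⟩ := hS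
  have hmem : ∀ γ : Γ, z₀ + (γ : ℂ) ∈ S := by
    intro γ
    rw [← hSinv γ]
    exact ⟨z₀, hz₀, rfl⟩
  have cocycle : ∀ γ₁ γ₂ : Γ, a (γ₁ + γ₂) = a γ₁ * h γ₂ + a γ₂ := by
    intro γ₁ γ₂
    have e1 := hmon z₀ hz₀ (γ₁ + γ₂)
    have e2 := hmon (z₀ + (γ₁ : ℂ)) (hmem γ₁) γ₂
    have e3 := hmon z₀ hz₀ γ₁
    have key : z₀ + ((γ₁ + γ₂ : Γ) : ℂ) = z₀ + (γ₁ : ℂ) + (γ₂ : ℂ) := by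
      push_cast; ring
    rw [key, e2, e3, hhom] at e1
    linear_combination -e1
  have swap : ∀ γ₁ γ₂ : Γ, a γ₁ * (h γ₂ - 1) = a γ₂ * (h γ₁ - 1) := by
    intro γ₁ γ₂
    have := cocycle γ₁ γ₂
    rw [add_comm γ₁ γ₂, cocycle γ₂ γ₁] at this
    linear_combination -this
  set b : ℂ := a γ₀ / (h γ₀ - 1) with hb
  have hd : h γ₀ - 1 ≠ 0 := sub_ne_zero.mpr hγ₀
  have hab : ∀ γ : Γ, a γ = b * (h γ - 1) := by
    intro γ
    have := swap γ γ₀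
    rw [hb, div_mul_eq_mul_div, eq_div_iff hd]
    linear_combination this
  have uniq : ∀ b' : ℂ, (∀ γ : Γ, a γ = b' * (h γ - 1)) → b' = b := by
    intro b' hb'
    have h1 := hb' γ₀
    have h2 := hab γ₀
    have := h1.symm.trans h2
    exact mul_right_cancel₀ hd this
  constructor
  · refine ⟨b, ?_, ?_⟩
    · intro z hz γ
      rw [hmon z hz γ, hab γ]; ring
    · intro b' hb'
      apply uniq
      intro γ
      have := hb' z₀ hz₀ γ
      rw [hmon z₀ hz₀ γ] at this
      linear_combination this
  · exact ⟨b, hab, uniq⟩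
end

section
/- Let ω₁, ω₃ ∈ ℂ be ℝ-linearly independent, let Γ̃ = {4mω₁ + 4nω₃ : m, n ∈ ℤ}, and let H = (0 + Γ̃) ∪ (2ω₁ + Γ̃) ∪ (2ω₁ + 2ω₃ + Γ̃) ∪ (2ω₃ + Γ̃) be the set of half-period points. Let ε₁, ε₃ ∈ {1, −1} with (ε₁, ε₃) ≠ (1, 1). If s is a holomorphic function on ℂ∖H with s(z + 4ω₁) = ε₁·s(z) and s(z + 4ω₃) = ε₃·s(z) for all z in the domain, and at every point q ∈ H the function s has at most a simple pole with vanishing constant Laurent term at q (i.e., there exists r ∈ ℂ with s(z) − r/(z − q) → 0 as z → q), then s is identically zero. -/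
open Complex Filter Set Topology

/-- The lattice `Γ̃ = {4mω₁ + 4nω₃ : m, n ∈ ℤ}`. -/
def lat4 (ω₁ ω₃ : ℂ) : Set ℂ := {z | ∃ m n : ℤ, z = 4 * (m : ℂ) * ω₁ + 4 * (n : ℂ) * ω₃}

/-- The set `H` of the four half periods of `T²` together with all their `Γ̃`-translates. -/
def Hset (ω₁ ω₃ : ℂ) : Set ℂ :=
  lat4 ω₁ ω₃ ∪ (fun γ => 2 * ω₁ + γ) '' lat4 ω₁ ω₃ ∪
    (fun γ => 2 * ω₁ + 2 * ω₃ + γ) '' lat4 ω₁ ω₃ ∪ (fun γ => 2 * ω₃ + γ) '' lat4 ω₁ ω₃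

/-- The lattice `Λ = {2mω₁ + 2nω₃}`; it coincides with `Hset`. -/
def Lam (ω₁ ω₃ : ℂ) : Set ℂ := {z | ∃ m n : ℤ, z = 2 * (m : ℂ) * ω₁ + 2 * (n : ℂ) * ω₃}

section LamFacts

variable {ω₁ ω₃ : ℂ}

lemma Hset_eq : Hset ω₁ ω₃ = Lam ω₁ ω₃ := by
  ext z
  constructor
  · rintro (((⟨m,n,rfl⟩ | ⟨γ,⟨m,n,rfl⟩,rfl⟩) | ⟨γ,⟨m,n,rfl⟩,rfl⟩) | ⟨γ,⟨m,n,rfl⟩,rfl⟩)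
    · exact ⟨2*m, 2*n, by push_cast; ring⟩
    · exact ⟨2*m+1, 2*n, by push_cast; ring⟩
    · exact ⟨2*m+1, 2*n+1, by push_cast; ring⟩
    · exact ⟨2*m, 2*n+1, by push_cast; ring⟩
  · rintro ⟨m, n, rfl⟩
    rcases Int.even_or_odd m with ⟨a, ha⟩ | ⟨a, ha⟩ <;>
      rcases Int.even_or_odd n with ⟨b, hb⟩ | ⟨b, hb⟩ <;> subst ha hb
    · exact Or.inl (Or.inl (Or.inl ⟨a, b, by push_cast; ring⟩))
    · exact Or.inr ⟨4*(a:ℂ)*ω₁ + 4*(b:ℂ)*ω₃, ⟨a, b, rfl⟩, by push_cast; ring⟩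
    · exact Or.inl (Or.inl (Or.inr ⟨4*(a:ℂ)*ω₁ + 4*(b:ℂ)*ω₃, ⟨a, b, rfl⟩, by push_cast; ring⟩))
    · exact Or.inl (Or.inr ⟨4*(a:ℂ)*ω₁ + 4*(b:ℂ)*ω₃, ⟨a, b, rfl⟩, by push_cast; ring⟩)

lemma Lam_add {a b : ℂ} (ha : a ∈ Lam ω₁ ω₃) (hb : b ∈ Lam ω₁ ω₃) : a + b ∈ Lam ω₁ ω₃ := by
  obtain ⟨m, n, rfl⟩ := ha; obtain ⟨m', n', rfl⟩ := hb
  exact ⟨m + m', n + n', by push_cast; ring⟩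

lemma Lam_neg {a : ℂ} (ha : a ∈ Lam ω₁ ω₃) : -a ∈ Lam ω₁ ω₃ := by
  obtain ⟨m, n, rfl⟩ := ha; exact ⟨-m, -n, by push_cast; ring⟩

lemma Lam_add_iff {γ : ℂ} (hγ : γ ∈ Lam ω₁ ω₃) {z : ℂ} : z + γ ∈ Lam ω₁ ω₃ ↔ z ∈ Lam ω₁ ω₃ :=
  ⟨fun h => by simpa using Lam_add h (Lam_neg hγ), fun h => Lam_add h hγ⟩

lemma Lam_neg_iff {z : ℂ} : -z ∈ Lam ω₁ ω₃ ↔ z ∈ Lam ω₁ ω₃ :=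
  ⟨fun h => by simpa using Lam_neg h, Lam_neg⟩

lemma mem_lam (m n : ℤ) : 2*(m:ℂ)*ω₁ + 2*(n:ℂ)*ω₃ ∈ Lam ω₁ ω₃ := ⟨m, n, rfl⟩

lemma mem_lam4 (m n : ℤ) : 4*(m:ℂ)*ω₁ + 4*(n:ℂ)*ω₃ ∈ Lam ω₁ ω₃ :=
  ⟨2*m, 2*n, by push_cast; ring⟩

lemma mem_lam0 : (0:ℂ) ∈ Lam ω₁ ω₃ := ⟨0, 0, by norm_num⟩

lemma li_smul (c : ℝ) (hc : c ≠ 0) (hind : LinearIndependent ℝ ![ω₁, ω₃]) :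
    LinearIndependent ℝ ![(c:ℂ)*ω₁, (c:ℂ)*ω₃] := by
  have := hind.units_smul ![Units.mk0 c hc, Units.mk0 c hc]
  convert this using 1
  funext i; fin_cases i <;> simp [Complex.real_smul]

noncomputable def B2 (hind : LinearIndependent ℝ ![ω₁, ω₃]) : Module.Basis (Fin 2) ℝ ℂ :=
  basisOfLinearIndependentOfCardEqFinrank
    (by simpa using li_smul 2 two_ne_zero hind) (by simp [Complex.finrank_real_complex])

lemma coe_B2 (hind : LinearIndependent ℝ ![ω₁, ω₃]) : ⇑(B2 hind) = ![2*ω₁, 2*ω₃] :=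
  coe_basisOfLinearIndependentOfCardEqFinrank _ _

lemma Lam_eq_span (hind : LinearIndependent ℝ ![ω₁, ω₃]) :
    Lam ω₁ ω₃ = (Submodule.span ℤ (Set.range ⇑(B2 hind)) : Set ℂ) := by
  ext z
  rw [coe_B2]
  have : Set.range ![2*ω₁, 2*ω₃] = {2*ω₁, 2*ω₃} := by
    simp [Matrix.range_cons, Matrix.range_empty, Set.pair_comm]
  rw [this]
  simp only [SetLike.mem_coe, Submodule.mem_span_pair]
  constructor
  · rintro ⟨m, n, rfl⟩
    exact ⟨m, n, by simp [zsmul_eq_mul]; ring⟩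
  · rintro ⟨m, n, rfl⟩
    exact ⟨m, n, by simp [zsmul_eq_mul]; ring⟩

lemma Lam_closed (hind : LinearIndependent ℝ ![ω₁, ω₃]) : IsClosed (Lam ω₁ ω₃) := by
  rw [Lam_eq_span hind]
  exact AddSubgroup.isClosed_of_discrete
    (H := (Submodule.span ℤ (Set.range ⇑(B2 hind))).toAddSubgroup)

lemma Lam_isolated (hind : LinearIndependent ℝ ![ω₁, ω₃]) {q : ℂ} (hq : q ∈ Lam ω₁ ω₃) :
    ∃ ρ > 0, ∀ z ∈ Metric.ball q ρ, z ∈ Lam ω₁ ω₃ → z = q := by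
  have hd : DiscreteTopology (Lam ω₁ ω₃ : Set ℂ) := by
    rw [Lam_eq_span hind]
    exact inferInstanceAs (DiscreteTopology (Submodule.span ℤ (Set.range ⇑(B2 hind))))
  have : IsOpen ({(⟨q, hq⟩ : Lam ω₁ ω₃)} : Set (Lam ω₁ ω₃)) := isOpen_discrete _
  rw [isOpen_induced_iff] at this
  obtain ⟨U, hU, hUe⟩ := this
  obtain ⟨ρ, hρ, hball⟩ := Metric.isOpen_iff.mp hU q (by
    have : (⟨q, hq⟩ : Lam ω₁ ω₃) ∈ (Subtype.val ⁻¹' U : Set (Lam ω₁ ω₃)) := by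
      rw [hUe]; rfl
    exact this)
  refine ⟨ρ, hρ, fun z hz hzL => ?_⟩
  have : (⟨z, hzL⟩ : Lam ω₁ ω₃) ∈ (Subtype.val ⁻¹' U : Set (Lam ω₁ ω₃)) := hball hz
  rw [hUe] at this
  simpa using congrArg Subtype.val this

lemma Lam_countable : (Lam ω₁ ω₃).Countable := by
  have : Lam ω₁ ω₃ = Set.range (fun p : ℤ × ℤ => 2 * (p.1 : ℂ) * ω₁ + 2 * (p.2 : ℂ) * ω₃) := by
    ext z; constructor
    · rintro ⟨m, n, rfl⟩; exact ⟨(m, n), rfl⟩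
    · rintro ⟨⟨m, n⟩, rfl⟩; exact ⟨m, n, rfl⟩
  rw [this]; exact Set.countable_range _

lemma Lam_compl_preconnected : IsPreconnected (Lam ω₁ ω₃)ᶜ := by
  have h : (1 : Cardinal) < Module.rank ℝ ℂ := by
    rw [Complex.rank_real_complex]; norm_num
  exact ((Lam_countable (ω₁ := ω₁)
    (ω₃ := ω₃)).isPathConnected_compl_of_one_lt_rank h).isConnected.isPreconnected

end LamFacts

section Analytic

lemma tendsto_sub_self (q : ℂ) : Tendsto (fun z : ℂ => z - q) (𝓝[≠] q) (𝓝 0) := by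
  have : Tendsto (fun z : ℂ => z - q) (𝓝 q) (𝓝 (q - q)) :=
    (continuous_id.sub continuous_const).tendsto q
  simpa using this.mono_left nhdsWithin_le_nhds

lemma tendsto_add_punctured (δ q : ℂ) :
    Tendsto (fun z => z + δ) (𝓝[≠] q) (𝓝[≠] (q + δ)) := by
  rw [tendsto_nhdsWithin_iff]
  constructor
  · exact ((continuous_add_right δ).tendsto q).mono_left nhdsWithin_le_nhds
  · filter_upwards [self_mem_nhdsWithin] with z hz
    intro h
    exact hz (by simpa using add_right_cancel (h : z + δ = q + δ))

lemma tendsto_neg_punctured (q : ℂ) :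
    Tendsto (fun z => -z) (𝓝[≠] q) (𝓝[≠] (-q)) := by
  rw [tendsto_nhdsWithin_iff]
  constructor
  · exact (continuous_neg.tendsto q).mono_left nhdsWithin_le_nhds
  · filter_upwards [self_mem_nhdsWithin] with z hz
    intro h
    exact hz (neg_injective (h : -z = -q))

lemma tendsto_reflect_punctured (c q : ℂ) :
    Tendsto (fun z => c - z) (𝓝[≠] q) (𝓝[≠] (c - q)) := by
  have := (tendsto_add_punctured c (-q)).comp (tendsto_neg_punctured q)
  simpa [Function.comp_def, sub_eq_add_neg, add_comm] using this

lemma pole_limit {f : ℂ → ℂ} {q r : ℂ}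
    (h : Tendsto (fun z => f z - r / (z - q)) (𝓝[≠] q) (𝓝 0)) :
    Tendsto (fun z => (z - q) * f z) (𝓝[≠] q) (𝓝 r) := by
  have h1 : Tendsto (fun z => (z - q) * (f z - r / (z - q)) + r) (𝓝[≠] q) (𝓝 r) := by
    simpa using ((tendsto_sub_self q).mul h).add (tendsto_const_nhds (x := r))
  refine h1.congr' ?_
  filter_upwards [self_mem_nhdsWithin] with z hz
  have hz' : z - q ≠ 0 := sub_ne_zero.mpr hz
  field_simp
  ring

lemma even_double_zero {f : ℂ → ℂ} {q : ℂ} {ρ : ℝ} (hρ : 0 < ρ)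
    (hf : DifferentiableOn ℂ f (Metric.ball q ρ \ {q}))
    (heven : ∀ z ∈ Metric.ball q ρ \ {q}, f (2*q - z) = f z)
    (hpole : ∃ r : ℂ, Tendsto (fun z => f z - r / (z - q)) (𝓝[≠] q) (𝓝 0)) :
    Tendsto (fun z => f z / (z - q)) (𝓝[≠] q) (𝓝 0) := by
  classical
  obtain ⟨r, hr⟩ := hpole
  have hball : ∀ᶠ z in 𝓝[≠] q, z ∈ Metric.ball q ρ \ {q} := by
    have h1 : ∀ᶠ z in 𝓝[≠] q, z ∈ Metric.ball q ρ :=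
      eventually_nhdsWithin_of_eventually_nhds
        (eventually_of_mem (Metric.ball_mem_nhds q hρ) fun z hz => hz)
    filter_upwards [h1, self_mem_nhdsWithin] with z h1 h2 using ⟨h1, h2⟩
  have hrefl : Tendsto (fun z => 2*q - z) (𝓝[≠] q) (𝓝[≠] q) := by
    have := tendsto_reflect_punctured (2*q) q
    rw [show 2*q - q = q by ring] at this
    exact this
  have hψ : Tendsto (fun z => f (2*q - z) - r / ((2*q - z) - q)) (𝓝[≠] q) (𝓝 0) :=
    hr.comp hrefl
  have hdiff : Tendsto (fun z => (z - q) *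
      ((f z - r / (z - q)) - (f (2*q - z) - r / ((2*q - z) - q)))) (𝓝[≠] q) (𝓝 0) := by
    simpa using (tendsto_sub_self q).mul (hr.sub hψ)
  have hconst : Tendsto (fun _ : ℂ => (-2) * r) (𝓝[≠] q) (𝓝 0) := by
    refine hdiff.congr' ?_
    filter_upwards [hball] with z hz
    have hz' : z - q ≠ 0 := sub_ne_zero.mpr hz.2
    have hz'' : (2*q - z) - q ≠ 0 := by
      intro h; apply hz'; linear_combination -h
    rw [heven z hz]
    have e2 : (z - q) * (2*q - z - q)⁻¹ = -1 := by
      rw [show 2*q - z - q = -(z - q) by ring, inv_neg, mul_neg, mul_inv_cancel₀ hz']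
    linear_combination (-r) * mul_inv_cancel₀ hz' + r * e2
  have hr0 : r = 0 := by
    have h2 := tendsto_nhds_unique hconst tendsto_const_nhds
    linear_combination h2 / 2
  subst hr0
  have hf0 : Tendsto f (𝓝[≠] q) (𝓝 0) := by
    refine hr.congr' ?_
    filter_upwards [self_mem_nhdsWithin] with z _
    simp
  set g : ℂ → ℂ := Function.update f q 0 with hg
  have hgq : g q = 0 := Function.update_self q 0 f
  have hgf : ∀ z : ℂ, z ≠ q → g z = f z := fun z hz => Function.update_of_ne hz 0 f
  have hgdiff : DifferentiableOn ℂ g (Metric.ball q ρ) := by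
    rw [← Complex.differentiableOn_compl_singleton_and_continuousAt_iff
      (Metric.ball_mem_nhds q hρ)]
    constructor
    · exact hf.congr fun z hz => hgf z hz.2
    · rw [continuousAt_update_same]
      exact hf0
  have hgderiv : HasDerivAt g (deriv g q) q :=
    (hgdiff.differentiableAt (Metric.ball_mem_nhds q hρ)).hasDerivAt
  have hgeven : ∀ z ∈ Metric.ball q ρ, g (2*q - z) = g z := by
    intro z hz
    rcases eq_or_ne z q with h | hzq
    · rw [h, show 2*q - q = q by ring]
    · have h2 : 2*q - z ≠ q := fun h => hzq (by linear_combination -h)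
      rw [hgf _ h2, hgf _ hzq]
      exact heven z ⟨hz, hzq⟩
  have hG : HasDerivAt (fun z => g (2*q - z)) (deriv g q * (-1)) q := by
    have hinner : HasDerivAt (fun z : ℂ => 2*q - z) (-1) q := by
      simpa using (hasDerivAt_id q).const_sub (2*q)
    have houter : HasDerivAt g (deriv g q) (2*q - q) := by
      rw [show 2*q - q = q by ring]; exact hgderiv
    exact houter.comp q hinner
  have hGg : (fun z => g (2*q - z)) =ᶠ[𝓝 q] g := by
    filter_upwards [Metric.ball_mem_nhds q hρ] with z hz using hgeven z hz
  have hderiv0 : deriv g q = 0 := by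
    have h1 : HasDerivAt g (deriv g q * (-1)) q := hG.congr_of_eventuallyEq hGg.symm
    have h2 := h1.unique hgderiv
    linear_combination -h2 / 2
  have hslope : Tendsto (slope g q) (𝓝[≠] q) (𝓝 0) := by
    rw [← hderiv0, ← hasDerivAt_iff_tendsto_slope]
    exact hgderiv
  refine hslope.congr' ?_
  filter_upwards [self_mem_nhdsWithin] with z hz
  rw [slope_def_field, hgf z hz, hgq]
  simp [div_eq_div_iff]

end Analytic


lemma mem_lam4₁ {ω₁ ω₃ : ℂ} : 4*ω₁ ∈ Lam ω₁ ω₃ := ⟨2, 0, by norm_num⟩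
lemma mem_lam4₃ {ω₁ ω₃ : ℂ} : 4*ω₃ ∈ Lam ω₁ ω₃ := ⟨0, 2, by norm_num⟩

lemma keyLemma (ω₁ ω₃ : ℂ) (hind : LinearIndependent ℝ ![ω₁, ω₃])
    (ε₁ ε₃ : ℂ) (hε₁ : ε₁ = 1 ∨ ε₁ = -1) (hε₃ : ε₃ = 1 ∨ ε₃ = -1)
    (dm dn : ℤ) (hδsign : ε₁ ^ dm * ε₃ ^ dn = -1)
    (η : ℂ) (hη : η = 1 ∨ η = -1)
    (f : ℂ → ℂ)
    (hhol : DifferentiableOn ℂ f (Lam ω₁ ω₃)ᶜ)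
    (hpar : ∀ z : ℂ, f (-z) = η * f z)
    (hmon₁ : ∀ z ∉ Lam ω₁ ω₃, f (z + 4 * ω₁) = ε₁ * f z)
    (hmon₃ : ∀ z ∉ Lam ω₁ ω₃, f (z + 4 * ω₃) = ε₃ * f z)
    (hpole : ∀ q ∈ Lam ω₁ ω₃, ∃ r : ℂ,
      Tendsto (fun z => f z - r / (z - q)) (𝓝[≠] q) (𝓝 0)) :
    ∀ z ∉ Lam ω₁ ω₃, f z = 0 := by
  classical
  have hε₁0 : ε₁ ≠ 0 := by rcases hε₁ with h | h <;> rw [h] <;> norm_num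
  have hε₃0 : ε₃ ≠ 0 := by rcases hε₃ with h | h <;> rw [h] <;> norm_num
  have hε₁sq : ε₁ * ε₁ = 1 := by rcases hε₁ with h | h <;> rw [h] <;> norm_num
  have hε₃sq : ε₃ * ε₃ = 1 := by rcases hε₃ with h | h <;> rw [h] <;> norm_num
  have hzpow : ∀ (e : ℂ), (e = 1 ∨ e = -1) → ∀ m : ℤ, e ^ m = 1 ∨ e ^ m = -1 := by
    rintro e (rfl | rfl) m
    · left; exact one_zpow m
    · rcases Int.even_or_odd m with ⟨k, hk⟩ | ⟨k, hk⟩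
      · left
        rw [hk, zpow_add₀ (by norm_num : (-1:ℂ) ≠ 0), ← mul_zpow]
        norm_num
      · right
        rw [hk, zpow_add₀ (by norm_num : (-1:ℂ) ≠ 0), zpow_one, two_mul,
          zpow_add₀ (by norm_num : (-1:ℂ) ≠ 0), ← mul_zpow]
        norm_num
  have hopen : IsOpen (Lam ω₁ ω₃)ᶜ := (Lam_closed hind).isOpen_compl
  have hshift : ∀ {z γ : ℂ}, γ ∈ Lam ω₁ ω₃ → z ∉ Lam ω₁ ω₃ → z + γ ∉ Lam ω₁ ω₃ :=
    fun hγ hz h => hz ((Lam_add_iff hγ).mp h)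
  -- monodromy for all multiples
  have hmon₁' : ∀ (m : ℤ), ∀ z ∉ Lam ω₁ ω₃, f (z + 4*(m:ℂ)*ω₁) = ε₁ ^ m * f z := by
    intro m
    induction m using Int.induction_on with
    | zero => intro z hz; simp
    | succ k ih =>
        intro z hz
        have hmem : z + 4*((k:ℤ):ℂ)*ω₁ ∉ Lam ω₁ ω₃ := hshift (by simpa using mem_lam4 k 0) hz
        have harg : z + 4*(((k:ℤ)+1 : ℤ):ℂ)*ω₁ = (z + 4*((k:ℤ):ℂ)*ω₁) + 4*ω₁ := by
          push_cast; ring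
        rw [harg, hmon₁ _ hmem, ih z hz, zpow_add_one₀ hε₁0]
        ring
    | pred k ih =>
        intro z hz
        have hwmem : z + 4*((-(k:ℤ)-1 : ℤ):ℂ)*ω₁ ∉ Lam ω₁ ω₃ :=
          hshift (by simpa using mem_lam4 (-(k:ℤ)-1) 0) hz
        have harg : (z + 4*((-(k:ℤ)-1 : ℤ):ℂ)*ω₁) + 4*ω₁ = z + 4*((-(k:ℤ) : ℤ):ℂ)*ω₁ := by
          push_cast; ring
        have h2 : ε₁ * f (z + 4*((-(k:ℤ)-1 : ℤ):ℂ)*ω₁) = ε₁ ^ (-(k:ℤ)) * f z := by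
          rw [← ih z hz, ← harg]
          exact (hmon₁ _ hwmem).symm
        have h3 : ε₁ ^ (-(k:ℤ)) = ε₁ * ε₁ ^ (-(k:ℤ)-1) := by
          rw [show (-(k:ℤ)) = (-(k:ℤ)-1)+1 by ring, zpow_add_one₀ hε₁0]
          ring
        apply mul_left_cancel₀ hε₁0
        rw [h2, h3]
        ring
  have hmon₃' : ∀ (m : ℤ), ∀ z ∉ Lam ω₁ ω₃, f (z + 4*(m:ℂ)*ω₃) = ε₃ ^ m * f z := by
    intro m
    induction m using Int.induction_on with
    | zero => intro z hz; simp
    | succ k ih =>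
        intro z hz
        have hmem : z + 4*((k:ℤ):ℂ)*ω₃ ∉ Lam ω₁ ω₃ := hshift (by simpa using mem_lam4 0 k) hz
        have harg : z + 4*(((k:ℤ)+1 : ℤ):ℂ)*ω₃ = (z + 4*((k:ℤ):ℂ)*ω₃) + 4*ω₃ := by
          push_cast; ring
        rw [harg, hmon₃ _ hmem, ih z hz, zpow_add_one₀ hε₃0]
        ring
    | pred k ih =>
        intro z hz
        have hwmem : z + 4*((-(k:ℤ)-1 : ℤ):ℂ)*ω₃ ∉ Lam ω₁ ω₃ :=
          hshift (by simpa using mem_lam4 0 (-(k:ℤ)-1)) hz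
        have harg : (z + 4*((-(k:ℤ)-1 : ℤ):ℂ)*ω₃) + 4*ω₃ = z + 4*((-(k:ℤ) : ℤ):ℂ)*ω₃ := by
          push_cast; ring
        have h2 : ε₃ * f (z + 4*((-(k:ℤ)-1 : ℤ):ℂ)*ω₃) = ε₃ ^ (-(k:ℤ)) * f z := by
          rw [← ih z hz, ← harg]
          exact (hmon₃ _ hwmem).symm
        have h3 : ε₃ ^ (-(k:ℤ)) = ε₃ * ε₃ ^ (-(k:ℤ)-1) := by
          rw [show (-(k:ℤ)) = (-(k:ℤ)-1)+1 by ring, zpow_add_one₀ hε₃0]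
          ring
        apply mul_left_cancel₀ hε₃0
        rw [h2, h3]
        ring
  have hmon' : ∀ (m n : ℤ), ∀ z ∉ Lam ω₁ ω₃,
      f (z + (4*(m:ℂ)*ω₁ + 4*(n:ℂ)*ω₃)) = ε₁^m * ε₃^n * f z := by
    intro m n z hz
    have h1 : z + (4*(m:ℂ)*ω₁ + 4*(n:ℂ)*ω₃) = (z + 4*(m:ℂ)*ω₁) + 4*(n:ℂ)*ω₃ := by ring
    rw [h1, hmon₃' n _ (hshift (by simpa using mem_lam4 m 0) hz), hmon₁' m z hz]
    ring
  have hreflect : ∀ (m n : ℤ), ∀ z ∉ Lam ω₁ ω₃,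
      f (2*(2*(m:ℂ)*ω₁ + 2*(n:ℂ)*ω₃) - z) = η * (ε₁^m * ε₃^n) * f z := by
    intro m n z hz
    have h1 : 2*(2*(m:ℂ)*ω₁ + 2*(n:ℂ)*ω₃) - z = (-z) + (4*(m:ℂ)*ω₁ + 4*(n:ℂ)*ω₃) := by ring
    rw [h1, hmon' m n (-z) (fun h => hz (Lam_neg_iff.mp h)), hpar z]
    ring
  -- double zeros at "even" lattice points
  have hevenpt : ∀ (m n : ℤ), η * (ε₁^m * ε₃^n) = 1 →
      Tendsto (fun z => f z / (z - (2*(m:ℂ)*ω₁ + 2*(n:ℂ)*ω₃)))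
        (𝓝[≠] (2*(m:ℂ)*ω₁ + 2*(n:ℂ)*ω₃)) (𝓝 0) := by
    intro m n hsig
    obtain ⟨ρ, hρ, hiso⟩ := Lam_isolated hind (mem_lam m n)
    have hsub : Metric.ball (2*(m:ℂ)*ω₁ + 2*(n:ℂ)*ω₃) ρ \ {2*(m:ℂ)*ω₁ + 2*(n:ℂ)*ω₃}
        ⊆ (Lam ω₁ ω₃)ᶜ := fun z hz h => hz.2 (hiso z hz.1 h)
    refine even_double_zero hρ (hhol.mono hsub) ?_ (hpole _ (mem_lam m n))
    intro z hz
    rw [hreflect m n z (hsub hz), hsig, one_mul]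
  have hpolept : ∀ q ∈ Lam ω₁ ω₃, ∃ r : ℂ,
      Tendsto (fun z => (z - q) * f z) (𝓝[≠] q) (𝓝 r) :=
    fun q hq => (hpole q hq).imp fun _ hr => pole_limit hr
  -- the shift δ
  have hδΛ : 2*(dm:ℂ)*ω₁ + 2*(dn:ℂ)*ω₃ ∈ Lam ω₁ ω₃ := mem_lam dm dn
  set δ : ℂ := 2*(dm:ℂ)*ω₁ + 2*(dn:ℂ)*ω₃ with hδdef
  have claim0 : ∀ q ∈ Lam ω₁ ω₃, Tendsto (fun z => f z * f (z + δ)) (𝓝[≠] q) (𝓝 0) := by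
    rintro q ⟨m, n, rfl⟩
    have hqδ : 2*(m:ℂ)*ω₁ + 2*(n:ℂ)*ω₃ + δ
        = 2*((m+dm : ℤ):ℂ)*ω₁ + 2*((n+dn : ℤ):ℂ)*ω₃ := by
      rw [hδdef]; push_cast; ring
    have hcsign : η * (ε₁^m * ε₃^n) = 1 ∨ η * (ε₁^m * ε₃^n) = -1 := by
      rcases hzpow ε₁ hε₁ m with h1 | h1 <;> rcases hzpow ε₃ hε₃ n with h3 | h3 <;>
        rcases hη with h | h <;> rw [h1, h3, h] <;> norm_num
    have hsig2 : η * (ε₁^(m+dm) * ε₃^(n+dn))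
        = (η * (ε₁^m * ε₃^n)) * (ε₁^dm * ε₃^dn) := by
      rw [zpow_add₀ hε₁0, zpow_add₀ hε₃0]; ring
    rcases hcsign with hc | hc
    · have hA := hevenpt m n hc
      obtain ⟨r, hB0⟩ := hpolept _ (Lam_add (mem_lam m n) hδΛ)
      have hB : Tendsto (fun z => ((z + δ) - (2*(m:ℂ)*ω₁ + 2*(n:ℂ)*ω₃ + δ)) * f (z + δ))
          (𝓝[≠] (2*(m:ℂ)*ω₁ + 2*(n:ℂ)*ω₃)) (𝓝 r) :=
        hB0.comp (tendsto_add_punctured δ _)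
      have hprd := hA.mul hB
      rw [zero_mul] at hprd
      refine hprd.congr' ?_
      filter_upwards [self_mem_nhdsWithin] with z hz
      have hz' : z - (2*(m:ℂ)*ω₁ + 2*(n:ℂ)*ω₃) ≠ 0 := sub_ne_zero.mpr hz
      linear_combination (f z * f (z + δ)) * mul_inv_cancel₀ hz'
    · obtain ⟨r, hA⟩ := hpolept _ (mem_lam m n)
      have hsig' : η * (ε₁^(m+dm) * ε₃^(n+dn)) = 1 := by
        rw [hsig2, hc, hδsign]; ring
      have hB0 := hevenpt (m+dm) (n+dn) hsig'
      rw [← hqδ] at hB0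
      have hB : Tendsto (fun z => f (z + δ) / ((z + δ) - (2*(m:ℂ)*ω₁ + 2*(n:ℂ)*ω₃ + δ)))
          (𝓝[≠] (2*(m:ℂ)*ω₁ + 2*(n:ℂ)*ω₃)) (𝓝 0) :=
        hB0.comp (tendsto_add_punctured δ _)
      have hprd := hB.mul hA
      rw [zero_mul] at hprd
      refine hprd.congr' ?_
      filter_upwards [self_mem_nhdsWithin] with z hz
      have hz' : z - (2*(m:ℂ)*ω₁ + 2*(n:ℂ)*ω₃) ≠ 0 := sub_ne_zero.mpr hz
      linear_combination (f z * f (z + δ)) * mul_inv_cancel₀ hz'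
  -- the entire doubly periodic product
  set Fh : ℂ → ℂ := fun z => if z ∈ Lam ω₁ ω₃ then 0 else f z * f (z + δ) with hFhdef
  have hFh_not : ∀ z ∉ Lam ω₁ ω₃, Fh z = f z * f (z + δ) := fun z hz => if_neg hz
  have hFh_mem : ∀ z ∈ Lam ω₁ ω₃, Fh z = 0 := fun z hz => if_pos hz
  have hFdiffAt_off : ∀ z ∉ Lam ω₁ ω₃, DifferentiableAt ℂ Fh z := by
    intro z hz
    have h1 : DifferentiableAt ℂ f z := hhol.differentiableAt (hopen.mem_nhds hz)
    have h2 : DifferentiableAt ℂ f (z + δ) :=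
      hhol.differentiableAt (hopen.mem_nhds (hshift hδΛ hz))
    refine ((h1.mul (h2.comp z (differentiableAt_id.add_const δ)))).congr_of_eventuallyEq ?_
    filter_upwards [hopen.mem_nhds hz] with w hw
    exact if_neg hw
  have hFdiffAt_on : ∀ q ∈ Lam ω₁ ω₃, DifferentiableAt ℂ Fh q := by
    intro q hq
    obtain ⟨ρ, hρ, hiso⟩ := Lam_isolated hind hq
    have hball := Metric.ball_mem_nhds q hρ
    have hdOn : DifferentiableOn ℂ Fh (Metric.ball q ρ) := by
      rw [← Complex.differentiableOn_compl_singleton_and_continuousAt_iff hball]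
      constructor
      · intro z hz
        exact (hFdiffAt_off z fun h => hz.2 (hiso z hz.1 h)).differentiableWithinAt
      · have h0 : Fh q = 0 := hFh_mem q hq
        rw [ContinuousAt, h0, ← nhdsNE_sup_pure q, tendsto_sup]
        constructor
        · refine (claim0 q hq).congr' ?_
          have h1 : ∀ᶠ z in 𝓝[≠] q, z ∈ Metric.ball q ρ :=
            eventually_nhdsWithin_of_eventually_nhds
              (eventually_of_mem hball fun z hz => hz)
          filter_upwards [h1, self_mem_nhdsWithin] with z hz1 hz2
          exact (hFh_not z fun h => hz2 (hiso z hz1 h)).symm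
        · rw [tendsto_pure_left]
          intro sset hsset
          rw [h0]
          exact mem_of_mem_nhds hsset
    exact hdOn.differentiableAt hball
  have hFdiff : Differentiable ℂ Fh := by
    intro z
    by_cases hz : z ∈ Lam ω₁ ω₃
    exacts [hFdiffAt_on z hz, hFdiffAt_off z hz]
  have hper₁ : ∀ z, Fh (z + 4*ω₁) = Fh z := by
    intro z
    by_cases hz : z ∈ Lam ω₁ ω₃
    · rw [hFh_mem _ hz, hFh_mem _ (Lam_add hz mem_lam4₁)]
    · have hz4 : z + 4*ω₁ ∉ Lam ω₁ ω₃ := hshift mem_lam4₁ hz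
      rw [hFh_not _ hz4, hFh_not _ hz, hmon₁ z hz,
        show z + 4*ω₁ + δ = (z + δ) + 4*ω₁ by ring, hmon₁ (z + δ) (hshift hδΛ hz)]
      linear_combination (f z * f (z + δ)) * hε₁sq
  have hper₃ : ∀ z, Fh (z + 4*ω₃) = Fh z := by
    intro z
    by_cases hz : z ∈ Lam ω₁ ω₃
    · rw [hFh_mem _ hz, hFh_mem _ (Lam_add hz mem_lam4₃)]
    · have hz4 : z + 4*ω₃ ∉ Lam ω₁ ω₃ := hshift mem_lam4₃ hz
      rw [hFh_not _ hz4, hFh_not _ hz, hmon₃ z hz,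
        show z + 4*ω₃ + δ = (z + δ) + 4*ω₃ by ring, hmon₃ (z + δ) (hshift hδΛ hz)]
      linear_combination (f z * f (z + δ)) * hε₃sq
  have hperΓ : ∀ γ ∈ AddSubgroup.closure ({4*ω₁, 4*ω₃} : Set ℂ), ∀ z, Fh (z + γ) = Fh z := by
    intro γ hγ
    induction hγ using AddSubgroup.closure_induction with
    | mem x hx =>
        rcases hx with rfl | rfl
        · exact hper₁
        · exact hper₃
    | zero => intro z; rw [add_zero]
    | add a b _ _ iha ihb => intro z; rw [← add_assoc, ihb, iha]
    | neg a _ iha =>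
        intro z
        have := (iha (z + -a)).symm
        simpa using this
  -- the lattice of periods as a ℤ-span
  have hB4li : LinearIndependent ℝ ![4*ω₁, 4*ω₃] := by
    have := li_smul 4 (by norm_num) hind
    simpa using this
  set B4 : Module.Basis (Fin 2) ℝ ℂ := basisOfLinearIndependentOfCardEqFinrank hB4li
    (by simp [Complex.finrank_real_complex]) with hB4def
  have hcoe4 : ⇑B4 = ![4*ω₁, 4*ω₃] := coe_basisOfLinearIndependentOfCardEqFinrank _ _
  have hrange4 : Set.range ⇑B4 = ({4*ω₁, 4*ω₃} : Set ℂ) := by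
    rw [hcoe4]
    simp [Matrix.range_cons, Matrix.range_empty, Set.pair_comm]
  have hperspan : ∀ γ ∈ Submodule.span ℤ (Set.range ⇑B4), ∀ z, Fh (z + γ) = Fh z := by
    intro γ hγ
    apply hperΓ
    rw [← hrange4, ← Submodule.span_int_eq_addSubgroupClosure]
    exact hγ
  have hfract : ∀ z : ℂ, Fh z = Fh (ZSpan.fract B4 z) := by
    intro z
    have hmem : ((ZSpan.floor B4 z : ℂ)) ∈ Submodule.span ℤ (Set.range ⇑B4) :=
      SetLike.coe_mem _
    have h1 := hperspan _ hmem (ZSpan.fract B4 z)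
    rw [← h1]
    congr 1
    rw [ZSpan.fract_apply]
    ring
  have hbdd : Bornology.IsBounded (Set.range Fh) := by
    have hsub : Set.range Fh ⊆ Fh '' (Metric.closedBall 0 (∑ i, ‖B4 i‖)) := by
      rintro y ⟨z, rfl⟩
      exact ⟨ZSpan.fract B4 z,
        by simpa [Metric.mem_closedBall, dist_zero_right] using ZSpan.norm_fract_le B4 z,
        (hfract z).symm⟩
    exact (((isCompact_closedBall (0:ℂ) _).image hFdiff.continuous).isBounded).subset hsub
  have hprod : ∀ z ∉ Lam ω₁ ω₃, f z * f (z + δ) = 0 := by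
    intro z hz
    rw [← hFh_not z hz]
    have h1 := hFdiff.apply_eq_apply_of_bounded hbdd z 0
    rw [h1, hFh_mem 0 mem_lam0]
  -- identity theorem
  intro z₀ hz₀
  by_contra hne
  have hanal : AnalyticOnNhd ℂ f (Lam ω₁ ω₃)ᶜ := hhol.analyticOnNhd hopen
  have hcont : ContinuousAt f z₀ := (hhol.differentiableAt (hopen.mem_nhds hz₀)).continuousAt
  have hev : ∀ᶠ z in 𝓝 z₀, f (z + δ) = 0 := by
    filter_upwards [hopen.mem_nhds hz₀, hcont.eventually_ne hne] with z hz hfz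
    rcases mul_eq_zero.mp (hprod z hz) with h | h
    · exact absurd h hfz
    · exact h
  have hev' : f =ᶠ[𝓝 (z₀ + δ)] 0 := by
    rw [Filter.EventuallyEq, show z₀ + δ = δ + z₀ by ring, ← map_add_left_nhds δ z₀,
      eventually_map]
    filter_upwards [hev] with z h
    rw [add_comm δ z]
    simpa using h
  have heq := hanal.eqOn_zero_of_preconnected_of_eventuallyEq_zero Lam_compl_preconnected
    (show z₀ + δ ∈ (Lam ω₁ ω₃)ᶜ from hshift hδΛ hz₀) hev'
  exact hne (heq hz₀)

/-- For a non-trivial spin structure `(ε₁, ε₃) ≠ (1, 1)`, any function holomorphic away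
from the half-period set `H`, with monodromy `ε₁`, `ε₃` in the directions `4ω₁`, `4ω₃`,
and at most simple poles with vanishing constant Laurent terms at the points of `H`,
vanishes identically. -/
theorem four_ends_nontrivial_spin_no_solution
    (ω₁ ω₃ : ℂ) (hind : LinearIndependent ℝ ![ω₁, ω₃])
    (ε₁ ε₃ : ℂ) (hε₁ : ε₁ = 1 ∨ ε₁ = -1) (hε₃ : ε₃ = 1 ∨ ε₃ = -1)
    (hnontriv : ¬(ε₁ = 1 ∧ ε₃ = 1))
    (s : ℂ → ℂ)
    (hhol : DifferentiableOn ℂ s (Hset ω₁ ω₃)ᶜ)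
    (hmon₁ : ∀ z ∉ Hset ω₁ ω₃, s (z + 4 * ω₁) = ε₁ * s z)
    (hmon₃ : ∀ z ∉ Hset ω₁ ω₃, s (z + 4 * ω₃) = ε₃ * s z)
    (hpole : ∀ q ∈ Hset ω₁ ω₃, ∃ r : ℂ,
      Tendsto (fun z => s z - r / (z - q)) (𝓝[≠] q) (𝓝 0)) :
    ∀ z ∉ Hset ω₁ ω₃, s z = 0 := by
  rw [Hset_eq] at hhol hmon₁ hmon₃ hpole
  have hgoal : ∀ z ∉ Lam ω₁ ω₃, s z = 0 := by
    obtain ⟨dm, dn, hδsign⟩ : ∃ dm dn : ℤ, ε₁ ^ dm * ε₃ ^ dn = -1 := by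
      rcases hε₁ with h1 | h1
      · rcases hε₃ with h3 | h3
        · exact absurd ⟨h1, h3⟩ hnontriv
        · exact ⟨0, 1, by rw [h1, h3]; norm_num⟩
      · exact ⟨1, 0, by rw [h1]; norm_num⟩
    have hε₁sq : ε₁ * ε₁ = 1 := by rcases hε₁ with h | h <;> rw [h] <;> norm_num
    have hε₃sq : ε₃ * ε₃ = 1 := by rcases hε₃ with h | h <;> rw [h] <;> norm_num
    -- differentiability of z ↦ s (-z)
    have hneg : DifferentiableOn ℂ (fun z : ℂ => s (-z)) (Lam ω₁ ω₃)ᶜ := by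
      have : DifferentiableOn ℂ (s ∘ fun z : ℂ => -z) (Lam ω₁ ω₃)ᶜ :=
        hhol.comp differentiable_neg.differentiableOn
          (fun z hz h => hz (Lam_neg_iff.mp h))
      exact this
    -- backwards monodromy
    have hsneg₁ : ∀ w ∉ Lam ω₁ ω₃, s (w - 4*ω₁) = ε₁ * s w := by
      intro w hw
      have hw4 : w - 4*ω₁ ∉ Lam ω₁ ω₃ := by
        intro h
        exact hw (by simpa [sub_add_cancel] using Lam_add h mem_lam4₁)
      have h1 := hmon₁ (w - 4*ω₁) hw4
      rw [show w - 4*ω₁ + 4*ω₁ = w by ring] at h1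
      rw [h1]
      linear_combination (-(s (w - 4*ω₁))) * hε₁sq
    have hsneg₃ : ∀ w ∉ Lam ω₁ ω₃, s (w - 4*ω₃) = ε₃ * s w := by
      intro w hw
      have hw4 : w - 4*ω₃ ∉ Lam ω₁ ω₃ := by
        intro h
        exact hw (by simpa [sub_add_cancel] using Lam_add h mem_lam4₃)
      have h1 := hmon₃ (w - 4*ω₃) hw4
      rw [show w - 4*ω₃ + 4*ω₃ = w by ring] at h1
      rw [h1]
      linear_combination (-(s (w - 4*ω₃))) * hε₃sq
    have hnegmem : ∀ {z : ℂ}, z ∉ Lam ω₁ ω₃ → -z ∉ Lam ω₁ ω₃ :=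
      fun hz h => hz (Lam_neg_iff.mp h)
    -- even and odd parts
    set u : ℂ → ℂ := fun z => (s z + s (-z)) / 2 with hudef
    set v : ℂ → ℂ := fun z => (s z - s (-z)) / 2 with hvdef
    have huhol : DifferentiableOn ℂ u (Lam ω₁ ω₃)ᶜ := (hhol.add hneg).div_const 2
    have hvhol : DifferentiableOn ℂ v (Lam ω₁ ω₃)ᶜ := (hhol.sub hneg).div_const 2
    have hsumon₁ : ∀ z ∉ Lam ω₁ ω₃, s (-(z + 4*ω₁)) = ε₁ * s (-z) := by
      intro z hz
      rw [show -(z + 4*ω₁) = (-z) - 4*ω₁ by ring]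
      exact hsneg₁ (-z) (hnegmem hz)
    have hsumon₃ : ∀ z ∉ Lam ω₁ ω₃, s (-(z + 4*ω₃)) = ε₃ * s (-z) := by
      intro z hz
      rw [show -(z + 4*ω₃) = (-z) - 4*ω₃ by ring]
      exact hsneg₃ (-z) (hnegmem hz)
    have humon₁ : ∀ z ∉ Lam ω₁ ω₃, u (z + 4 * ω₁) = ε₁ * u z := by
      intro z hz
      simp only [hudef]
      rw [hmon₁ z hz, hsumon₁ z hz]
      ring
    have humon₃ : ∀ z ∉ Lam ω₁ ω₃, u (z + 4 * ω₃) = ε₃ * u z := by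
      intro z hz
      simp only [hudef]
      rw [hmon₃ z hz, hsumon₃ z hz]
      ring
    have hvmon₁ : ∀ z ∉ Lam ω₁ ω₃, v (z + 4 * ω₁) = ε₁ * v z := by
      intro z hz
      simp only [hvdef]
      rw [hmon₁ z hz, hsumon₁ z hz]
      ring
    have hvmon₃ : ∀ z ∉ Lam ω₁ ω₃, v (z + 4 * ω₃) = ε₃ * v z := by
      intro z hz
      simp only [hvdef]
      rw [hmon₃ z hz, hsumon₃ z hz]
      ring
    have hupar : ∀ z : ℂ, u (-z) = 1 * u z := by
      intro z
      simp only [hudef, neg_neg]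
      ring
    have hvpar : ∀ z : ℂ, v (-z) = (-1) * v z := by
      intro z
      simp only [hvdef, neg_neg]
      ring
    -- pole conditions for u and v
    have hpole2 : ∀ q ∈ Lam ω₁ ω₃, ∃ r r' : ℂ,
        Tendsto (fun z => s z - r / (z - q)) (𝓝[≠] q) (𝓝 0) ∧
        Tendsto (fun z => s (-z) + r' / (z - q)) (𝓝[≠] q) (𝓝 0) := by
      intro q hq
      obtain ⟨r, hr⟩ := hpole q hq
      obtain ⟨r', hr'⟩ := hpole (-q) (Lam_neg hq)
      refine ⟨r, r', hr, ?_⟩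
      have h2 : Tendsto (fun z => s (-z) - r' / ((-z) - (-q))) (𝓝[≠] q) (𝓝 0) :=
        hr'.comp (tendsto_neg_punctured q)
      refine h2.congr' ?_
      filter_upwards [self_mem_nhdsWithin] with z hz
      have hz' : z - q ≠ 0 := sub_ne_zero.mpr hz
      rw [show (-z) - (-q) = -(z - q) by ring, div_neg]
      ring
    have hupole : ∀ q ∈ Lam ω₁ ω₃, ∃ r : ℂ,
        Tendsto (fun z => u z - r / (z - q)) (𝓝[≠] q) (𝓝 0) := by
      intro q hq
      obtain ⟨r, r', hr, hr'⟩ := hpole2 q hq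
      refine ⟨(r - r') / 2, ?_⟩
      have h3 := (hr.add hr').div_const 2
      rw [add_zero, zero_div] at h3
      refine h3.congr' ?_
      filter_upwards [self_mem_nhdsWithin] with z hz
      have hz' : z - q ≠ 0 := sub_ne_zero.mpr hz
      simp only [hudef]
      field_simp
      ring
    have hvpole : ∀ q ∈ Lam ω₁ ω₃, ∃ r : ℂ,
        Tendsto (fun z => v z - r / (z - q)) (𝓝[≠] q) (𝓝 0) := by
      intro q hq
      obtain ⟨r, r', hr, hr'⟩ := hpole2 q hq
      refine ⟨(r + r') / 2, ?_⟩
      have h3 := (hr.sub hr').div_const 2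
      rw [sub_zero, zero_div] at h3
      refine h3.congr' ?_
      filter_upwards [self_mem_nhdsWithin] with z hz
      have hz' : z - q ≠ 0 := sub_ne_zero.mpr hz
      simp only [hvdef]
      field_simp
      ring
    intro z hz
    have hu0 := keyLemma ω₁ ω₃ hind ε₁ ε₃ hε₁ hε₃ dm dn hδsign 1 (Or.inl rfl) u
      huhol hupar humon₁ humon₃ hupole z hz
    have hv0 := keyLemma ω₁ ω₃ hind ε₁ ε₃ hε₁ hε₃ dm dn hδsign (-1) (Or.inr rfl) v
      hvhol hvpar hvmon₁ hvmon₃ hvpole z hz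
    have : s z = u z + v z := by
      simp only [hudef, hvdef]
      ring
    rw [this, hu0, hv0, add_zero]
  intro z hz
  rw [Hset_eq] at hz
  exact hgoal z hz
end

section
/- Let ω₁, ω₃ ∈ ℂ be ℝ-linearly independent, let Γ̃ = {4mω₁ + 4nω₃ : m, n ∈ ℤ}, and let H = (0 + Γ̃) ∪ (2ω₁ + Γ̃) ∪ (2ω₁ + 2ω₃ + Γ̃) ∪ (2ω₃ + Γ̃) be the set of half-period points. The set of holomorphic functions s on ℂ∖H such that s(z + γ) = s(z) for all γ ∈ Γ̃ and all z in the domain, and such that at every point q ∈ H the function s has at most a simple pole with vanishing constant Laurent term at q (i.e., there exists r ∈ ℂ with s(z) − r/(z − q) → 0 as z → q), is a complex vector space of dimension 3. -/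
open Complex Filter Set Topology

/-- `s` is holomorphic away from `H`, `Γ̃`-periodic, and has at most a simple pole with
vanishing constant Laurent term at every point of `H`. -/
def CondEleven (ω₁ ω₃ : ℂ) (s : ℂ → ℂ) : Prop :=
  DifferentiableOn ℂ s (Hset ω₁ ω₃)ᶜ ∧
  (∀ z ∉ Hset ω₁ ω₃, ∀ γ ∈ lat4 ω₁ ω₃, s (z + γ) = s z) ∧
  ∀ q ∈ Hset ω₁ ω₃, ∃ r : ℂ,
    Tendsto (fun z => s z - r / (z - q)) (𝓝[≠] q) (𝓝 0)

namespace FourEndsAux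

noncomputable section

variable (ω₁ ω₃ : ℂ)

def Lam (p : ℤ × ℤ) : ℂ := 4 * (p.1 : ℂ) * ω₁ + 4 * (p.2 : ℂ) * ω₃

lemma Lam_zero : Lam ω₁ ω₃ 0 = 0 := by simp [Lam]

lemma Lam_add (p q : ℤ × ℤ) : Lam ω₁ ω₃ (p + q) = Lam ω₁ ω₃ p + Lam ω₁ ω₃ q := by
  simp only [Lam, Prod.fst_add, Prod.snd_add]
  push_cast; ring

lemma Lam_neg (p : ℤ × ℤ) : Lam ω₁ ω₃ (-p) = -Lam ω₁ ω₃ p := by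
  simp only [Lam, Prod.fst_neg, Prod.snd_neg]
  push_cast; ring

lemma mem_lat4_iff {z : ℂ} : z ∈ lat4 ω₁ ω₃ ↔ ∃ p : ℤ × ℤ, z = Lam ω₁ ω₃ p := by
  constructor
  · rintro ⟨m, n, h⟩; exact ⟨(m, n), h⟩
  · rintro ⟨⟨m, n⟩, h⟩; exact ⟨m, n, h⟩

lemma Lam_mem (p : ℤ × ℤ) : Lam ω₁ ω₃ p ∈ lat4 ω₁ ω₃ := (mem_lat4_iff ω₁ ω₃).2 ⟨p, rfl⟩

lemma lat4_zero : (0 : ℂ) ∈ lat4 ω₁ ω₃ := ⟨0, 0, by push_cast; ring⟩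

lemma lat4_add {a b : ℂ} (ha : a ∈ lat4 ω₁ ω₃) (hb : b ∈ lat4 ω₁ ω₃) :
    a + b ∈ lat4 ω₁ ω₃ := by
  rw [mem_lat4_iff] at ha hb ⊢
  obtain ⟨p, rfl⟩ := ha; obtain ⟨q, rfl⟩ := hb
  exact ⟨p + q, (Lam_add ω₁ ω₃ p q).symm⟩

lemma lat4_neg {a : ℂ} (ha : a ∈ lat4 ω₁ ω₃) : -a ∈ lat4 ω₁ ω₃ := by
  rw [mem_lat4_iff] at ha ⊢
  obtain ⟨p, rfl⟩ := ha
  exact ⟨-p, (Lam_neg ω₁ ω₃ p).symm⟩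

lemma lat4_sub {a b : ℂ} (ha : a ∈ lat4 ω₁ ω₃) (hb : b ∈ lat4 ω₁ ω₃) :
    a - b ∈ lat4 ω₁ ω₃ := by
  rw [sub_eq_add_neg]; exact lat4_add ω₁ ω₃ ha (lat4_neg ω₁ ω₃ hb)

/-- Linear independence gives: real combinations vanish only trivially. -/
lemma indR (hind : LinearIndependent ℝ ![ω₁, ω₃]) :
    ∀ a b : ℝ, (a : ℂ) * ω₁ + (b : ℂ) * ω₃ = 0 → a = 0 ∧ b = 0 := by
  intro a b h
  refine (LinearIndependent.pair_iff.1 hind) a b ?_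
  rw [Complex.real_smul, Complex.real_smul]
  exact h

/-- Linear independence gives: integer combinations vanish only trivially. -/
lemma indZ (hind : LinearIndependent ℝ ![ω₁, ω₃]) :
    ∀ a b : ℤ, (a : ℂ) * ω₁ + (b : ℂ) * ω₃ = 0 → a = 0 ∧ b = 0 := by
  intro a b h
  have h2 := indR ω₁ ω₃ hind (a : ℝ) (b : ℝ) (by push_cast; exact h)
  constructor
  · exact_mod_cast h2.1
  · exact_mod_cast h2.2

lemma comb_mem_lat4_iff (hind : LinearIndependent ℝ ![ω₁, ω₃]) (a b : ℤ) :
    ((a : ℂ) * ω₁ + (b : ℂ) * ω₃ ∈ lat4 ω₁ ω₃) ↔ (4 ∣ a ∧ 4 ∣ b) := by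
  constructor
  · rintro ⟨m, n, h⟩
    have : ((a - 4 * m : ℤ) : ℂ) * ω₁ + ((b - 4 * n : ℤ) : ℂ) * ω₃ = 0 := by
      push_cast
      linear_combination h
    obtain ⟨h1, h2⟩ := indZ ω₁ ω₃ hind _ _ this
    constructor
    · exact ⟨m, by omega⟩
    · exact ⟨n, by omega⟩
  · rintro ⟨⟨m, rfl⟩, ⟨n, rfl⟩⟩
    exact ⟨m, n, by push_cast; ring⟩

/-- The basic geometric bound coming from linear independence. -/
lemma exists_lb (hind : LinearIndependent ℝ ![ω₁, ω₃]) :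
    ∃ c : ℝ, 0 < c ∧ ∀ a b : ℤ, c * max |(a : ℝ)| |(b : ℝ)| ≤ ‖(a : ℂ) * ω₁ + (b : ℂ) * ω₃‖ := by
  classical
  let T : (ℝ × ℝ) →ₗ[ℝ] ℂ :=
    { toFun := fun v => (v.1 : ℂ) * ω₁ + (v.2 : ℂ) * ω₃
      map_add' := by
        intro x y
        simp only [Prod.fst_add, Prod.snd_add]
        push_cast; ring
      map_smul' := by
        intro r v
        simp only [Prod.smul_fst, Prod.smul_snd, smul_eq_mul, RingHom.id_apply,
          Complex.real_smul]
        push_cast; ring }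
  have hker : LinearMap.ker T = ⊥ := by
    rw [LinearMap.ker_eq_bot']
    intro v hv
    have h2 := indR ω₁ ω₃ hind v.1 v.2 hv
    exact Prod.ext h2.1 h2.2
  obtain ⟨K, hK, hKa⟩ := T.exists_antilipschitzWith hker
  refine ⟨(K : ℝ)⁻¹, by positivity, ?_⟩
  intro a b
  have h1 : ‖((a : ℝ), (b : ℝ))‖ ≤ (K : ℝ) * ‖T ((a : ℝ), (b : ℝ))‖ := by
    simpa [dist_eq_norm] using hKa.le_mul_dist ((a : ℝ), (b : ℝ)) 0
  have h2 : ‖((a : ℝ), (b : ℝ))‖ = max |(a : ℝ)| |(b : ℝ)| := by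
    simp [Prod.norm_def, Real.norm_eq_abs]
  have hT : T ((a : ℝ), (b : ℝ)) = (a : ℂ) * ω₁ + (b : ℂ) * ω₃ := rfl
  have hKpos : (0:ℝ) < (K:ℝ) := by exact_mod_cast hK
  rw [inv_mul_le_iff₀ hKpos]
  rw [hT, h2] at h1
  linarith [h1]

/-- The auxiliary summable one-dimensional family. -/
lemma summable_f1 : Summable (fun m : ℤ => ((Real.sqrt ((|m| : ℝ) + 1))⁻¹) ^ 3) := by
  have key : ∀ x : ℝ, 0 ≤ x → ((Real.sqrt (x + 1))⁻¹) ^ 3 = ((x+1) ^ ((3:ℝ)/2))⁻¹ := by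
    intro x hx
    rw [inv_pow, Real.sqrt_eq_rpow, ← Real.rpow_natCast ((x+1) ^ ((1:ℝ)/2)) 3,
      ← Real.rpow_mul (by positivity)]
    norm_num
  have hnat : Summable (fun n : ℕ => ((Real.sqrt ((n : ℝ) + 1))⁻¹) ^ 3) := by
    have h0 : Summable (fun n : ℕ => ((n : ℝ) ^ ((3:ℝ)/2))⁻¹) :=
      Real.summable_nat_rpow_inv.2 (by norm_num)
    have h1 : Summable ((fun n : ℕ => ((n : ℝ) ^ ((3:ℝ)/2))⁻¹) ∘ (fun n : ℕ => n + 1)) :=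
      h0.comp_injective (add_left_injective 1)
    refine h1.congr fun n => ?_
    simp only [Function.comp_apply]
    rw [key (n : ℝ) (by positivity)]
    push_cast
    ring_nf
  refine Summable.of_nat_of_neg ?_ ?_
  · refine hnat.congr fun n => ?_
    norm_num
  · refine hnat.congr fun n => ?_
    norm_num

lemma prod_ne_zero_iff {p : ℤ × ℤ} : p ≠ 0 ↔ (p.1 ≠ 0 ∨ p.2 ≠ 0) := by
  constructor
  · intro h
    by_contra hc
    push_neg at hc
    exact h (Prod.ext hc.1 hc.2)
  · rintro h rfl
    simp at h

lemma one_le_max {p : ℤ × ℤ} (hp : p ≠ 0) : 1 ≤ max |(p.1 : ℝ)| |(p.2 : ℝ)| := by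
  rcases prod_ne_zero_iff.1 hp with h | h
  · have : (1 : ℤ) ≤ |p.1| := Int.one_le_abs (by exact h)
    have h2 : (1 : ℝ) ≤ |(p.1 : ℝ)| := by exact_mod_cast (by push_cast; exact_mod_cast this : (1:ℝ) ≤ (|p.1| : ℝ))
    exact le_trans h2 (le_max_left _ _)
  · have : (1 : ℤ) ≤ |p.2| := Int.one_le_abs (by exact h)
    have h2 : (1 : ℝ) ≤ |(p.2 : ℝ)| := by exact_mod_cast (by push_cast; exact_mod_cast this : (1:ℝ) ≤ (|p.2| : ℝ))
    exact le_trans h2 (le_max_right _ _)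

set_option maxHeartbeats 1000000 in
/-- Summability of `‖Λ p‖⁻³`. -/
lemma summable_inv_cube {c : ℝ} (hc : 0 < c)
    (hlb : ∀ p : ℤ × ℤ, p ≠ 0 → c * max |(p.1 : ℝ)| |(p.2 : ℝ)| ≤ ‖Lam ω₁ ω₃ p‖) :
    Summable (fun p : ℤ × ℤ => (‖Lam ω₁ ω₃ p‖⁻¹) ^ 3) := by
  have hs2 : Summable (fun p : ℤ × ℤ =>
      ((Real.sqrt ((|p.1| : ℝ) + 1))⁻¹) ^ 3 * ((Real.sqrt ((|p.2| : ℝ) + 1))⁻¹) ^ 3) :=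
    summable_f1.mul_of_nonneg summable_f1 (fun m => by positivity) (fun m => by positivity)
  have hsum := (hs2.mul_left ((c⁻¹) ^ 3 * 8))
  refine Summable.of_nonneg_of_le (fun p => by positivity) (fun p => ?_) hsum
  by_cases hp : p = 0
  · subst hp
    rw [Lam_zero]
    norm_num
    positivity
  · set a := (|p.1| : ℝ) with ha
    set b := (|p.2| : ℝ) with hb
    have ha0 : 0 ≤ a := abs_nonneg _
    have hb0 : 0 ≤ b := abs_nonneg _
    set M := max a b with hM
    have hM1 : 1 ≤ M := one_le_max hp
    have hL := hlb p hp
    have hcM : 0 < c * M := by positivity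
    have h1 : ‖Lam ω₁ ω₃ p‖⁻¹ ≤ (c * M)⁻¹ := by
      apply inv_anti₀ hcM hL
    have h2 : (‖Lam ω₁ ω₃ p‖⁻¹) ^ 3 ≤ ((c * M)⁻¹) ^ 3 :=
      pow_le_pow_left₀ (by positivity) h1 3
    -- now bound (c*M)⁻³
    set s := Real.sqrt ((a + 1) * (b + 1)) with hs
    have hs0 : 0 < s := Real.sqrt_pos.2 (by positivity)
    have hsM : s ≤ 2 * M := by
      have h3 : (a + 1) * (b + 1) ≤ (M + 1) ^ 2 := by
        have haM : a ≤ M := le_max_left _ _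
        have hbM : b ≤ M := le_max_right _ _
        have h := mul_le_mul (add_le_add_right haM 1) (add_le_add_right hbM 1)
          (by linarith) (by linarith)
        calc (a + 1) * (b + 1) ≤ (M + 1) * (M + 1) := by linarith [h]
        _ = (M + 1) ^ 2 := by ring
      have h4 : s ≤ M + 1 := by
        rw [hs]
        calc Real.sqrt ((a+1)*(b+1)) ≤ Real.sqrt ((M+1)^2) := Real.sqrt_le_sqrt h3
        _ = M + 1 := Real.sqrt_sq (by linarith)
      linarith
    have hMinv : M⁻¹ ≤ 2 * s⁻¹ := by
      have h5 : (2 * M)⁻¹ ≤ s⁻¹ := inv_anti₀ hs0 hsM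
      calc M⁻¹ = 2 * (2 * M)⁻¹ := by
            rw [mul_inv]
            ring
      _ ≤ 2 * s⁻¹ := by linarith
    have hcube : (M⁻¹) ^ 3 ≤ 8 * (s⁻¹) ^ 3 := by
      have := pow_le_pow_left₀ (by positivity) hMinv 3
      calc (M⁻¹)^3 ≤ (2 * s⁻¹)^3 := this
      _ = 8 * (s⁻¹)^3 := by ring
    have hsplit : (s⁻¹) ^ 3 =
        ((Real.sqrt (a + 1))⁻¹) ^ 3 * ((Real.sqrt (b + 1))⁻¹) ^ 3 := by
      rw [hs, Real.sqrt_mul (by linarith)]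
      rw [mul_inv, mul_pow]
    calc (‖Lam ω₁ ω₃ p‖⁻¹) ^ 3 ≤ ((c * M)⁻¹) ^ 3 := h2
    _ = (c⁻¹)^3 * (M⁻¹)^3 := by rw [mul_inv, mul_pow]
    _ ≤ (c⁻¹)^3 * (8 * (s⁻¹)^3) := by
        apply mul_le_mul_of_nonneg_left hcube (by positivity)
    _ = (c⁻¹)^3 * 8 * (((Real.sqrt (a+1))⁻¹)^3 * ((Real.sqrt (b+1))⁻¹)^3) := by
        rw [hsplit]; ring

def uu (p : ℤ × ℤ) (z : ℂ) : ℂ :=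
  (z - Lam ω₁ ω₃ p)⁻¹ + (Lam ω₁ ω₃ p)⁻¹ + z * ((Lam ω₁ ω₃ p)⁻¹) ^ 2

lemma uu_bound {R : ℝ} {z : ℂ} {p : ℤ × ℤ} (hz : ‖z‖ ≤ R) (h0 : Lam ω₁ ω₃ p ≠ 0)
    (hp : 2 * R ≤ ‖Lam ω₁ ω₃ p‖) :
    ‖uu ω₁ ω₃ p z‖ ≤ 2 * R ^ 2 * (‖Lam ω₁ ω₃ p‖⁻¹) ^ 3 := by
  set x := Lam ω₁ ω₃ p with hx
  have hxpos : 0 < ‖x‖ := norm_pos_iff.2 h0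
  have hRnn : 0 ≤ R := le_trans (norm_nonneg z) hz
  have hzx : z ≠ x := by
    intro h
    rw [← h] at hp
    have : R ≤ 0 := by linarith [le_trans hp hz]
    have : ‖z‖ ≤ 0 := le_trans hz this
    rw [h] at this
    exact absurd (le_antisymm this (norm_nonneg x)) (ne_of_gt hxpos)
  have hzx' : z - x ≠ 0 := sub_ne_zero.2 hzx
  have hsub : ‖x‖ / 2 ≤ ‖z - x‖ := by
    have h1 : ‖x‖ - ‖z‖ ≤ ‖x - z‖ := norm_sub_norm_le x z
    rw [norm_sub_rev] at h1
    linarith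
  have heq : uu ω₁ ω₃ p z = z ^ 2 * (x⁻¹) ^ 2 * (z - x)⁻¹ := by
    rw [uu, ← hx]
    field_simp
    ring
  rw [heq]
  rw [norm_mul, norm_mul, norm_pow, norm_pow, norm_inv, norm_inv]
  have h2 : ‖z - x‖⁻¹ ≤ 2 * ‖x‖⁻¹ := by
    have h3 : 0 < ‖x‖ / 2 := by positivity
    have := inv_anti₀ h3 hsub
    rw [inv_div, div_eq_mul_inv] at this
    linarith
  have h4 : ‖z‖ ^ 2 ≤ R ^ 2 := pow_le_pow_left₀ (norm_nonneg z) hz 2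
  calc ‖z‖ ^ 2 * (‖x‖⁻¹) ^ 2 * ‖z - x‖⁻¹ ≤ R ^ 2 * (‖x‖⁻¹) ^ 2 * (2 * ‖x‖⁻¹) := by
        apply mul_le_mul (mul_le_mul_of_nonneg_right h4 (by positivity)) h2
          (by positivity) (by positivity)
  _ = 2 * R ^ 2 * (‖x‖⁻¹) ^ 3 := by ring

lemma finite_lam_le {c : ℝ} (hc : 0 < c)
    (hlb : ∀ p : ℤ × ℤ, p ≠ 0 → c * max |(p.1 : ℝ)| |(p.2 : ℝ)| ≤ ‖Lam ω₁ ω₃ p‖)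
    (R : ℝ) : {p : ℤ × ℤ | ‖Lam ω₁ ω₃ p‖ ≤ R}.Finite := by
  set N : ℕ := ⌈R / c⌉₊ with hN
  apply Set.Finite.subset (Set.finite_Icc ((-(N:ℤ), -(N:ℤ)) : ℤ × ℤ) ((N:ℤ), (N:ℤ)))
  intro p hp
  simp only [Set.mem_setOf_eq] at hp
  by_cases h0 : p = 0
  · subst h0
    constructor <;> constructor <;> simp
  · have h1 := le_trans (hlb p h0) hp
    have h2 : max |(p.1 : ℝ)| |(p.2 : ℝ)| ≤ R / c := by
      rw [le_div_iff₀ hc]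
      linarith [h1]
    have h3 : R / c ≤ (N : ℝ) := Nat.le_ceil _
    have h4 : |(p.1 : ℝ)| ≤ (N : ℝ) := le_trans (le_trans (le_max_left _ _) h2) h3
    have h5 : |(p.2 : ℝ)| ≤ (N : ℝ) := le_trans (le_trans (le_max_right _ _) h2) h3
    have h6 : |p.1| ≤ (N : ℤ) := by exact_mod_cast (by push_cast; exact h4 : (|p.1|:ℝ) ≤ (N:ℝ))
    have h7 : |p.2| ≤ (N : ℤ) := by exact_mod_cast (by push_cast; exact h5 : (|p.2|:ℝ) ≤ (N:ℝ))
    rw [abs_le] at h6 h7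
    exact ⟨⟨h6.1, h7.1⟩, ⟨h6.2, h7.2⟩⟩

lemma summable_uu {c : ℝ} (hc : 0 < c)
    (hlb : ∀ p : ℤ × ℤ, p ≠ 0 → c * max |(p.1 : ℝ)| |(p.2 : ℝ)| ≤ ‖Lam ω₁ ω₃ p‖)
    (z : ℂ) : Summable (fun p : ℤ × ℤ => uu ω₁ ω₃ p z) := by
  set S := {p : ℤ × ℤ | ‖Lam ω₁ ω₃ p‖ ≤ 2 * ‖z‖ + 1} with hS
  have hfin : S.Finite := finite_lam_le ω₁ ω₃ hc hlb _
  rw [← hfin.summable_compl_iff]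
  have hcube := (summable_inv_cube ω₁ ω₃ hc hlb).subtype Sᶜ
  refine Summable.of_norm_bounded
    (g := fun q : ↥(Sᶜ) => 2 * ‖z‖ ^ 2 * (‖Lam ω₁ ω₃ (q : ℤ × ℤ)‖⁻¹) ^ 3)
    (hcube.mul_left _) ?_
  rintro ⟨p, hp⟩
  simp only [Set.mem_compl_iff, hS, Set.mem_setOf_eq, not_le] at hp
  have h0 : Lam ω₁ ω₃ p ≠ 0 := by
    intro h
    rw [h, norm_zero] at hp
    nlinarith [norm_nonneg z]
  exact uu_bound ω₁ ω₃ le_rfl h0 (by linarith)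

def zeta (z : ℂ) : ℂ := ∑' p : ℤ × ℤ, uu ω₁ ω₃ p z

lemma uu_zero_left (z : ℂ) : uu ω₁ ω₃ 0 z = z⁻¹ := by
  simp [uu, Lam_zero]

lemma uu_at_zero (p : ℤ × ℤ) : uu ω₁ ω₃ p 0 = 0 := by
  simp only [uu, zero_sub, inv_neg, zero_mul, add_zero]
  ring

lemma uu_neg_neg (p : ℤ × ℤ) (z : ℂ) : uu ω₁ ω₃ (-p) (-z) = - uu ω₁ ω₃ p z := by
  simp only [uu, Lam_neg]
  rw [show -z - -Lam ω₁ ω₃ p = -(z - Lam ω₁ ω₃ p) by ring, inv_neg, inv_neg]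
  ring

lemma zeta_neg (z : ℂ) : zeta ω₁ ω₃ (-z) = - zeta ω₁ ω₃ z := by
  unfold zeta
  rw [← tsum_neg]
  rw [← (Equiv.neg (ℤ × ℤ)).tsum_eq (fun p => uu ω₁ ω₃ p (-z))]
  exact tsum_congr fun p => by
    simpa using uu_neg_neg ω₁ ω₃ p z

lemma uu_diffAt {p : ℤ × ℤ} {z : ℂ} (h : z ≠ Lam ω₁ ω₃ p) :
    DifferentiableAt ℂ (uu ω₁ ω₃ p) z := by
  unfold uu
  apply DifferentiableAt.add
  apply DifferentiableAt.add
  · exact ((differentiableAt_id.sub_const _).inv (sub_ne_zero.2 h))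
  · exact differentiableAt_const _
  · exact differentiableAt_id.mul_const _

lemma norm_lam_pos {c : ℝ} (hc : 0 < c)
    (hlb : ∀ p : ℤ × ℤ, p ≠ 0 → c * max |(p.1 : ℝ)| |(p.2 : ℝ)| ≤ ‖Lam ω₁ ω₃ p‖)
    {p : ℤ × ℤ} (hp : p ≠ 0) : c ≤ ‖Lam ω₁ ω₃ p‖ := by
  have h1 := hlb p hp
  have h2 := one_le_max hp
  nlinarith

/-- Quasi-periodicity of `zeta`. -/
lemma zeta_shift {c : ℝ} (hc : 0 < c)
    (hlb : ∀ p : ℤ × ℤ, p ≠ 0 → c * max |(p.1 : ℝ)| |(p.2 : ℝ)| ≤ ‖Lam ω₁ ω₃ p‖)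
    (p₀ : ℤ × ℤ) :
    ∃ C : ℂ, ∀ z : ℂ, zeta ω₁ ω₃ (z + Lam ω₁ ω₃ p₀) = zeta ω₁ ω₃ z + C := by
  set x₀ := Lam ω₁ ω₃ p₀ with hx₀
  set A : ℤ × ℤ → ℂ := fun p =>
    (Lam ω₁ ω₃ (p + p₀))⁻¹ - (Lam ω₁ ω₃ p)⁻¹ + x₀ * ((Lam ω₁ ω₃ (p + p₀))⁻¹) ^ 2 with hA
  set B : ℤ × ℤ → ℂ := fun p =>
    ((Lam ω₁ ω₃ (p + p₀))⁻¹) ^ 2 - ((Lam ω₁ ω₃ p)⁻¹) ^ 2 with hB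
  have hterm : ∀ (z : ℂ) (p : ℤ × ℤ),
      uu ω₁ ω₃ (p + p₀) (z + x₀) = uu ω₁ ω₃ p z + (A p + z * B p) := by
    intro z p
    simp only [uu, hA, hB, Lam_add, ← hx₀]
    have e1 : z + x₀ - (Lam ω₁ ω₃ p + x₀) = z - Lam ω₁ ω₃ p := by ring
    rw [e1]
    ring
  -- summability of A and B
  set T := {p : ℤ × ℤ | ‖Lam ω₁ ω₃ p‖ ≤ 2 * ‖x₀‖ + 1} with hT
  have hfin : T.Finite := finite_lam_le ω₁ ω₃ hc hlb _
  have hcube := summable_inv_cube ω₁ ω₃ hc hlb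
  have hbig : ∀ p : ℤ × ℤ, p ∈ Tᶜ →
      Lam ω₁ ω₃ p ≠ 0 ∧ Lam ω₁ ω₃ (p + p₀) ≠ 0 ∧
      ‖Lam ω₁ ω₃ p‖ / 2 ≤ ‖Lam ω₁ ω₃ (p + p₀)‖ ∧
      2 * ‖x₀‖ + 1 ≤ ‖Lam ω₁ ω₃ p‖ := by
    intro p hp
    simp only [hT, Set.mem_compl_iff, Set.mem_setOf_eq, not_le] at hp
    have h0 : Lam ω₁ ω₃ p ≠ 0 := by
      intro h
      rw [h, norm_zero] at hp
      nlinarith [norm_nonneg x₀]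
    have h1 : ‖Lam ω₁ ω₃ (p + p₀)‖ = ‖Lam ω₁ ω₃ p + x₀‖ := by rw [Lam_add, hx₀]
    have h2 : ‖Lam ω₁ ω₃ p‖ - ‖x₀‖ ≤ ‖Lam ω₁ ω₃ p + x₀‖ := by
      have h7 : ‖Lam ω₁ ω₃ p‖ ≤ ‖Lam ω₁ ω₃ p + x₀‖ + ‖x₀‖ := by
        calc ‖Lam ω₁ ω₃ p‖ = ‖Lam ω₁ ω₃ p + x₀ - x₀‖ := by rw [add_sub_cancel_right]
        _ ≤ ‖Lam ω₁ ω₃ p + x₀‖ + ‖x₀‖ := norm_sub_le _ _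
      linarith
    have h3 : ‖Lam ω₁ ω₃ p‖ / 2 ≤ ‖Lam ω₁ ω₃ (p + p₀)‖ := by
      rw [h1]; linarith
    have h4 : Lam ω₁ ω₃ (p + p₀) ≠ 0 := by
      intro h
      rw [h, norm_zero] at h3
      nlinarith [norm_nonneg x₀]
    exact ⟨h0, h4, h3, le_of_lt hp⟩
  have hsumA : Summable A := by
    rw [← hfin.summable_compl_iff]
    refine Summable.of_norm_bounded
      (g := fun q : ↥(Tᶜ) => 4 * ‖x₀‖ ^ 2 * (‖Lam ω₁ ω₃ (q : ℤ × ℤ)‖⁻¹) ^ 3)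
      ((hcube.comp_injective Subtype.val_injective).mul_left _) ?_
    rintro ⟨p, hp⟩
    obtain ⟨h0, h4, h3, h5⟩ := hbig p hp
    set x := Lam ω₁ ω₃ p
    set y := Lam ω₁ ω₃ (p + p₀)
    have hy : y - x = x₀ := by
      rw [show y = Lam ω₁ ω₃ (p + p₀) from rfl, Lam_add, ← hx₀]; ring
    have hxpos : 0 < ‖x‖ := norm_pos_iff.2 h0
    have hypos : 0 < ‖y‖ := norm_pos_iff.2 h4
    have hclosed : A p = -(x₀ ^ 2) * x⁻¹ * (y⁻¹) ^ 2 := by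
      rw [hA]
      simp only
      change y⁻¹ - x⁻¹ + x₀ * (y⁻¹) ^ 2 = _
      rw [← hy]
      field_simp
      ring
    simp only [Function.comp_apply]
    show ‖A p‖ ≤ 4 * ‖x₀‖ ^ 2 * (‖Lam ω₁ ω₃ p‖⁻¹) ^ 3
    rw [hclosed]
    rw [norm_mul, norm_mul, norm_neg, norm_pow, norm_pow, norm_inv, norm_inv]
    have hyinv : ‖y‖⁻¹ ≤ 2 * ‖x‖⁻¹ := by
      have := inv_anti₀ (by positivity : (0:ℝ) < ‖x‖ / 2) h3
      rw [inv_div, div_eq_mul_inv] at this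
      linarith
    calc ‖x₀‖ ^ 2 * ‖x‖⁻¹ * (‖y‖⁻¹) ^ 2 ≤ ‖x₀‖ ^ 2 * ‖x‖⁻¹ * (2 * ‖x‖⁻¹) ^ 2 := by
          apply mul_le_mul_of_nonneg_left _ (by positivity)
          exact pow_le_pow_left₀ (by positivity) hyinv 2
    _ = 4 * ‖x₀‖ ^ 2 * (‖x‖⁻¹) ^ 3 := by ring
  have hsumB : Summable B := by
    rw [← hfin.summable_compl_iff]
    refine Summable.of_norm_bounded
      (g := fun q : ↥(Tᶜ) => 12 * ‖x₀‖ * (‖Lam ω₁ ω₃ (q : ℤ × ℤ)‖⁻¹) ^ 3)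
      ((hcube.comp_injective Subtype.val_injective).mul_left _) ?_
    rintro ⟨p, hp⟩
    obtain ⟨h0, h4, h3, h5⟩ := hbig p hp
    set x := Lam ω₁ ω₃ p
    set y := Lam ω₁ ω₃ (p + p₀)
    have hy : y - x = x₀ := by
      rw [show y = Lam ω₁ ω₃ (p + p₀) from rfl, Lam_add, ← hx₀]; ring
    have hxpos : 0 < ‖x‖ := norm_pos_iff.2 h0
    have hypos : 0 < ‖y‖ := norm_pos_iff.2 h4
    have hclosed : B p = -x₀ * (x + y) * ((x⁻¹) ^ 2 * (y⁻¹) ^ 2) := by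
      rw [hB]
      simp only
      change (y⁻¹) ^ 2 - (x⁻¹) ^ 2 = _
      rw [← hy]
      field_simp
      ring
    simp only [Function.comp_apply]
    show ‖B p‖ ≤ 12 * ‖x₀‖ * (‖Lam ω₁ ω₃ p‖⁻¹) ^ 3
    rw [hclosed]
    rw [norm_mul, norm_mul, norm_mul, norm_neg, norm_pow, norm_pow, norm_inv, norm_inv]
    have hx0x : ‖x₀‖ ≤ ‖x‖ := by
      have := norm_nonneg x₀
      linarith [h5]
    have hyx : ‖y‖ ≤ 2 * ‖x‖ := by
      have h6 : ‖y‖ ≤ ‖x‖ + ‖x₀‖ := by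
        calc ‖y‖ = ‖x + (y - x)‖ := by ring_nf
        _ ≤ ‖x‖ + ‖y - x‖ := norm_add_le _ _
        _ = ‖x‖ + ‖x₀‖ := by rw [hy]
      linarith
    have hxy : ‖x + y‖ ≤ 3 * ‖x‖ := by
      calc ‖x + y‖ ≤ ‖x‖ + ‖y‖ := norm_add_le _ _
      _ ≤ 3 * ‖x‖ := by linarith
    have hyinv : ‖y‖⁻¹ ≤ 2 * ‖x‖⁻¹ := by
      have := inv_anti₀ (by positivity : (0:ℝ) < ‖x‖ / 2) h3
      rw [inv_div, div_eq_mul_inv] at this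
      linarith
    calc ‖x₀‖ * ‖x + y‖ * ((‖x‖⁻¹) ^ 2 * (‖y‖⁻¹) ^ 2)
        ≤ ‖x₀‖ * (3 * ‖x‖) * ((‖x‖⁻¹) ^ 2 * (2 * ‖x‖⁻¹) ^ 2) := by
          apply mul_le_mul
          · exact mul_le_mul_of_nonneg_left hxy (norm_nonneg _)
          · apply mul_le_mul_of_nonneg_left _ (by positivity)
            exact pow_le_pow_left₀ (by positivity) hyinv 2
          · positivity
          · positivity
    _ = 12 * ‖x₀‖ * ((‖x‖⁻¹) ^ 3 * ‖x‖⁻¹ * ‖x‖) := by ring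
    _ = 12 * ‖x₀‖ * (‖x‖⁻¹) ^ 3 := by
        rw [mul_assoc ((‖x‖⁻¹) ^ 3), inv_mul_cancel₀ (ne_of_gt hxpos), mul_one]
  -- the key identity
  have key : ∀ z : ℂ, zeta ω₁ ω₃ (z + x₀) =
      zeta ω₁ ω₃ z + ((∑' p, A p) + z * ∑' p, B p) := by
    intro z
    have hre : zeta ω₁ ω₃ (z + x₀) = ∑' p, uu ω₁ ω₃ (p + p₀) (z + x₀) :=
      ((Equiv.addRight p₀).tsum_eq (fun p => uu ω₁ ω₃ p (z + x₀))).symm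
    rw [hre]
    have h1 : (fun p => uu ω₁ ω₃ (p + p₀) (z + x₀)) =
        fun p => uu ω₁ ω₃ p z + (A p + z * B p) := funext fun p => hterm z p
    rw [h1]
    rw [Summable.tsum_add (summable_uu ω₁ ω₃ hc hlb z) (hsumA.add (hsumB.mul_left z))]
    rw [Summable.tsum_add hsumA (hsumB.mul_left z)]
    rw [tsum_mul_left]
    rfl
  set SA := ∑' p, A p with hSA
  set SB := ∑' p, B p with hSB
  have hz0 : ∀ z : ℂ, (2 * z + x₀) * SB = 0 := by
    intro z
    have e1 := key z
    have e2 := key (-z - x₀)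
    rw [show -z - x₀ + x₀ = -z by ring, show -z - x₀ = -(z + x₀) by ring,
      zeta_neg, zeta_neg] at e2
    rw [e1] at e2
    linear_combination e2
  have hSBz : SB = 0 := by
    have h0 := hz0 0
    have h1 := hz0 1
    have h2 : (2 : ℂ) * SB = 0 := by linear_combination h1 - h0
    have : (2 : ℂ) ≠ 0 := two_ne_zero
    exact (mul_eq_zero.1 h2).resolve_left this
  refine ⟨SA, fun z => ?_⟩
  have := key z
  rw [hSBz, mul_zero, add_zero] at this
  exact this

lemma zeta_diffAt {c : ℝ} (hc : 0 < c)
    (hlb : ∀ p : ℤ × ℤ, p ≠ 0 → c * max |(p.1 : ℝ)| |(p.2 : ℝ)| ≤ ‖Lam ω₁ ω₃ p‖)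
    {z₀ : ℂ} (hz₀ : z₀ ∉ lat4 ω₁ ω₃) :
    DifferentiableAt ℂ (zeta ω₁ ω₃) z₀ := by
  set M : ℝ := ‖z₀‖ + 1 with hM
  have hM0 : 0 < M := by positivity
  have hfin : {p : ℤ × ℤ | ‖Lam ω₁ ω₃ p‖ ≤ 2 * M}.Finite := finite_lam_le ω₁ ω₃ hc hlb _
  set Fs := hfin.toFinset with hFs
  set tail : ℂ → ℂ := fun z => ∑' p : {p : ℤ × ℤ // p ∉ Fs}, uu ω₁ ω₃ (p : ℤ × ℤ) z with htail
  have hdecomp : ∀ z : ℂ, zeta ω₁ ω₃ z = (∑ p ∈ Fs, uu ω₁ ω₃ p z) + tail z := by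
    intro z
    exact (Summable.sum_add_tsum_subtype_compl (summable_uu ω₁ ω₃ hc hlb z) Fs).symm
  have hnotin : ∀ p : ℤ × ℤ, p ∉ Fs → 2 * M < ‖Lam ω₁ ω₃ p‖ := by
    intro p hp
    simp only [hFs, Set.Finite.mem_toFinset, Set.mem_setOf_eq, not_le] at hp
    exact hp
  have htaildiff : DifferentiableOn ℂ tail (Metric.ball 0 M) := by
    apply TendstoLocallyUniformlyOn.differentiableOn
      (TendstoUniformlyOn.tendstoLocallyUniformlyOn
        (tendstoUniformlyOn_tsum
          (u := fun q : {p : ℤ × ℤ // p ∉ Fs} => 2 * M ^ 2 * (‖Lam ω₁ ω₃ (q : ℤ × ℤ)‖⁻¹) ^ 3)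
          (((summable_inv_cube ω₁ ω₃ hc hlb).comp_injective Subtype.val_injective).mul_left _)
          ?_))
      ?_ Metric.isOpen_ball
    · rintro ⟨p, hp⟩ z hz
      rw [Metric.mem_ball, dist_zero_right] at hz
      have h1 := hnotin p hp
      have h0 : Lam ω₁ ω₃ p ≠ 0 := by
        intro h
        rw [h, norm_zero] at h1
        nlinarith
      exact uu_bound ω₁ ω₃ (le_of_lt hz) h0 (by linarith)
    · filter_upwards with t
      intro z hz
      rw [Metric.mem_ball, dist_zero_right] at hz
      apply DifferentiableAt.differentiableWithinAt
      apply DifferentiableAt.fun_sum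
      rintro ⟨p, hp⟩ _
      apply uu_diffAt
      intro h
      have h1 := hnotin p hp
      rw [← h] at h1
      linarith
  have hfindiff : DifferentiableAt ℂ (fun z => ∑ p ∈ Fs, uu ω₁ ω₃ p z) z₀ := by
    apply DifferentiableAt.fun_sum
    intro p _
    apply uu_diffAt
    intro h
    exact hz₀ (h ▸ Lam_mem ω₁ ω₃ p)
  have htaildiffAt : DifferentiableAt ℂ tail z₀ :=
    htaildiff.differentiableAt (Metric.isOpen_ball.mem_nhds (by
      rw [Metric.mem_ball, dist_zero_right]; simp only [hM]; linarith))
  have heq : zeta ω₁ ω₃ = fun z => (∑ p ∈ Fs, uu ω₁ ω₃ p z) + tail z := funext hdecomp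
  rw [heq]
  exact hfindiff.add htaildiffAt

lemma zeta_sub_inv_tendsto {c : ℝ} (hc : 0 < c)
    (hlb : ∀ p : ℤ × ℤ, p ≠ 0 → c * max |(p.1 : ℝ)| |(p.2 : ℝ)| ≤ ‖Lam ω₁ ω₃ p‖) :
    Tendsto (fun z => zeta ω₁ ω₃ z - z⁻¹) (𝓝 0) (𝓝 0) := by
  set Fs : Finset (ℤ × ℤ) := {0} with hFs
  set tail : ℂ → ℂ := fun z => ∑' p : {p : ℤ × ℤ // p ∉ Fs}, uu ω₁ ω₃ (p : ℤ × ℤ) z with htail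
  have hdecomp : ∀ z : ℂ, zeta ω₁ ω₃ z - z⁻¹ = tail z := by
    intro z
    have h := (Summable.sum_add_tsum_subtype_compl (summable_uu ω₁ ω₃ hc hlb z) Fs).symm
    rw [show ∑ p ∈ Fs, uu ω₁ ω₃ p z = uu ω₁ ω₃ 0 z from by simp [hFs],
      uu_zero_left] at h
    rw [show zeta ω₁ ω₃ z = ∑' p, uu ω₁ ω₃ p z from rfl, h]
    ring
  set δ : ℝ := c / 4 with hδ
  have hδ0 : 0 < δ := by positivity
  have hbound : ∀ (q : {p : ℤ × ℤ // p ∉ Fs}) (z : ℂ), z ∈ Metric.closedBall (0:ℂ) δ →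
      ‖uu ω₁ ω₃ (q : ℤ × ℤ) z‖ ≤ 2 * δ ^ 2 * (‖Lam ω₁ ω₃ (q : ℤ × ℤ)‖⁻¹) ^ 3 := by
    rintro ⟨p, hp⟩ z hz
    rw [Metric.mem_closedBall, dist_zero_right] at hz
    have hp0 : p ≠ 0 := by simpa [hFs] using hp
    have h1 := norm_lam_pos ω₁ ω₃ hc hlb hp0
    have h0 : Lam ω₁ ω₃ p ≠ 0 := by
      intro h
      rw [h, norm_zero] at h1
      linarith
    exact uu_bound ω₁ ω₃ hz h0 (by simp only [hδ] at *; linarith)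
  have hcont : ContinuousOn tail (Metric.closedBall (0:ℂ) δ) := by
    apply TendstoUniformlyOn.continuousOn
      (tendstoUniformlyOn_tsum
        (((summable_inv_cube ω₁ ω₃ hc hlb).comp_injective Subtype.val_injective).mul_left _)
        hbound)
    refine Filter.Eventually.frequently ?_
    filter_upwards with t
    apply continuousOn_finset_sum
    rintro ⟨p, hp⟩ _
    intro z hz
    rw [Metric.mem_closedBall, dist_zero_right] at hz
    have hp0 : p ≠ 0 := by simpa [hFs] using hp
    have h1 := norm_lam_pos ω₁ ω₃ hc hlb hp0
    refine ((uu_diffAt ω₁ ω₃ ?_).continuousAt).continuousWithinAt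
    intro h
    rw [h] at hz
    simp only [hδ] at hz
    linarith
  have htail0 : tail 0 = 0 := by
    rw [htail]
    simp only [uu_at_zero]
    exact tsum_zero
  have hca : ContinuousAt tail 0 :=
    hcont.continuousAt (Metric.closedBall_mem_nhds 0 hδ0)
  have : Tendsto tail (𝓝 0) (𝓝 0) := by
    have := hca.tendsto
    rwa [htail0] at this
  refine this.congr fun z => (hdecomp z).symm

lemma zeta_shift_mem {c : ℝ} (hc : 0 < c)
    (hlb : ∀ p : ℤ × ℤ, p ≠ 0 → c * max |(p.1 : ℝ)| |(p.2 : ℝ)| ≤ ‖Lam ω₁ ω₃ p‖)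
    {γ : ℂ} (hγ : γ ∈ lat4 ω₁ ω₃) :
    ∃ C : ℂ, ∀ z : ℂ, zeta ω₁ ω₃ (z + γ) = zeta ω₁ ω₃ z + C := by
  obtain ⟨p, rfl⟩ := (mem_lat4_iff ω₁ ω₃).1 hγ
  exact zeta_shift ω₁ ω₃ hc hlb p

def bb (α : ℂ) (z : ℂ) : ℂ := zeta ω₁ ω₃ z - zeta ω₁ ω₃ (z - α) - zeta ω₁ ω₃ α

lemma bb_periodic {c : ℝ} (hc : 0 < c)
    (hlb : ∀ p : ℤ × ℤ, p ≠ 0 → c * max |(p.1 : ℝ)| |(p.2 : ℝ)| ≤ ‖Lam ω₁ ω₃ p‖)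
    {α γ : ℂ} (hγ : γ ∈ lat4 ω₁ ω₃) (z : ℂ) :
    bb ω₁ ω₃ α (z + γ) = bb ω₁ ω₃ α z := by
  obtain ⟨C, hC⟩ := zeta_shift_mem ω₁ ω₃ hc hlb hγ
  unfold bb
  rw [hC z, show z + γ - α = (z - α) + γ by ring, hC (z - α)]
  ring

lemma two_zeta {c : ℝ} (hc : 0 < c)
    (hlb : ∀ p : ℤ × ℤ, p ≠ 0 → c * max |(p.1 : ℝ)| |(p.2 : ℝ)| ≤ ‖Lam ω₁ ω₃ p‖)
    {α : ℂ} (hα2 : α + α ∈ lat4 ω₁ ω₃) :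
    ∃ C : ℂ, (∀ z : ℂ, zeta ω₁ ω₃ (z + (α + α)) = zeta ω₁ ω₃ z + C) ∧
      zeta ω₁ ω₃ α + zeta ω₁ ω₃ α = C := by
  obtain ⟨C, hC⟩ := zeta_shift_mem ω₁ ω₃ hc hlb hα2
  refine ⟨C, hC, ?_⟩
  have h := hC (-α)
  rw [show -α + (α + α) = α by ring, zeta_neg] at h
  linear_combination h

lemma bb_odd {c : ℝ} (hc : 0 < c)
    (hlb : ∀ p : ℤ × ℤ, p ≠ 0 → c * max |(p.1 : ℝ)| |(p.2 : ℝ)| ≤ ‖Lam ω₁ ω₃ p‖)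
    {α : ℂ} (hα2 : α + α ∈ lat4 ω₁ ω₃) (z : ℂ) :
    bb ω₁ ω₃ α (-z) = - bb ω₁ ω₃ α z := by
  obtain ⟨C, hC, h2⟩ := two_zeta ω₁ ω₃ hc hlb hα2
  unfold bb
  rw [zeta_neg, show -z - α = -(z + α) by ring, zeta_neg,
    show z + α = (z - α) + (α + α) by ring, hC (z - α)]
  linear_combination -h2

lemma bb_vanish {c : ℝ} (hc : 0 < c)
    (hlb : ∀ p : ℤ × ℤ, p ≠ 0 → c * max |(p.1 : ℝ)| |(p.2 : ℝ)| ≤ ‖Lam ω₁ ω₃ p‖)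
    {α β : ℂ} (hα2 : α + α ∈ lat4 ω₁ ω₃) (hβ2 : β + β ∈ lat4 ω₁ ω₃) :
    bb ω₁ ω₃ α β = 0 := by
  have h1 : bb ω₁ ω₃ α β = bb ω₁ ω₃ α (-β) := by
    have h := bb_periodic ω₁ ω₃ hc hlb (α := α) hβ2 (-β)
    rwa [show -β + (β + β) = β by ring] at h
  have h2 := bb_odd ω₁ ω₃ hc hlb hα2 β
  rw [h2] at h1
  linear_combination h1 / 2

lemma bb_diffAt {c : ℝ} (hc : 0 < c)
    (hlb : ∀ p : ℤ × ℤ, p ≠ 0 → c * max |(p.1 : ℝ)| |(p.2 : ℝ)| ≤ ‖Lam ω₁ ω₃ p‖)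
    {α z₀ : ℂ} (h1 : z₀ ∉ lat4 ω₁ ω₃) (h2 : z₀ - α ∉ lat4 ω₁ ω₃) :
    DifferentiableAt ℂ (bb ω₁ ω₃ α) z₀ := by
  have d2 : DifferentiableAt ℂ (fun z => zeta ω₁ ω₃ (z - α)) z₀ :=
    (zeta_diffAt ω₁ ω₃ hc hlb h2).comp z₀ (differentiableAt_id.sub_const α)
  exact ((zeta_diffAt ω₁ ω₃ hc hlb h1).sub d2).sub_const _

lemma bb_pole_lat {c : ℝ} (hc : 0 < c)
    (hlb : ∀ p : ℤ × ℤ, p ≠ 0 → c * max |(p.1 : ℝ)| |(p.2 : ℝ)| ≤ ‖Lam ω₁ ω₃ p‖)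
    {α q : ℂ} (hα : α ∉ lat4 ω₁ ω₃) (hq : q ∈ lat4 ω₁ ω₃) :
    Tendsto (fun z => bb ω₁ ω₃ α z - (z - q)⁻¹) (𝓝 q) (𝓝 0) := by
  obtain ⟨Cq, hCq⟩ := zeta_shift_mem ω₁ ω₃ hc hlb hq
  have hqa : q - α ∉ lat4 ω₁ ω₃ := by
    intro h
    have := lat4_sub ω₁ ω₃ hq h
    rw [sub_sub_cancel] at this
    exact hα this
  have key : ∀ z : ℂ, bb ω₁ ω₃ α z - (z - q)⁻¹ =
      (zeta ω₁ ω₃ (z - q) - (z - q)⁻¹) + Cq - zeta ω₁ ω₃ (z - α) - zeta ω₁ ω₃ α := by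
    intro z
    have h1 : zeta ω₁ ω₃ z = zeta ω₁ ω₃ (z - q) + Cq := by
      rw [← hCq (z - q), sub_add_cancel]
    unfold bb
    rw [h1]
    ring
  have hsub : Tendsto (fun z : ℂ => z - q) (𝓝 q) (𝓝 0) := by
    have h := ((continuous_id'.sub (continuous_const (y := q)))).tendsto q
    simpa [Pi.sub_def] using h
  have hlim1 : Tendsto (fun z : ℂ => zeta ω₁ ω₃ (z - q) - (z - q)⁻¹) (𝓝 q) (𝓝 0) :=
    (zeta_sub_inv_tendsto ω₁ ω₃ hc hlb).comp hsub
  have hlim2 : Tendsto (fun z : ℂ => zeta ω₁ ω₃ (z - α)) (𝓝 q) (𝓝 (zeta ω₁ ω₃ (q - α))) := by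
    have hsa : Tendsto (fun z : ℂ => z - α) (𝓝 q) (𝓝 (q - α)) := by
      have h := ((continuous_id'.sub (continuous_const (y := α)))).tendsto q
      simpa [Pi.sub_def] using h
    exact ((zeta_diffAt ω₁ ω₃ hc hlb hqa).continuousAt).tendsto.comp hsa
  have hval : zeta ω₁ ω₃ (q - α) = - zeta ω₁ ω₃ α + Cq := by
    have h := hCq (-α)
    rw [zeta_neg] at h
    rw [show q - α = -α + q by ring]
    exact h
  have htot := ((hlim1.add (tendsto_const_nhds (x := Cq))).sub hlim2).sub
    (tendsto_const_nhds (x := zeta ω₁ ω₃ α))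
  rw [hval] at htot
  have hzero : (0 + Cq - (- zeta ω₁ ω₃ α + Cq)) - zeta ω₁ ω₃ α = 0 := by ring
  rw [hzero] at htot
  exact htot.congr fun z => (key z).symm

lemma bb_pole_coset {c : ℝ} (hc : 0 < c)
    (hlb : ∀ p : ℤ × ℤ, p ≠ 0 → c * max |(p.1 : ℝ)| |(p.2 : ℝ)| ≤ ‖Lam ω₁ ω₃ p‖)
    {α q : ℂ} (hα : α ∉ lat4 ω₁ ω₃) (hq : q - α ∈ lat4 ω₁ ω₃) :
    Tendsto (fun z => bb ω₁ ω₃ α z + (z - q)⁻¹) (𝓝 q) (𝓝 0) := by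
  obtain ⟨C', hC'⟩ := zeta_shift_mem ω₁ ω₃ hc hlb hq
  have hqn : q ∉ lat4 ω₁ ω₃ := by
    intro h
    have := lat4_sub ω₁ ω₃ h hq
    rw [sub_sub_cancel] at this
    exact hα this
  have key : ∀ z : ℂ, bb ω₁ ω₃ α z + (z - q)⁻¹ =
      zeta ω₁ ω₃ z - (zeta ω₁ ω₃ (z - q) - (z - q)⁻¹) - C' - zeta ω₁ ω₃ α := by
    intro z
    have h1 : zeta ω₁ ω₃ (z - α) = zeta ω₁ ω₃ (z - q) + C' := by
      rw [← hC' (z - q), show z - q + (q - α) = z - α by ring]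
    unfold bb
    rw [h1]
    ring
  have hsub : Tendsto (fun z : ℂ => z - q) (𝓝 q) (𝓝 0) := by
    have h := ((continuous_id'.sub (continuous_const (y := q)))).tendsto q
    simpa [Pi.sub_def] using h
  have hlim1 : Tendsto (fun z : ℂ => zeta ω₁ ω₃ (z - q) - (z - q)⁻¹) (𝓝 q) (𝓝 0) :=
    (zeta_sub_inv_tendsto ω₁ ω₃ hc hlb).comp hsub
  have hlim2 : Tendsto (zeta ω₁ ω₃) (𝓝 q) (𝓝 (zeta ω₁ ω₃ q)) :=
    ((zeta_diffAt ω₁ ω₃ hc hlb hqn).continuousAt).tendsto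
  have hval : zeta ω₁ ω₃ q = zeta ω₁ ω₃ α + C' := by
    have h := hC' α
    rw [show α + (q - α) = q by ring] at h
    exact h
  have htot := ((hlim2.sub hlim1).sub (tendsto_const_nhds (x := C'))).sub
    (tendsto_const_nhds (x := zeta ω₁ ω₃ α))
  rw [hval] at htot
  have hzero : (zeta ω₁ ω₃ α + C' - 0 - C') - zeta ω₁ ω₃ α = 0 := by ring
  rw [hzero] at htot
  exact htot.congr fun z => (key z).symm

/- ### Geometry of `Hset` -/

lemma mem_image_add {a q : ℂ} :
    q ∈ (fun γ => a + γ) '' lat4 ω₁ ω₃ ↔ q - a ∈ lat4 ω₁ ω₃ := by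
  constructor
  · rintro ⟨γ, hγ, rfl⟩
    rwa [add_sub_cancel_left]
  · intro h
    exact ⟨q - a, h, by ring⟩

lemma Hset_iff {q : ℂ} : q ∈ Hset ω₁ ω₃ ↔
    q ∈ lat4 ω₁ ω₃ ∨ q - 2 * ω₁ ∈ lat4 ω₁ ω₃ ∨
    q - (2 * ω₁ + 2 * ω₃) ∈ lat4 ω₁ ω₃ ∨ q - 2 * ω₃ ∈ lat4 ω₁ ω₃ := by
  unfold Hset
  simp only [Set.mem_union, mem_image_add]
  tauto

lemma Hset_add {q γ : ℂ} (hq : q ∈ Hset ω₁ ω₃) (hγ : γ ∈ lat4 ω₁ ω₃) :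
    q + γ ∈ Hset ω₁ ω₃ := by
  rw [Hset_iff] at hq ⊢
  rcases hq with h | h | h | h
  · exact Or.inl (lat4_add ω₁ ω₃ h hγ)
  · refine Or.inr (Or.inl ?_)
    have := lat4_add ω₁ ω₃ h hγ
    rwa [show q - 2 * ω₁ + γ = q + γ - 2 * ω₁ by ring] at this
  · refine Or.inr (Or.inr (Or.inl ?_))
    have := lat4_add ω₁ ω₃ h hγ
    rwa [show q - (2 * ω₁ + 2 * ω₃) + γ = q + γ - (2 * ω₁ + 2 * ω₃) by ring] at this
  · refine Or.inr (Or.inr (Or.inr ?_))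
    have := lat4_add ω₁ ω₃ h hγ
    rwa [show q - 2 * ω₃ + γ = q + γ - 2 * ω₃ by ring] at this

lemma Hset_mem_iff_add {q γ : ℂ} (hγ : γ ∈ lat4 ω₁ ω₃) :
    q + γ ∈ Hset ω₁ ω₃ ↔ q ∈ Hset ω₁ ω₃ := by
  constructor
  · intro h
    have := Hset_add ω₁ ω₃ h (lat4_neg ω₁ ω₃ hγ)
    rwa [add_neg_cancel_right] at this
  · exact fun h => Hset_add ω₁ ω₃ h hγ

lemma Hset_form {q : ℂ} (hq : q ∈ Hset ω₁ ω₃) :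
    ∃ a b : ℤ, q = 2 * (a : ℂ) * ω₁ + 2 * (b : ℂ) * ω₃ := by
  rw [Hset_iff] at hq
  rcases hq with ⟨m, n, h⟩ | ⟨m, n, h⟩ | ⟨m, n, h⟩ | ⟨m, n, h⟩
  · exact ⟨2 * m, 2 * n, by push_cast; linear_combination h⟩
  · exact ⟨2 * m + 1, 2 * n, by push_cast; linear_combination h⟩
  · exact ⟨2 * m + 1, 2 * n + 1, by push_cast; linear_combination h⟩
  · exact ⟨2 * m, 2 * n + 1, by push_cast; linear_combination h⟩

lemma Hset_separated (hind : LinearIndependent ℝ ![ω₁, ω₃]) :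
    ∃ δ : ℝ, 0 < δ ∧ ∀ q ∈ Hset ω₁ ω₃, ∀ q' ∈ Hset ω₁ ω₃, q ≠ q' → δ ≤ dist q q' := by
  obtain ⟨c₀, hc₀, hlb₀⟩ := exists_lb ω₁ ω₃ hind
  refine ⟨2 * c₀, by positivity, ?_⟩
  intro q hq q' hq' hne
  obtain ⟨a, b, ha⟩ := Hset_form ω₁ ω₃ hq
  obtain ⟨a', b', hb⟩ := Hset_form ω₁ ω₃ hq'
  have hdiff : q - q' = ((2 * (a - a') : ℤ) : ℂ) * ω₁ + ((2 * (b - b') : ℤ) : ℂ) * ω₃ := by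
    rw [ha, hb]
    push_cast
    ring
  have hne2 : ¬(a - a' = 0 ∧ b - b' = 0) := by
    rintro ⟨h1, h2⟩
    apply hne
    have : q - q' = 0 := by
      rw [hdiff, h1, h2]
      push_cast
      ring
    linear_combination this
  have hmax : (2 : ℝ) ≤ max |((2 * (a - a') : ℤ) : ℝ)| |((2 * (b - b') : ℤ) : ℝ)| := by
    rcases not_and_or.1 hne2 with h | h
    · have h1 : (1 : ℤ) ≤ |a - a'| := Int.one_le_abs h
      have h2 : (2 : ℤ) ≤ |2 * (a - a')| := by
        rw [abs_mul, (by norm_num : |(2:ℤ)| = 2)]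
        linarith
      have h3 : (2 : ℝ) ≤ |((2 * (a - a') : ℤ) : ℝ)| := by
        rw [← Int.cast_abs]
        exact_mod_cast h2
      exact le_trans h3 (le_max_left _ _)
    · have h1 : (1 : ℤ) ≤ |b - b'| := Int.one_le_abs h
      have h2 : (2 : ℤ) ≤ |2 * (b - b')| := by
        rw [abs_mul, (by norm_num : |(2:ℤ)| = 2)]
        linarith
      have h3 : (2 : ℝ) ≤ |((2 * (b - b') : ℤ) : ℝ)| := by
        rw [← Int.cast_abs]
        exact_mod_cast h2
      exact le_trans h3 (le_max_right _ _)
  have hlow := hlb₀ (2 * (a - a')) (2 * (b - b'))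
  rw [dist_eq_norm, hdiff]
  calc (2 : ℝ) * c₀ = c₀ * 2 := by ring
  _ ≤ c₀ * max |((2 * (a - a') : ℤ) : ℝ)| |((2 * (b - b') : ℤ) : ℝ)| := by
      apply mul_le_mul_of_nonneg_left hmax (le_of_lt hc₀)
  _ ≤ ‖((2 * (a - a') : ℤ) : ℂ) * ω₁ + ((2 * (b - b') : ℤ) : ℂ) * ω₃‖ := hlow

lemma isClosed_of_separated {A : Set ℂ} {δ : ℝ} (hδ : 0 < δ)
    (h : ∀ a ∈ A, ∀ b ∈ A, a ≠ b → δ ≤ dist a b) : IsClosed A := by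
  rw [← isOpen_compl_iff, Metric.isOpen_iff]
  intro x hx
  by_cases hball : ∃ a ∈ A, dist a x < δ / 2
  · obtain ⟨a, ha, hax⟩ := hball
    have hxa : x ≠ a := by
      rintro rfl
      exact hx ha
    have hpos : (0:ℝ) < dist x a := dist_pos.2 hxa
    refine ⟨min (dist x a) (δ / 2), lt_min hpos (by positivity), ?_⟩
    intro y hy
    simp only [Metric.mem_ball] at hy
    intro hyA
    by_cases hya : y = a
    · subst hya
      have h5 : dist y x < dist x y := lt_of_lt_of_le hy (min_le_left _ _)
      rw [dist_comm] at h5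
      exact lt_irrefl _ h5
    · have h1 : dist y a ≤ dist y x + dist x a := dist_triangle _ _ _
      have h2 : dist y x < δ / 2 := lt_of_lt_of_le hy (min_le_right _ _)
      have h3 : dist x a < δ / 2 := by rw [dist_comm]; exact hax
      have h4 := h y hyA a ha hya
      linarith
  · push_neg at hball
    refine ⟨δ / 2, by positivity, ?_⟩
    intro y hy
    simp only [Metric.mem_ball] at hy
    intro hyA
    have := hball y hyA
    linarith

lemma eventually_nmem_of_separated {A : Set ℂ} {δ : ℝ} (hδ : 0 < δ)
    (h : ∀ a ∈ A, ∀ b ∈ A, a ≠ b → δ ≤ dist a b) {q : ℂ} (hq : q ∈ A) :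
    ∀ᶠ z in 𝓝[≠] q, z ∉ A := by
  rw [eventually_nhdsWithin_iff]
  filter_upwards [Metric.ball_mem_nhds q hδ] with z hz hne
  intro hzA
  simp only [Set.mem_compl_iff, Set.mem_singleton_iff] at hne
  have := h z hzA q hq hne
  rw [Metric.mem_ball] at hz
  linarith

lemma lat4_subset_Hset {q : ℂ} (hq : q ∈ lat4 ω₁ ω₃) : q ∈ Hset ω₁ ω₃ :=
  (Hset_iff ω₁ ω₃).2 (Or.inl hq)

lemma Hset_double {q : ℂ} (hq : q ∈ Hset ω₁ ω₃) : q + q ∈ lat4 ω₁ ω₃ := by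
  obtain ⟨a, b, rfl⟩ := Hset_form ω₁ ω₃ hq
  exact ⟨a, b, by push_cast; ring⟩

lemma not_mem_lat4_of_ndvd (hind : LinearIndependent ℝ ![ω₁, ω₃]) {a b : ℤ}
    (h : ¬(4 ∣ a ∧ 4 ∣ b)) : (a : ℂ) * ω₁ + (b : ℂ) * ω₃ ∉ lat4 ω₁ ω₃ :=
  fun hm => h ((comb_mem_lat4_iff ω₁ ω₃ hind a b).1 hm)

lemma resid_zero {q r : ℂ} (h : Tendsto (fun z => r / (z - q)) (𝓝[≠] q) (𝓝 0)) :
    r = 0 := by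
  haveI : (𝓝[≠] q).NeBot := Module.punctured_nhds_neBot ℝ ℂ q
  have h2 : Tendsto (fun z : ℂ => z - q) (𝓝[≠] q) (𝓝 0) := by
    have h0 : Tendsto (fun z : ℂ => z - q) (𝓝 q) (𝓝 0) := by
      have h := ((continuous_id'.sub (continuous_const (y := q)))).tendsto q
      simpa [Pi.sub_def] using h
    exact h0.mono_left nhdsWithin_le_nhds
  have h3 := h.mul h2
  rw [mul_zero] at h3
  have h4 : (fun z : ℂ => r / (z - q) * (z - q)) =ᶠ[𝓝[≠] q] (fun _ => r) := by
    filter_upwards [self_mem_nhdsWithin] with z hz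
    have hne : z - q ≠ 0 := sub_ne_zero.2 (by simpa using hz)
    field_simp
  have h5 : Tendsto (fun _ : ℂ => r) (𝓝[≠] q) (𝓝 0) := h3.congr' h4
  exact (tendsto_nhds_unique h5 tendsto_const_nhds).symm

/-- A continuous function which is periodic w.r.t. the lattice is bounded. -/
lemma periodic_bounded (hind : LinearIndependent ℝ ![ω₁, ω₃]) (f : ℂ → ℂ)
    (hf : Continuous f) (hper : ∀ γ ∈ lat4 ω₁ ω₃, ∀ z : ℂ, f (z + γ) = f z) :
    ∃ C : ℝ, ∀ z : ℂ, ‖f z‖ ≤ C := by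
  have hfr : Fintype.card (Fin 2) = Module.finrank ℝ ℂ := by
    simp [Complex.finrank_real_complex]
  let B : Module.Basis (Fin 2) ℝ ℂ := basisOfLinearIndependentOfCardEqFinrank hind hfr
  have hB0 : B 0 = ω₁ := by
    rw [show B 0 = ![ω₁, ω₃] 0 from congrFun (coe_basisOfLinearIndependentOfCardEqFinrank hind hfr) 0]
    simp
  have hB1 : B 1 = ω₃ := by
    rw [show B 1 = ![ω₁, ω₃] 1 from congrFun (coe_basisOfLinearIndependentOfCardEqFinrank hind hfr) 1]
    simp
  set φ : ℝ × ℝ → ℂ := fun v => (v.1 : ℂ) * ω₁ + (v.2 : ℂ) * ω₃ with hφ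
  have hφc : Continuous φ := by
    apply Continuous.add
    · exact (Complex.continuous_ofReal.comp continuous_fst).mul continuous_const
    · exact (Complex.continuous_ofReal.comp continuous_snd).mul continuous_const
  set K : Set ℂ := φ '' (Set.Icc (0:ℝ) 4 ×ˢ Set.Icc (0:ℝ) 4) with hK
  have hKc : IsCompact K := (isCompact_Icc.prod isCompact_Icc).image hφc
  obtain ⟨C, hC⟩ := hKc.exists_bound_of_continuousOn hf.continuousOn
  refine ⟨C, fun z => ?_⟩
  set a : ℝ := B.repr z 0 with ha
  set b : ℝ := B.repr z 1 with hb
  have hz : z = (a : ℂ) * ω₁ + (b : ℂ) * ω₃ := by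
    have h := B.sum_repr z
    rw [Fin.sum_univ_two, hB0, hB1, Complex.real_smul, Complex.real_smul] at h
    exact h.symm
  set m : ℤ := ⌊a / 4⌋ with hm
  set n : ℤ := ⌊b / 4⌋ with hn
  have ham1 : (m : ℝ) ≤ a / 4 := Int.floor_le _
  have ham2 : a / 4 < m + 1 := Int.lt_floor_add_one _
  have hbn1 : (n : ℝ) ≤ b / 4 := Int.floor_le _
  have hbn2 : b / 4 < n + 1 := Int.lt_floor_add_one _
  have hmem : ((a - 4 * (m:ℝ), b - 4 * (n:ℝ)) : ℝ × ℝ) ∈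
      Set.Icc (0:ℝ) 4 ×ˢ Set.Icc (0:ℝ) 4 := by
    constructor
    · constructor <;> simp only [] <;> linarith
    · constructor <;> simp only [] <;> linarith
  have hw : z - Lam ω₁ ω₃ (m, n) = φ (a - 4 * (m:ℝ), b - 4 * (n:ℝ)) := by
    rw [hz, hφ]
    simp only [Lam]
    push_cast
    ring
  have hper2 : f z = f (z - Lam ω₁ ω₃ (m, n)) := by
    have h := hper _ (Lam_mem ω₁ ω₃ (m, n)) (z - Lam ω₁ ω₃ (m, n))
    rw [sub_add_cancel] at h
    exact h
  rw [hper2, hw]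
  exact hC _ (Set.mem_image_of_mem _ hmem)

/-- `bb α` satisfies condition (11). -/
lemma bb_cond11 {c : ℝ} (hc : 0 < c)
    (hlb : ∀ p : ℤ × ℤ, p ≠ 0 → c * max |(p.1 : ℝ)| |(p.2 : ℝ)| ≤ ‖Lam ω₁ ω₃ p‖)
    {α : ℂ} (hα : α ∉ lat4 ω₁ ω₃) (hα2 : α + α ∈ lat4 ω₁ ω₃)
    (hcoset : ∀ z : ℂ, z - α ∈ lat4 ω₁ ω₃ → z ∈ Hset ω₁ ω₃) :
    CondEleven ω₁ ω₃ (bb ω₁ ω₃ α) := by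
  refine ⟨?_, ?_, ?_⟩
  · intro z hz
    refine (bb_diffAt ω₁ ω₃ hc hlb ?_ ?_).differentiableWithinAt
    · exact fun h => hz (lat4_subset_Hset ω₁ ω₃ h)
    · exact fun h => hz (hcoset z h)
  · intro z _ γ hγ
    exact bb_periodic ω₁ ω₃ hc hlb hγ z
  · intro q hq
    by_cases h1 : q ∈ lat4 ω₁ ω₃
    · refine ⟨1, ?_⟩
      have h := (bb_pole_lat ω₁ ω₃ hc hlb hα h1).mono_left (nhdsWithin_le_nhds (s := {q}ᶜ))
      refine h.congr fun z => ?_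
      rw [one_div]
    · by_cases h2 : q - α ∈ lat4 ω₁ ω₃
      · refine ⟨-1, ?_⟩
        have h := (bb_pole_coset ω₁ ω₃ hc hlb hα h2).mono_left (nhdsWithin_le_nhds (s := {q}ᶜ))
        refine h.congr fun z => ?_
        rw [neg_div, one_div]
        ring
      · refine ⟨0, ?_⟩
        have hval : bb ω₁ ω₃ α q = 0 :=
          bb_vanish ω₁ ω₃ hc hlb hα2 (Hset_double ω₁ ω₃ hq)
        have hca : ContinuousAt (bb ω₁ ω₃ α) q :=
          (bb_diffAt ω₁ ω₃ hc hlb h1 h2).continuousAt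
        have h := hca.tendsto
        rw [hval] at h
        refine (h.mono_left (nhdsWithin_le_nhds (s := {q}ᶜ))).congr fun z => ?_
        rw [zero_div]
        ring

lemma tendsto_sub_self (q : ℂ) : Tendsto (fun z : ℂ => z - q) (𝓝[≠] q) (𝓝 0) := by
  have h0 : Tendsto (fun z : ℂ => z - q) (𝓝 q) (𝓝 0) := by
    have h1 := ((continuous_id'.sub (continuous_const (y := q)))).tendsto q
    simpa [Pi.sub_def] using h1
  exact h0.mono_left nhdsWithin_le_nhds

lemma tendsto_punctured_add (q a : ℂ) :
    Tendsto (fun z : ℂ => z + a) (𝓝[≠] q) (𝓝[≠] (q + a)) := by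
  rw [tendsto_nhdsWithin_iff]
  constructor
  · have h0 : Tendsto (fun z : ℂ => z + a) (𝓝 q) (𝓝 (q + a)) := by
      have h1 := ((continuous_id'.add (continuous_const (y := a)))).tendsto q
      simpa [Pi.add_def] using h1
    exact h0.mono_left nhdsWithin_le_nhds
  · filter_upwards [self_mem_nhdsWithin] with z hz
    simp only [Set.mem_compl_iff, Set.mem_singleton_iff] at hz ⊢
    intro hcq
    exact hz (by linear_combination hcq)

lemma tendsto_transport (hind : LinearIndependent ℝ ![ω₁, ω₃]) (f : ℂ → ℂ)
    (hper : ∀ z ∉ Hset ω₁ ω₃, ∀ γ ∈ lat4 ω₁ ω₃, f (z + γ) = f z)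
    {q₀ γ r : ℂ} (hq₀ : q₀ ∈ Hset ω₁ ω₃) (hγ : γ ∈ lat4 ω₁ ω₃)
    (h : Tendsto (fun z => f z - r / (z - q₀)) (𝓝[≠] q₀) (𝓝 0)) :
    Tendsto (fun z => f z - r / (z - (q₀ + γ))) (𝓝[≠] (q₀ + γ)) (𝓝 0) := by
  obtain ⟨δ, hδ, hsep⟩ := Hset_separated ω₁ ω₃ hind
  have hq₁ : q₀ + γ ∈ Hset ω₁ ω₃ := Hset_add ω₁ ω₃ hq₀ hγ
  have hT : Tendsto (fun z : ℂ => z - γ) (𝓝[≠] (q₀ + γ)) (𝓝[≠] q₀) := by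
    have h1 := tendsto_punctured_add (q₀ + γ) (-γ)
    simp only [← sub_eq_add_neg] at h1
    rwa [add_sub_cancel_right] at h1
  have hcomp := h.comp hT
  refine hcomp.congr' ?_
  filter_upwards [eventually_nmem_of_separated hδ hsep hq₁] with z hz
  have hz' : z - γ ∉ Hset ω₁ ω₃ := by
    intro hmem
    apply hz
    have h2 := Hset_add ω₁ ω₃ hmem hγ
    rwa [sub_add_cancel] at h2
  have hfp := hper (z - γ) hz' γ hγ
  rw [sub_add_cancel] at hfp
  show f (z - γ) - r / ((z - γ) - q₀) = f z - r / (z - (q₀ + γ))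
  rw [hfp, show z - γ - q₀ = z - (q₀ + γ) by ring]

set_option maxHeartbeats 1000000 in
/-- The key vanishing theorem: a `Γ̃`-periodic function, holomorphic off `H`, vanishing
(in the limit) at the nonzero half-period classes, with constant residue `ρ` and vanishing
constant terms on the lattice itself, is identically zero off `H`. -/
lemma main_vanish {c : ℝ} (hc : 0 < c)
    (hlb : ∀ p : ℤ × ℤ, p ≠ 0 → c * max |(p.1 : ℝ)| |(p.2 : ℝ)| ≤ ‖Lam ω₁ ω₃ p‖)
    (hind : LinearIndependent ℝ ![ω₁, ω₃]) (g : ℂ → ℂ) (ρ : ℂ)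
    (hdiff : ∀ z ∉ Hset ω₁ ω₃, DifferentiableAt ℂ g z)
    (hper : ∀ γ ∈ lat4 ω₁ ω₃, ∀ z ∉ Hset ω₁ ω₃, g (z + γ) = g z)
    (hlat : ∀ q ∈ lat4 ω₁ ω₃, Tendsto (fun z => g z - ρ / (z - q)) (𝓝[≠] q) (𝓝 0))
    (hcos : ∀ q ∈ Hset ω₁ ω₃, q ∉ lat4 ω₁ ω₃ → Tendsto g (𝓝[≠] q) (𝓝 0)) :
    ∀ z ∉ Hset ω₁ ω₃, g z = 0 := by
  classical
  obtain ⟨δ, hδ, hsep⟩ := Hset_separated ω₁ ω₃ hind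
  have hHcl : IsClosed (Hset ω₁ ω₃) := isClosed_of_separated hδ hsep
  have hmem_iff := comb_mem_lat4_iff ω₁ ω₃ hind
  have h2ω₁ : (2:ℂ) * ω₁ ∉ lat4 ω₁ ω₃ := by
    intro hm
    have hm' : ((2:ℤ):ℂ) * ω₁ + ((0:ℤ):ℂ) * ω₃ ∈ lat4 ω₁ ω₃ := by
      convert hm using 1
      push_cast; ring
    have := (hmem_iff 2 0).1 hm'
    omega
  have h4ω₁ : (4:ℂ) * ω₁ ∈ lat4 ω₁ ω₃ := ⟨1, 0, by push_cast; ring⟩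
  -- the two bad cosets
  set SS : Set ℂ := {z : ℂ | z ∈ lat4 ω₁ ω₃ ∨ z - 2 * ω₁ ∈ lat4 ω₁ ω₃} with hSS
  have hSSsub : SS ⊆ Hset ω₁ ω₃ := by
    intro z hz
    rcases hz with h | h
    · exact lat4_subset_Hset ω₁ ω₃ h
    · exact (Hset_iff ω₁ ω₃).2 (Or.inr (Or.inl h))
  have hSScl : IsClosed SS :=
    isClosed_of_separated hδ (fun a ha b hb => hsep a (hSSsub ha) b (hSSsub hb))
  -- the regularized function
  set gt : ℂ → ℂ := fun z => if z ∈ Hset ω₁ ω₃ then 0 else g z with hgtdef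
  have hgt_out : ∀ z ∉ Hset ω₁ ω₃, gt z = g z := fun z hz => if_neg hz
  have hgt_in : ∀ z ∈ Hset ω₁ ω₃, gt z = 0 := fun z hz => if_pos hz
  have hgtper : ∀ γ ∈ lat4 ω₁ ω₃, ∀ z : ℂ, gt (z + γ) = gt z := by
    intro γ hγ z
    by_cases hz : z ∈ Hset ω₁ ω₃
    · rw [hgt_in _ hz, hgt_in _ (Hset_add ω₁ ω₃ hz hγ)]
    · have hz2 : z + γ ∉ Hset ω₁ ω₃ := by
        rw [Hset_mem_iff_add ω₁ ω₃ hγ]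
        exact hz
      rw [hgt_out _ hz2, hgt_out _ hz, hper γ hγ z hz]
  have hgtlat : ∀ q ∈ lat4 ω₁ ω₃, Tendsto (fun z => gt z - ρ / (z - q)) (𝓝[≠] q) (𝓝 0) := by
    intro q hq
    refine (hlat q hq).congr' ?_
    filter_upwards [eventually_nmem_of_separated hδ hsep (lat4_subset_Hset ω₁ ω₃ hq)] with z hz
    rw [hgt_out _ hz]
  have hgtcos : ∀ q ∈ Hset ω₁ ω₃, q ∉ lat4 ω₁ ω₃ → Tendsto gt (𝓝[≠] q) (𝓝 0) := by
    intro q hq hql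
    refine (hcos q hq hql).congr' ?_
    filter_upwards [eventually_nmem_of_separated hδ hsep hq] with z hz
    rw [hgt_out _ hz]
  have hgtdiff : ∀ z ∉ lat4 ω₁ ω₃, DifferentiableAt ℂ gt z := by
    intro z hz
    by_cases hzH : z ∈ Hset ω₁ ω₃
    · have hev := eventually_nmem_of_separated hδ hsep hzH
      rw [eventually_nhdsWithin_iff, Metric.eventually_nhds_iff] at hev
      obtain ⟨ε, hε, hball⟩ := hev
      have hdiffOn : DifferentiableOn ℂ gt (Metric.ball z ε \ {z}) := by
        intro y hy
        have hyH : y ∉ Hset ω₁ ω₃ := hball (Metric.mem_ball.1 hy.1) (by simpa using hy.2)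
        have hy' : DifferentiableAt ℂ gt y := by
          refine (hdiff y hyH).congr_of_eventuallyEq ?_
          filter_upwards [hHcl.isOpen_compl.mem_nhds hyH] with w hw
          exact hgt_out w hw
        exact hy'.differentiableWithinAt
      have hcont : ContinuousAt gt z := by
        have h1 : Tendsto gt (𝓝[≠] z) (𝓝 (gt z)) := by
          rw [hgt_in _ hzH]
          exact hgtcos z hzH hz
        have h2 : Tendsto gt (pure z) (𝓝 (gt z)) := tendsto_pure_nhds gt z
        have h3 := h1.sup h2
        rwa [nhdsNE_sup_pure] at h3
      have hOn := (Complex.differentiableOn_compl_singleton_and_continuousAt_iff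
        (Metric.ball_mem_nhds z hε)).1 ⟨hdiffOn, hcont⟩
      exact hOn.differentiableAt (Metric.ball_mem_nhds z hε)
    · refine (hdiff z hzH).congr_of_eventuallyEq ?_
      filter_upwards [hHcl.isOpen_compl.mem_nhds hzH] with w hw
      exact hgt_out w hw
  have hgtderiv : ∀ γ ∈ lat4 ω₁ ω₃, ∀ x : ℂ, deriv gt (x + γ) = deriv gt x := by
    intro γ hγ x
    have hfun : gt = fun z => gt (z + γ) := funext fun z => (hgtper γ hγ z).symm
    conv_rhs => rw [hfun]
    rw [deriv_comp_add_const]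
  set d₀ : ℂ := deriv gt (2 * ω₁) with hd₀
  set L : ℂ := ρ * d₀ with hL
  have hslope : ∀ q' : ℂ, q' ∈ Hset ω₁ ω₃ → q' ∉ lat4 ω₁ ω₃ →
      Tendsto (fun z => gt z / (z - q')) (𝓝[≠] q') (𝓝 (deriv gt q')) := by
    intro q' hq'H hq'l
    have hD := (hgtdiff q' hq'l).hasDerivAt
    have h1 := hasDerivAt_iff_tendsto_slope.1 hD
    refine h1.congr fun z => ?_
    rw [slope_def_field, hgt_in _ hq'H, sub_zero]
  have hfac1 : ∀ q ∈ lat4 ω₁ ω₃, Tendsto (fun z => (z - q) * gt z) (𝓝[≠] q) (𝓝 ρ) := by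
    intro q hq
    have h1 : Tendsto (fun z : ℂ => (z - q) * (gt z - ρ / (z - q)) + ρ) (𝓝[≠] q)
        (𝓝 (0 * 0 + ρ)) :=
      ((tendsto_sub_self q).mul (hgtlat q hq)).add tendsto_const_nhds
    rw [zero_mul, zero_add] at h1
    refine h1.congr' ?_
    filter_upwards [self_mem_nhdsWithin] with z hz
    have hne : z - q ≠ 0 := sub_ne_zero.2 (by simpa using hz)
    field_simp
    ring
  set P : ℂ → ℂ := fun z => gt z * gt (z + 2 * ω₁) with hP
  have hPlim : ∀ q ∈ SS, Tendsto P (𝓝[≠] q) (𝓝 L) := by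
    intro q hq
    rcases hq with hq | hq
    · -- q in the lattice
      have hq'H : q + 2 * ω₁ ∈ Hset ω₁ ω₃ :=
        (Hset_iff ω₁ ω₃).2 (Or.inr (Or.inl (by rwa [add_sub_cancel_right])))
      have hq'l : q + 2 * ω₁ ∉ lat4 ω₁ ω₃ := by
        intro hm
        apply h2ω₁
        have h3 := lat4_sub ω₁ ω₃ hm hq
        rwa [add_sub_cancel_left] at h3
      have h2 := (hslope _ hq'H hq'l).comp (tendsto_punctured_add q (2 * ω₁))
      have h3 : Tendsto (fun z => gt (z + 2*ω₁) / (z - q)) (𝓝[≠] q)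
          (𝓝 (deriv gt (q + 2*ω₁))) := by
        refine h2.congr fun z => ?_
        simp only [Function.comp_apply]
        rw [show z + 2*ω₁ - (q + 2*ω₁) = z - q by ring]
      have hval : deriv gt (q + 2*ω₁) = d₀ := by
        rw [show q + 2*ω₁ = 2*ω₁ + q by ring, hgtderiv q hq (2*ω₁)]
      rw [hval] at h3
      have hmain := (hfac1 q hq).mul h3
      refine Tendsto.congr' ?_ hmain
      filter_upwards [self_mem_nhdsWithin] with z hz
      have hne : z - q ≠ 0 := sub_ne_zero.2 (by simpa using hz)
      show (z - q) * gt z * (gt (z + 2*ω₁) / (z - q)) = P z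
      field_simp
      ring
    · -- q in the coset of 2ω₁
      have hqH : q ∈ Hset ω₁ ω₃ := hSSsub (Or.inr hq)
      have hql : q ∉ lat4 ω₁ ω₃ := by
        intro hm
        apply h2ω₁
        have h3 := lat4_sub ω₁ ω₃ hm hq
        rwa [sub_sub_cancel] at h3
      have hq'' : q + 2*ω₁ ∈ lat4 ω₁ ω₃ := by
        have h3 := lat4_add ω₁ ω₃ hq h4ω₁
        rwa [show q - 2*ω₁ + 4*ω₁ = q + 2*ω₁ by ring] at h3
      have h2 := (hfac1 _ hq'').comp (tendsto_punctured_add q (2 * ω₁))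
      have h3 : Tendsto (fun z => (z - q) * gt (z + 2*ω₁)) (𝓝[≠] q) (𝓝 ρ) := by
        refine h2.congr fun z => ?_
        simp only [Function.comp_apply]
        rw [show z + 2*ω₁ - (q + 2*ω₁) = z - q by ring]
      have hval : deriv gt q = d₀ := by
        have h4 := hgtderiv (q - 2*ω₁) hq (2*ω₁)
        rwa [show 2*ω₁ + (q - 2*ω₁) = q by ring] at h4
      have hmain := (hslope q hqH hql).mul h3
      rw [hval] at hmain
      rw [show d₀ * ρ = L by rw [hL]; ring] at hmain
      refine Tendsto.congr' ?_ hmain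
      filter_upwards [self_mem_nhdsWithin] with z hz
      have hne : z - q ≠ 0 := sub_ne_zero.2 (by simpa using hz)
      show gt z / (z - q) * ((z - q) * gt (z + 2*ω₁)) = P z
      field_simp
      ring
  set Pt : ℂ → ℂ := fun z => if z ∈ SS then L else P z with hPtdef
  have hPt_out : ∀ z ∉ SS, Pt z = P z := fun z hz => if_neg hz
  have hPt_in : ∀ z ∈ SS, Pt z = L := fun z hz => if_pos hz
  have hPdiff : ∀ z ∉ SS, DifferentiableAt ℂ P z := by
    intro z hz
    simp only [hSS, Set.mem_setOf_eq] at hz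
    push_neg at hz
    obtain ⟨hz1, hz2⟩ := hz
    have hz3 : z + 2*ω₁ ∉ lat4 ω₁ ω₃ := by
      intro hm
      apply hz2
      have h3 := lat4_sub ω₁ ω₃ hm h4ω₁
      rwa [show z + 2*ω₁ - 4*ω₁ = z - 2*ω₁ by ring] at h3
    have hd1 := hgtdiff z hz1
    have hd2 : DifferentiableAt ℂ (fun w => gt (w + 2*ω₁)) z :=
      (hgtdiff (z + 2*ω₁) hz3).comp z (differentiableAt_id.add_const _)
    exact hd1.mul hd2
  have hSSev : ∀ q ∈ SS, ∀ᶠ w in 𝓝[≠] q, w ∉ SS := by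
    intro q hq
    filter_upwards [eventually_nmem_of_separated hδ hsep (hSSsub hq)] with w hw
    exact fun hmem => hw (hSSsub hmem)
  have hPtdiff : Differentiable ℂ Pt := by
    intro z
    by_cases hz : z ∈ SS
    · have hev := hSSev z hz
      rw [eventually_nhdsWithin_iff, Metric.eventually_nhds_iff] at hev
      obtain ⟨ε, hε, hball⟩ := hev
      have hdiffOn : DifferentiableOn ℂ Pt (Metric.ball z ε \ {z}) := by
        intro y hy
        have hyS : y ∉ SS := hball (Metric.mem_ball.1 hy.1) (by simpa using hy.2)
        have hy' : DifferentiableAt ℂ Pt y := by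
          refine (hPdiff y hyS).congr_of_eventuallyEq ?_
          filter_upwards [hSScl.isOpen_compl.mem_nhds hyS] with w hw
          exact hPt_out w hw
        exact hy'.differentiableWithinAt
      have hcont : ContinuousAt Pt z := by
        have h1 : Tendsto Pt (𝓝[≠] z) (𝓝 (Pt z)) := by
          rw [hPt_in _ hz]
          refine Tendsto.congr' ?_ (hPlim z hz)
          filter_upwards [hSSev z hz] with w hw
          exact (hPt_out w hw).symm
        have h2 : Tendsto Pt (pure z) (𝓝 (Pt z)) := tendsto_pure_nhds Pt z
        have h3 := h1.sup h2
        rwa [nhdsNE_sup_pure] at h3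
      have hOn := (Complex.differentiableOn_compl_singleton_and_continuousAt_iff
        (Metric.ball_mem_nhds z hε)).1 ⟨hdiffOn, hcont⟩
      exact hOn.differentiableAt (Metric.ball_mem_nhds z hε)
    · refine (hPdiff z hz).congr_of_eventuallyEq ?_
      filter_upwards [hSScl.isOpen_compl.mem_nhds hz] with w hw
      exact hPt_out w hw
  have hSSadd : ∀ γ ∈ lat4 ω₁ ω₃, ∀ z : ℂ, z + γ ∈ SS ↔ z ∈ SS := by
    intro γ hγ z
    simp only [hSS, Set.mem_setOf_eq]
    constructor
    · rintro (h | h)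
      · left
        have h3 := lat4_sub ω₁ ω₃ h hγ
        rwa [add_sub_cancel_right] at h3
      · right
        have h3 := lat4_sub ω₁ ω₃ h hγ
        rwa [show z + γ - 2*ω₁ - γ = z - 2*ω₁ by ring] at h3
    · rintro (h | h)
      · exact Or.inl (lat4_add ω₁ ω₃ h hγ)
      · right
        have h3 := lat4_add ω₁ ω₃ h hγ
        rwa [show z - 2*ω₁ + γ = z + γ - 2*ω₁ by ring] at h3
  have hPper : ∀ γ ∈ lat4 ω₁ ω₃, ∀ z : ℂ, Pt (z + γ) = Pt z := by
    intro γ hγ z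
    by_cases hz : z ∈ SS
    · rw [hPt_in _ ((hSSadd γ hγ z).2 hz), hPt_in _ hz]
    · have hz2 : z + γ ∉ SS := fun h => hz ((hSSadd γ hγ z).1 h)
      rw [hPt_out _ hz2, hPt_out _ hz]
      show gt (z + γ) * gt (z + γ + 2*ω₁) = gt z * gt (z + 2*ω₁)
      rw [hgtper γ hγ z, show z + γ + 2*ω₁ = (z + 2*ω₁) + γ by ring,
        hgtper γ hγ (z + 2*ω₁)]
  obtain ⟨Cb, hCb⟩ := periodic_bounded ω₁ ω₃ hind Pt hPtdiff.continuous hPper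
  have hconst : ∀ z : ℂ, Pt z = Pt (2 * ω₃) := by
    intro z
    apply hPtdiff.apply_eq_apply_of_bounded
    rw [isBounded_iff_forall_norm_le]
    exact ⟨Cb, by rintro _ ⟨w, rfl⟩; exact hCb w⟩
  have h2ω₃SS : (2:ℂ) * ω₃ ∉ SS := by
    simp only [hSS, Set.mem_setOf_eq]
    push_neg
    constructor
    · intro hm
      have hm' : ((0:ℤ):ℂ) * ω₁ + ((2:ℤ):ℂ) * ω₃ ∈ lat4 ω₁ ω₃ := by
        convert hm using 1
        push_cast; ring
      have := (hmem_iff 0 2).1 hm'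
      omega
    · intro hm
      have hm' : ((-2:ℤ):ℂ) * ω₁ + ((2:ℤ):ℂ) * ω₃ ∈ lat4 ω₁ ω₃ := by
        convert hm using 1
        push_cast; ring
      have := (hmem_iff (-2) 2).1 hm'
      omega
  have hmemA : (2:ℂ) * ω₃ ∈ Hset ω₁ ω₃ := by
    refine (Hset_iff ω₁ ω₃).2 (Or.inr (Or.inr (Or.inr ?_)))
    rw [sub_self]
    exact lat4_zero ω₁ ω₃
  have hmemB : (2:ℂ) * ω₃ + 2 * ω₁ ∈ Hset ω₁ ω₃ := by
    refine (Hset_iff ω₁ ω₃).2 (Or.inr (Or.inr (Or.inl ?_)))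
    rw [show (2:ℂ) * ω₃ + 2 * ω₁ - (2 * ω₁ + 2 * ω₃) = 0 by ring]
    exact lat4_zero ω₁ ω₃
  have hPt2ω₃ : Pt (2 * ω₃) = 0 := by
    rw [hPt_out _ h2ω₃SS]
    show gt (2 * ω₃) * gt (2 * ω₃ + 2 * ω₁) = 0
    rw [hgt_in _ hmemA, zero_mul]
  have hP0 : ∀ z ∉ SS, P z = 0 := by
    intro z hz
    have h3 := hconst z
    rw [hPt2ω₃] at h3
    rw [← hPt_out z hz]
    exact h3
  -- identity theorem
  have hlatc : (lat4 ω₁ ω₃).Countable := by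
    apply Set.Countable.mono _ (Set.countable_range (Lam ω₁ ω₃))
    intro z hz
    obtain ⟨p, hp⟩ := (mem_lat4_iff ω₁ ω₃).1 hz
    exact ⟨p, hp.symm⟩
  have hSScount : SS.Countable := by
    have h1 : SS ⊆ lat4 ω₁ ω₃ ∪ (fun γ => 2 * ω₁ + γ) '' lat4 ω₁ ω₃ := by
      intro z hz
      rcases hz with h | h
      · exact Or.inl h
      · exact Or.inr ((mem_image_add ω₁ ω₃).2 h)
    exact (hlatc.union (hlatc.image _)).mono h1
  have hDopen : IsOpen SSᶜ := hSScl.isOpen_compl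
  have hDpre : IsPreconnected SSᶜ := by
    have h1 : (1 : Cardinal) < Module.rank ℝ ℂ := by
      rw [Complex.rank_real_complex]
      exact Cardinal.one_lt_two
    exact (hSScount.isPathConnected_compl_of_one_lt_rank h1).isConnected.isPreconnected
  have hgtD : AnalyticOnNhd ℂ gt SSᶜ := by
    apply DifferentiableOn.analyticOnNhd _ hDopen
    intro z hz
    have hzl : z ∉ lat4 ω₁ ω₃ := fun h => hz (Or.inl h)
    exact (hgtdiff z hzl).differentiableWithinAt
  have hgtzero : Set.EqOn gt 0 SSᶜ := by
    by_contra hcon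
    rw [Set.EqOn] at hcon
    push_neg at hcon
    obtain ⟨z₁, hz₁D, hz₁⟩ := hcon
    have hz₁ne : gt z₁ ≠ 0 := by simpa using hz₁
    have hz₁l : z₁ ∉ lat4 ω₁ ω₃ := fun h => hz₁D (Or.inl h)
    have hcont := (hgtdiff z₁ hz₁l).continuousAt
    have hne := hcont.eventually_ne hz₁ne
    have hop : SSᶜ ∈ 𝓝 z₁ := hDopen.mem_nhds hz₁D
    have h5 : ∀ᶠ w in 𝓝 z₁, w ∈ SSᶜ := hop
    have hcomb := hne.and h5
    rw [Metric.eventually_nhds_iff] at hcomb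
    obtain ⟨ε, hε, hball⟩ := hcomb
    have hz₂D : z₁ + 2*ω₁ ∈ SSᶜ := by
      intro hmem
      rcases hmem with h | h
      · apply hz₁D
        right
        have h3 := lat4_sub ω₁ ω₃ h h4ω₁
        rwa [show z₁ + 2*ω₁ - 4*ω₁ = z₁ - 2*ω₁ by ring] at h3
      · apply hz₁D
        left
        rwa [add_sub_cancel_right] at h
    have hball2 : ∀ w ∈ Metric.ball (z₁ + 2*ω₁) ε, gt w = 0 := by
      intro w hw
      have hyb : dist (w - 2*ω₁) z₁ < ε := by
        rw [Metric.mem_ball, dist_eq_norm] at hw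
        rw [dist_eq_norm, show w - 2*ω₁ - z₁ = w - (z₁ + 2*ω₁) by ring]
        exact hw
      obtain ⟨hne', hmem'⟩ := hball hyb
      have hPz : gt (w - 2*ω₁) * gt (w - 2*ω₁ + 2*ω₁) = 0 := hP0 _ hmem'
      rw [show w - 2*ω₁ + 2*ω₁ = w by ring] at hPz
      exact (mul_eq_zero.1 hPz).resolve_left hne'
    have hevz : gt =ᶠ[𝓝 (z₁ + 2*ω₁)] (0 : ℂ → ℂ) := by
      filter_upwards [Metric.ball_mem_nhds _ hε] with w hw
      simpa using hball2 w hw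
    have hEq := hgtD.eqOn_zero_of_preconnected_of_eventuallyEq_zero hDpre hz₂D hevz
    exact hz₁ne (by simpa using hEq hz₁D)
  -- conclude
  intro z hz
  have hzD : z ∈ SSᶜ := fun h => hz (hSSsub h)
  have h3 := hgtzero hzD
  rw [hgt_out z hz] at h3
  simpa using h3

end

end FourEndsAux

set_option maxHeartbeats 2000000 in
/-- The space of `Γ̃`-periodic functions with at most simple poles with vanishing
constant Laurent terms at the half-period set `H` has complex dimension 3. -/
theorem four_ends_trivial_spin_space_dim_three
    (ω₁ ω₃ : ℂ) (hind : LinearIndependent ℝ ![ω₁, ω₃]) :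
    ∃ b : Fin 3 → ℂ → ℂ,
      (∀ i, CondEleven ω₁ ω₃ (b i)) ∧
      (∀ c : Fin 3 → ℂ, (∀ z ∉ Hset ω₁ ω₃, ∑ i, c i * b i z = 0) → c = 0) ∧
      (∀ s : ℂ → ℂ, CondEleven ω₁ ω₃ s →
        ∃ c : Fin 3 → ℂ, ∀ z ∉ Hset ω₁ ω₃, s z = ∑ i, c i * b i z) := by
  classical
  obtain ⟨c₀, hc₀, hlb₀⟩ := FourEndsAux.exists_lb ω₁ ω₃ hind
  have hc : (0:ℝ) < 4 * c₀ := by positivity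
  have hlb : ∀ p : ℤ × ℤ, p ≠ 0 →
      (4 * c₀) * max |(p.1 : ℝ)| |(p.2 : ℝ)| ≤ ‖FourEndsAux.Lam ω₁ ω₃ p‖ := by
    intro p _
    have h := hlb₀ (4 * p.1) (4 * p.2)
    have e1 : ((4 * p.1 : ℤ) : ℂ) * ω₁ + ((4 * p.2 : ℤ) : ℂ) * ω₃ =
        FourEndsAux.Lam ω₁ ω₃ p := by
      simp only [FourEndsAux.Lam]
      push_cast
      ring
    rw [e1] at h
    have e2 : max |((4 * p.1 : ℤ) : ℝ)| |((4 * p.2 : ℤ) : ℝ)| =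
        4 * max |(p.1 : ℝ)| |(p.2 : ℝ)| := by
      push_cast
      rw [abs_mul, abs_mul, (by norm_num : |(4:ℝ)| = 4)]
      rcases le_total |(p.1:ℝ)| |(p.2:ℝ)| with hle | hle
      · rw [max_eq_right hle, max_eq_right (by linarith)]
      · rw [max_eq_left hle, max_eq_left (by linarith)]
    rw [e2] at h
    calc (4 * c₀) * max |(p.1:ℝ)| |(p.2:ℝ)| = c₀ * (4 * max |(p.1:ℝ)| |(p.2:ℝ)|) := by ring
    _ ≤ _ := h
  obtain ⟨δH, hδH, hsepH⟩ := FourEndsAux.Hset_separated ω₁ ω₃ hind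
  have hHcl : IsClosed (Hset ω₁ ω₃) := FourEndsAux.isClosed_of_separated hδH hsepH
  have hcomb := FourEndsAux.comb_mem_lat4_iff ω₁ ω₃ hind
  set αf : Fin 3 → ℂ := ![2 * ω₁, 2 * ω₃, 2 * ω₁ + 2 * ω₃] with hαf
  set bbf : Fin 3 → ℂ → ℂ := fun i => FourEndsAux.bb ω₁ ω₃ (αf i) with hbbf
  have hnotmem : ∀ a b : ℤ, ¬(4 ∣ a ∧ 4 ∣ b) → ∀ z : ℂ,
      z = (a : ℂ) * ω₁ + (b : ℂ) * ω₃ → z ∉ lat4 ω₁ ω₃ := by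
    intro a b hnd z hz hm
    rw [hz] at hm
    exact hnd ((hcomb a b).1 hm)
  have hαnot : ∀ i : Fin 3, αf i ∉ lat4 ω₁ ω₃ := by
    intro i
    fin_cases i
    · exact hnotmem 2 0 (by rintro ⟨⟨k, hk⟩, -⟩; omega) (2 * ω₁) (by push_cast; ring)
    · exact hnotmem 0 2 (by rintro ⟨-, ⟨k, hk⟩⟩; omega) (2 * ω₃) (by push_cast; ring)
    · exact hnotmem 2 2 (by rintro ⟨⟨k, hk⟩, -⟩; omega) (2 * ω₁ + 2 * ω₃) (by push_cast; ring)
  have hα2 : ∀ i : Fin 3, αf i + αf i ∈ lat4 ω₁ ω₃ := by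
    intro i
    fin_cases i
    · show 2 * ω₁ + 2 * ω₁ ∈ lat4 ω₁ ω₃
      exact ⟨1, 0, by push_cast; ring⟩
    · show 2 * ω₃ + 2 * ω₃ ∈ lat4 ω₁ ω₃
      exact ⟨0, 1, by push_cast; ring⟩
    · show 2 * ω₁ + 2 * ω₃ + (2 * ω₁ + 2 * ω₃) ∈ lat4 ω₁ ω₃
      exact ⟨1, 1, by push_cast; ring⟩
  have hcoset : ∀ i : Fin 3, ∀ z : ℂ, z - αf i ∈ lat4 ω₁ ω₃ → z ∈ Hset ω₁ ω₃ := by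
    intro i
    fin_cases i
    · intro z h
      exact (FourEndsAux.Hset_iff ω₁ ω₃).2 (Or.inr (Or.inl h))
    · intro z h
      exact (FourEndsAux.Hset_iff ω₁ ω₃).2 (Or.inr (Or.inr (Or.inr h)))
    · intro z h
      exact (FourEndsAux.Hset_iff ω₁ ω₃).2 (Or.inr (Or.inr (Or.inl h)))
  have hmemH : ∀ i : Fin 3, αf i ∈ Hset ω₁ ω₃ := by
    intro i
    apply hcoset i
    rw [sub_self]
    exact FourEndsAux.lat4_zero ω₁ ω₃
  have hdistc : ∀ i j : Fin 3, i ≠ j → αf i - αf j ∉ lat4 ω₁ ω₃ := by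
    intro i j hij
    fin_cases i <;> fin_cases j
    · exact absurd rfl hij
    · exact hnotmem 2 (-2) (by rintro ⟨⟨k, hk⟩, -⟩; omega) (2 * ω₁ - 2 * ω₃)
        (by push_cast; ring)
    · exact hnotmem 0 (-2) (by rintro ⟨-, ⟨k, hk⟩⟩; omega) (2 * ω₁ - (2 * ω₁ + 2 * ω₃))
        (by push_cast; ring)
    · exact hnotmem (-2) 2 (by rintro ⟨⟨k, hk⟩, -⟩; omega) (2 * ω₃ - 2 * ω₁)
        (by push_cast; ring)
    · exact absurd rfl hij
    · exact hnotmem (-2) 0 (by rintro ⟨⟨k, hk⟩, -⟩; omega) (2 * ω₃ - (2 * ω₁ + 2 * ω₃))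
        (by push_cast; ring)
    · exact hnotmem 0 2 (by rintro ⟨-, ⟨k, hk⟩⟩; omega) (2 * ω₁ + 2 * ω₃ - 2 * ω₁)
        (by push_cast; ring)
    · exact hnotmem 2 0 (by rintro ⟨⟨k, hk⟩, -⟩; omega) (2 * ω₁ + 2 * ω₃ - 2 * ω₃)
        (by push_cast; ring)
    · exact absurd rfl hij
  refine ⟨bbf, ?_, ?_, ?_⟩
  · -- Condition (11) for each basis element
    intro i
    exact FourEndsAux.bb_cond11 ω₁ ω₃ hc hlb (hαnot i) (hα2 i) (hcoset i)
  · -- linear independence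
    intro cc hzero
    funext j
    show cc j = (0 : Fin 3 → ℂ) j
    rw [Pi.zero_apply]
    have hqH : αf j ∈ Hset ω₁ ω₃ := hmemH j
    have hpolej : Tendsto (fun z => bbf j z + (z - αf j)⁻¹) (𝓝 (αf j)) (𝓝 0) :=
      FourEndsAux.bb_pole_coset ω₁ ω₃ hc hlb (hαnot j)
        (by rw [sub_self]; exact FourEndsAux.lat4_zero ω₁ ω₃)
    have hzeroi : ∀ i : Fin 3, i ≠ j → Tendsto (bbf i) (𝓝 (αf j)) (𝓝 0) := by
      intro i hij
      have h1 : αf j ∉ lat4 ω₁ ω₃ := hαnot j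
      have h2 : αf j - αf i ∉ lat4 ω₁ ω₃ := hdistc j i (Ne.symm hij)
      have hval : bbf i (αf j) = 0 :=
        FourEndsAux.bb_vanish ω₁ ω₃ hc hlb (hα2 i) (hα2 j)
      have hca' : Tendsto (bbf i) (𝓝 (αf j)) (𝓝 (bbf i (αf j))) :=
        (FourEndsAux.bb_diffAt ω₁ ω₃ hc hlb h1 h2).continuousAt.tendsto
      rwa [hval] at hca'
    have hsum : Tendsto (fun z => cc j * (bbf j z + (z - αf j)⁻¹) +
        ∑ i ∈ Finset.univ.erase j, cc i * bbf i z) (𝓝[≠] (αf j)) (𝓝 0) := by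
      have t1 : Tendsto (fun z => cc j * (bbf j z + (z - αf j)⁻¹)) (𝓝 (αf j))
          (𝓝 (cc j * 0)) := tendsto_const_nhds.mul hpolej
      have t2 : Tendsto (fun z => ∑ i ∈ Finset.univ.erase j, cc i * bbf i z) (𝓝 (αf j))
          (𝓝 (∑ i ∈ Finset.univ.erase j, cc i * 0)) := by
        apply tendsto_finset_sum
        intro i hi
        exact tendsto_const_nhds.mul (hzeroi i (Finset.ne_of_mem_erase hi))
      have t3 := (t1.add t2).mono_left (nhdsWithin_le_nhds (s := {αf j}ᶜ))
      simpa using t3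
    have hev : (fun z => cc j * (bbf j z + (z - αf j)⁻¹) +
        ∑ i ∈ Finset.univ.erase j, cc i * bbf i z) =ᶠ[𝓝[≠] (αf j)]
        (fun z => cc j / (z - αf j)) := by
      filter_upwards [FourEndsAux.eventually_nmem_of_separated hδH hsepH hqH] with z hz
      have h0 := hzero z hz
      have hsplit : (∑ i, cc i * bbf i z) =
          cc j * bbf j z + ∑ i ∈ Finset.univ.erase j, cc i * bbf i z := by
        rw [add_comm, Finset.sum_erase_add _ _ (Finset.mem_univ j)]
      rw [hsplit] at h0
      show _ = cc j / (z - αf j)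
      rw [div_eq_mul_inv]
      linear_combination h0
    have hfin : Tendsto (fun z => cc j / (z - αf j)) (𝓝[≠] (αf j)) (𝓝 0) :=
      Tendsto.congr' hev hsum
    exact FourEndsAux.resid_zero hfin
  · -- spanning
    intro s hs
    obtain ⟨hsd, hsper, hspole⟩ := hs
    choose r hr using fun i : Fin 3 => hspole (αf i) (hmemH i)
    obtain ⟨r0, hr0⟩ := hspole 0
      (FourEndsAux.lat4_subset_Hset ω₁ ω₃ (FourEndsAux.lat4_zero ω₁ ω₃))
    set g : ℂ → ℂ := fun z => s z + ∑ i, r i * bbf i z with hg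
    set ρ : ℂ := r0 + ∑ i, r i with hρ
    have hgdiff : ∀ z ∉ Hset ω₁ ω₃, DifferentiableAt ℂ g z := by
      intro z hz
      have h1 : DifferentiableAt ℂ s z := hsd.differentiableAt (hHcl.isOpen_compl.mem_nhds hz)
      have h2 : DifferentiableAt ℂ (fun z => ∑ i, r i * bbf i z) z := by
        apply DifferentiableAt.fun_sum
        intro i _
        refine (differentiableAt_const _).mul ?_
        refine FourEndsAux.bb_diffAt ω₁ ω₃ hc hlb ?_ ?_
        · exact fun h => hz (FourEndsAux.lat4_subset_Hset ω₁ ω₃ h)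
        · exact fun h => hz (hcoset i z h)
      exact h1.add h2
    have hgper : ∀ γ ∈ lat4 ω₁ ω₃, ∀ z ∉ Hset ω₁ ω₃, g (z + γ) = g z := by
      intro γ hγ z hz
      simp only [hg]
      rw [hsper z hz γ hγ]
      congr 1
      apply Finset.sum_congr rfl
      intro i _
      simp only [hbbf]
      rw [FourEndsAux.bb_periodic ω₁ ω₃ hc hlb hγ z]
    have hglat : ∀ q ∈ lat4 ω₁ ω₃, Tendsto (fun z => g z - ρ / (z - q)) (𝓝[≠] q) (𝓝 0) := by
      intro q hq
      have hs0 : Tendsto (fun z => s z - r0 / (z - q)) (𝓝[≠] q) (𝓝 0) := by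
        have h := FourEndsAux.tendsto_transport ω₁ ω₃ hind s hsper
          (FourEndsAux.lat4_subset_Hset ω₁ ω₃ (FourEndsAux.lat4_zero ω₁ ω₃)) hq hr0
        rwa [show (0:ℂ) + q = q from by ring] at h
      have hbpol : ∀ i : Fin 3, Tendsto (fun z => bbf i z - (z - q)⁻¹) (𝓝[≠] q) (𝓝 0) :=
        fun i => (FourEndsAux.bb_pole_lat ω₁ ω₃ hc hlb (hαnot i) hq).mono_left
          (nhdsWithin_le_nhds (s := {q}ᶜ))
      have hcomb2 : Tendsto (fun z => (s z - r0 / (z - q)) +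
          ∑ i, r i * (bbf i z - (z - q)⁻¹)) (𝓝[≠] q) (𝓝 (0 + ∑ i : Fin 3, r i * 0)) := by
        apply Tendsto.add hs0
        apply tendsto_finset_sum
        intro i _
        exact tendsto_const_nhds.mul (hbpol i)
      simp only [mul_zero, Finset.sum_const_zero, add_zero] at hcomb2
      refine Tendsto.congr' ?_ hcomb2
      filter_upwards [self_mem_nhdsWithin] with z hz
      have hne : z - q ≠ 0 := sub_ne_zero.2 (by simpa using hz)
      simp only [hg, hρ]
      rw [Fin.sum_univ_three, Fin.sum_univ_three, Fin.sum_univ_three]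
      field_simp
      ring
    have hgcos : ∀ q ∈ Hset ω₁ ω₃, q ∉ lat4 ω₁ ω₃ → Tendsto g (𝓝[≠] q) (𝓝 0) := by
      intro q hqH hql
      have hcase : ∃ j : Fin 3, q - αf j ∈ lat4 ω₁ ω₃ := by
        rcases (FourEndsAux.Hset_iff ω₁ ω₃).1 hqH with h | h | h | h
        · exact absurd h hql
        · refine ⟨0, ?_⟩
          simpa [hαf] using h
        · refine ⟨2, ?_⟩
          simpa [hαf] using h
        · refine ⟨1, ?_⟩
          simpa [hαf] using h
      obtain ⟨j, hj⟩ := hcase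
      have hs1 : Tendsto (fun z => s z - r j / (z - q)) (𝓝[≠] q) (𝓝 0) := by
        have h := FourEndsAux.tendsto_transport ω₁ ω₃ hind s hsper (hmemH j) hj (hr j)
        rwa [show αf j + (q - αf j) = q from by ring] at h
      have hbj : Tendsto (fun z => bbf j z + (z - q)⁻¹) (𝓝[≠] q) (𝓝 0) :=
        (FourEndsAux.bb_pole_coset ω₁ ω₃ hc hlb (hαnot j) hj).mono_left
          (nhdsWithin_le_nhds (s := {q}ᶜ))
      have hbi : ∀ i : Fin 3, i ≠ j → Tendsto (bbf i) (𝓝[≠] q) (𝓝 0) := by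
        intro i hij
        have h2 : q - αf i ∉ lat4 ω₁ ω₃ := by
          intro hm
          have h3 := FourEndsAux.lat4_sub ω₁ ω₃ hm hj
          rw [show q - αf i - (q - αf j) = αf j - αf i from by ring] at h3
          exact hdistc j i (Ne.symm hij) h3
        have hval : bbf i q = 0 := FourEndsAux.bb_vanish ω₁ ω₃ hc hlb (hα2 i)
          (FourEndsAux.Hset_double ω₁ ω₃ hqH)
        have hca' : Tendsto (bbf i) (𝓝 q) (𝓝 (bbf i q)) :=
          (FourEndsAux.bb_diffAt ω₁ ω₃ hc hlb hql h2).continuousAt.tendsto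
        rw [hval] at hca'
        exact hca'.mono_left (nhdsWithin_le_nhds (s := {q}ᶜ))
      have hcomb2 : Tendsto (fun z => ((s z - r j / (z - q)) + r j * (bbf j z + (z - q)⁻¹)) +
          ∑ i ∈ Finset.univ.erase j, r i * bbf i z) (𝓝[≠] q)
          (𝓝 ((0 + r j * 0) + ∑ i ∈ Finset.univ.erase j, r i * 0)) := by
        apply Tendsto.add
        · exact Tendsto.add hs1 (tendsto_const_nhds.mul hbj)
        · apply tendsto_finset_sum
          intro i hi
          exact tendsto_const_nhds.mul (hbi i (Finset.ne_of_mem_erase hi))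
      simp only [mul_zero, add_zero, Finset.sum_const_zero, zero_add] at hcomb2
      refine Tendsto.congr' ?_ hcomb2
      filter_upwards [self_mem_nhdsWithin] with z hz
      have hne : z - q ≠ 0 := sub_ne_zero.2 (by simpa using hz)
      have hsplit : (∑ i, r i * bbf i z) =
          r j * bbf j z + ∑ i ∈ Finset.univ.erase j, r i * bbf i z := by
        rw [add_comm, Finset.sum_erase_add _ _ (Finset.mem_univ j)]
      simp only [hg]
      rw [hsplit]
      field_simp
      ring
    have hvan := FourEndsAux.main_vanish ω₁ ω₃ hc hlb hind g ρ hgdiff hgper hglat hgcos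
    refine ⟨fun i => -(r i), ?_⟩
    intro z hz
    have h0 := hvan z hz
    simp only [hg] at h0
    have e : ∑ i, -(r i) * bbf i z = -(∑ i, r i * bbf i z) := by
      rw [← Finset.sum_neg_distrib]
      apply Finset.sum_congr rfl
      intro i _
      ring
    rw [e]
    linear_combination h0
end
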